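/- arXiv:0909.5313 — 9 statements merged into one kernel-verified Lean document; each statement's English description precedes it below -/
import Mathlib

section
/- Let G be a finite group with |G| ≥ 2 and let ε > 0 be a real number. Then for all sufficiently large n the following holds: for every subgroup H of G^n and all natural numbers k and r with |H| ≤ |G|^k, r ≤ n/2, and k + r ≤ n·(1 - H₂(r/n)/log₂|G| - ε), there exists x ∈ G^n such that the Hamming distance Δ(x,h) > r for every h ∈ H. Here H₂(p) = -p·log₂ p - (1-p)·log₂(1-p) denotes the binary entropy function (with H₂(0) = 0). -/
/-- The binary entropy function `H₂(p) = -p·log₂ p - (1-p)·log₂(1-p)`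
(with the convention `H₂(0) = 0`, which holds since `Real.logb 2 0 = 0`). -/
noncomputable def binEntropy2 (p : ℝ) : ℝ :=
  -p * Real.logb 2 p - (1 - p) * Real.logb 2 (1 - p)

lemma pow_eq_two_rpow (x : ℝ) (hx : 0 < x) (m : ℕ) :
    x ^ m = (2:ℝ) ^ ((m:ℝ) * Real.logb 2 x) := by
  rw [mul_comm, Real.rpow_mul (by norm_num), Real.rpow_logb two_pos (by norm_num) hx,
    Real.rpow_natCast]


-- entropy bound
lemma sum_choose_le_entropy (n r : ℕ) (hn : 1 ≤ n) (hr : (r:ℝ) ≤ (n:ℝ)/2) :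
    (∑ i ∈ Finset.range (r+1), (n.choose i : ℝ)) ≤
      (2:ℝ) ^ ((n:ℝ) * binEntropy2 ((r:ℝ)/(n:ℝ))) := by
  have hn0 : (0:ℝ) < n := by exact_mod_cast hn
  rcases Nat.eq_zero_or_pos r with rfl | hr1
  · simp [binEntropy2, Real.logb]
  · set p : ℝ := (r:ℝ)/(n:ℝ) with hp
    have hp0 : 0 < p := by positivity
    have hp2 : p ≤ 1/2 := by rw [hp, div_le_div_iff₀ hn0 (by norm_num)]; linarith
    have hp1 : p ≤ 1 - p := by linarith
    have h1p : 0 < 1 - p := by linarith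
    have hrn : r ≤ n := by
      have : (r:ℝ) ≤ n := by linarith
      exact_mod_cast this
    -- key: sum * p^r * (1-p)^(n-r) ≤ 1
    have key : (∑ i ∈ Finset.range (r+1), (n.choose i : ℝ)) * (p^r * (1-p)^(n-r)) ≤ 1 := by
      rw [Finset.sum_mul]
      have step1 : ∀ i ∈ Finset.range (r+1),
          (n.choose i : ℝ) * (p^r * (1-p)^(n-r)) ≤ (n.choose i : ℝ) * (p^i * (1-p)^(n-i)) := by
        intro i hi
        rw [Finset.mem_range] at hi
        have hir : i ≤ r := Nat.lt_succ_iff.mp hi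
        apply mul_le_mul_of_nonneg_left _ (by positivity)
        have e1 : p^r = p^i * p^(r-i) := by rw [← pow_add]; congr 1; omega
        have e2 : (1-p)^(n-i) = (1-p)^(n-r) * (1-p)^(r-i) := by rw [← pow_add]; congr 1; omega
        rw [e1, e2]
        have : p^(r-i) ≤ (1-p)^(r-i) := pow_le_pow_left₀ hp0.le hp1 _
        calc p^i * p^(r-i) * (1-p)^(n-r) ≤ p^i * (1-p)^(r-i) * (1-p)^(n-r) := by
              apply mul_le_mul_of_nonneg_right _ (by positivity)
              exact mul_le_mul_of_nonneg_left this (by positivity)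
          _ = p^i * ((1-p)^(n-r) * (1-p)^(r-i)) := by ring
      calc ∑ i ∈ Finset.range (r+1), (n.choose i : ℝ) * (p^r * (1-p)^(n-r))
          ≤ ∑ i ∈ Finset.range (r+1), (n.choose i : ℝ) * (p^i * (1-p)^(n-i)) :=
            Finset.sum_le_sum step1
        _ ≤ ∑ i ∈ Finset.range (n+1), (n.choose i : ℝ) * (p^i * (1-p)^(n-i)) := by
            apply Finset.sum_le_sum_of_subset_of_nonneg
            · exact Finset.range_subset_range.mpr (by omega)
            · intro i _ _; positivity
        _ = (p + (1-p))^n := by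
            rw [add_pow]
            apply Finset.sum_congr rfl
            intro i _; ring
        _ = 1 := by norm_num
    have hpr : 0 < p^r * (1-p)^(n-r) := by positivity
    have hsum : (∑ i ∈ Finset.range (r+1), (n.choose i : ℝ)) ≤ (p^r * (1-p)^(n-r))⁻¹ := by
      calc (∑ i ∈ Finset.range (r+1), (n.choose i : ℝ))
          = (∑ i ∈ Finset.range (r+1), (n.choose i : ℝ)) * (p^r * (1-p)^(n-r)) *
            (p^r * (1-p)^(n-r))⁻¹ := by field_simp
        _ ≤ 1 * (p^r * (1-p)^(n-r))⁻¹ :=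
            mul_le_mul_of_nonneg_right key (inv_nonneg.mpr hpr.le)
        _ = (p^r * (1-p)^(n-r))⁻¹ := one_mul _
    -- now identify the inverse with 2 ^ (n * H₂ p)
    refine hsum.trans (le_of_eq ?_)
    have hnr : ((n - r : ℕ) : ℝ) = (n:ℝ) - r := by
      rw [Nat.cast_sub hrn]
    have pow_eq : ∀ (x:ℝ) (m:ℕ), 0 < x → x^m = (2:ℝ) ^ ((m:ℝ) * Real.logb 2 x) := by
      intro x m hx
      rw [mul_comm, Real.rpow_mul (by norm_num), Real.rpow_logb two_pos (by norm_num) hx,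
        Real.rpow_natCast]
    have e1 : p^r * (1-p)^(n-r) =
        (2:ℝ) ^ ((r:ℝ) * Real.logb 2 p + ((n:ℝ) - (r:ℝ)) * Real.logb 2 (1-p)) := by
      rw [Real.rpow_add (by norm_num), ← hnr, pow_eq p r hp0, pow_eq (1-p) (n-r) h1p]
    rw [e1, ← Real.rpow_neg (by norm_num : (0:ℝ) ≤ 2)]
    congr 1
    have hnp : (n:ℝ) * p = r := by rw [hp]; field_simp
    have : (n:ℝ) * binEntropy2 p =
        -((n:ℝ)*p) * Real.logb 2 p - ((n:ℝ) - (n:ℝ)*p) * Real.logb 2 (1-p) := by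
      rw [binEntropy2]; ring
    rw [this, hnp]; ring


open Finset in
lemma card_wball_le (G : Type) [Fintype G] [DecidableEq G] [One G] (n r : ℕ) :
    (Finset.univ.filter (fun y : Fin n → G =>
        (Finset.univ.filter (fun i => y i ≠ 1)).card ≤ r)).card
      ≤ (∑ i ∈ Finset.range (r+1), n.choose i) * Fintype.card G ^ r := by
  classical
  have hq : 1 ≤ Fintype.card G := Fintype.card_pos
  set T : Finset (Finset (Fin n)) :=
    Finset.univ.powerset.filter (fun s => s.card ≤ r) with hT
  set A : Finset (Fin n) → Finset (Fin n → G) :=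
    fun s => Finset.univ.filter (fun y => ∀ i ∉ s, y i = 1) with hA
  have hsub : Finset.univ.filter (fun y : Fin n → G =>
      (Finset.univ.filter (fun i => y i ≠ 1)).card ≤ r) ⊆ T.biUnion A := by
    intro y hy
    rw [Finset.mem_filter] at hy
    rw [Finset.mem_biUnion]
    refine ⟨Finset.univ.filter (fun i => y i ≠ 1), ?_, ?_⟩
    · rw [hT, Finset.mem_filter]; exact ⟨Finset.mem_powerset.mpr (Finset.subset_univ _), hy.2⟩
    · rw [hA, Finset.mem_filter]
      refine ⟨Finset.mem_univ _, fun i hi => ?_⟩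
      by_contra hne
      exact hi (Finset.mem_filter.mpr ⟨Finset.mem_univ _, hne⟩)
  have hAcard : ∀ s ∈ T, (A s).card ≤ Fintype.card G ^ r := by
    intro s hs
    rw [hT, Finset.mem_filter] at hs
    have h1 : (A s).card ≤ Fintype.card G ^ s.card := by
      have := Finset.card_le_card_of_injOn (f := fun (y : Fin n → G) (i : ↥s) => y i)
        (s := A s) (t := (Finset.univ : Finset (↥s → G)))
        (fun y _ => Finset.mem_univ _) ?_
      · simpa using this
      · intro y hy z hz hyz
        simp only [hA, Finset.coe_filter, Set.mem_setOf_eq] at hy hz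
        funext i
        by_cases hi : i ∈ s
        · exact congrFun hyz ⟨i, hi⟩
        · rw [hy.2 i hi, hz.2 i hi]
    exact h1.trans (Nat.pow_le_pow_right hq hs.2)
  have hTcard : T.card ≤ ∑ i ∈ Finset.range (r+1), n.choose i := by
    have hsub2 : T ⊆ (Finset.range (r+1)).biUnion
        (fun i => Finset.powersetCard i (Finset.univ : Finset (Fin n))) := by
      intro s hs
      rw [hT, Finset.mem_filter] at hs
      rw [Finset.mem_biUnion]
      exact ⟨s.card, Finset.mem_range.mpr (Nat.lt_succ_of_le hs.2),
        Finset.mem_powersetCard.mpr ⟨Finset.subset_univ _, rfl⟩⟩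
    calc T.card ≤ _ := Finset.card_le_card hsub2
      _ ≤ ∑ i ∈ Finset.range (r+1), (Finset.powersetCard i (Finset.univ : Finset (Fin n))).card :=
          Finset.card_biUnion_le
      _ = ∑ i ∈ Finset.range (r+1), n.choose i := by
          simp [Finset.card_powersetCard]
  calc (Finset.univ.filter (fun y : Fin n → G =>
        (Finset.univ.filter (fun i => y i ≠ 1)).card ≤ r)).card
      ≤ (T.biUnion A).card := Finset.card_le_card hsub
    _ ≤ ∑ s ∈ T, (A s).card := Finset.card_biUnion_le
    _ ≤ ∑ _s ∈ T, Fintype.card G ^ r := Finset.sum_le_sum hAcard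
    _ = T.card * Fintype.card G ^ r := by rw [Finset.sum_const, smul_eq_mul]
    _ ≤ (∑ i ∈ Finset.range (r+1), n.choose i) * Fintype.card G ^ r :=
        Nat.mul_le_mul_right _ hTcard

open scoped Classical in

lemma card_ball_subgrp (G : Type) [Group G] [Fintype G] [DecidableEq G] (n r : ℕ)
    (H : Subgroup (Fin n → G)) :
    (Finset.univ.filter (fun x : Fin n → G => ∃ h ∈ H, hammingDist x h ≤ r)).card
      ≤ Nat.card H * (Finset.univ.filter (fun y : Fin n → G =>
          (Finset.univ.filter (fun i => y i ≠ 1)).card ≤ r)).card := by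
  classical
  set W : Finset (Fin n → G) := Finset.univ.filter (fun y : Fin n → G =>
          (Finset.univ.filter (fun i => y i ≠ 1)).card ≤ r) with hW
  set HF : Finset (Fin n → G) := (H : Set (Fin n → G)).toFinset with hHF
  have hHFcard : HF.card = Nat.card H := by
    rw [hHF, Set.toFinset_card, Nat.card_eq_fintype_card]
    exact Fintype.card_congr (Equiv.refl _)
  have hsub : Finset.univ.filter (fun x : Fin n → G => ∃ h ∈ H, hammingDist x h ≤ r)
      ⊆ HF.biUnion (fun h => Finset.univ.filter (fun x => hammingDist x h ≤ r)) := by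
    intro x hx
    rw [Finset.mem_filter] at hx
    obtain ⟨h, hh, hd⟩ := hx.2
    rw [Finset.mem_biUnion]
    exact ⟨h, by simp [hHF, hh], Finset.mem_filter.mpr ⟨Finset.mem_univ _, hd⟩⟩
  have hball : ∀ h : Fin n → G,
      (Finset.univ.filter (fun x => hammingDist x h ≤ r)).card ≤ W.card := by
    intro h
    apply Finset.card_le_card_of_injOn (fun x => x * h⁻¹)
    · intro x hx
      simp only [Finset.mem_coe, Finset.mem_filter] at hx
      rw [hW, Finset.mem_coe, Finset.mem_filter]
      refine ⟨Finset.mem_univ _, le_trans (le_of_eq ?_) hx.2⟩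
      rw [hammingDist]
      congr 1
      ext i
      simp [mul_inv_eq_one]
    · intro x _ y _ hxy
      exact mul_right_cancel hxy
  calc (Finset.univ.filter (fun x : Fin n → G => ∃ h ∈ H, hammingDist x h ≤ r)).card
      ≤ (HF.biUnion (fun h => Finset.univ.filter (fun x => hammingDist x h ≤ r))).card :=
        Finset.card_le_card hsub
    _ ≤ ∑ h ∈ HF, (Finset.univ.filter (fun x => hammingDist x h ≤ r)).card :=
        Finset.card_biUnion_le
    _ ≤ ∑ _h ∈ HF, W.card := Finset.sum_le_sum (fun h _ => hball h)
    _ = HF.card * W.card := by rw [Finset.sum_const, smul_eq_mul]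
    _ = Nat.card H * W.card := by rw [hHFcard]

theorem remote_point_existence_entropy_bound
    (G : Type) [Group G] [Fintype G] [DecidableEq G]
    (hG : 2 ≤ Fintype.card G)
    (ε : ℝ) (hε : 0 < ε) :
    ∃ N : ℕ, ∀ n : ℕ, N ≤ n →
      ∀ (H : Subgroup (Fin n → G)) (k r : ℕ),
        Nat.card H ≤ Fintype.card G ^ k →
        (r : ℝ) ≤ (n : ℝ) / 2 →
        (k : ℝ) + (r : ℝ) ≤
          (n : ℝ) * (1 - binEntropy2 ((r : ℝ) / (n : ℝ)) / Real.logb 2 (Fintype.card G) - ε) →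
        ∃ x : Fin n → G, ∀ h ∈ H, r < hammingDist x h := by
  classical
  refine ⟨1, fun n hn H k r hHk hr hkr => ?_⟩
  set q : ℕ := Fintype.card G with hq
  have hq0 : (0:ℝ) < q := by positivity
  have hq1 : (1:ℝ) < q := by exact_mod_cast hG
  set L : ℝ := Real.logb 2 q with hLdef
  have hL : 0 < L := Real.logb_pos one_lt_two hq1
  set Hent : ℝ := binEntropy2 ((r:ℝ)/(n:ℝ)) with hHent
  set B : Finset (Fin n → G) :=
    Finset.univ.filter (fun x : Fin n → G => ∃ h ∈ H, hammingDist x h ≤ r) with hB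
  set W : Finset (Fin n → G) := Finset.univ.filter (fun y : Fin n → G =>
      (Finset.univ.filter (fun i => y i ≠ 1)).card ≤ r) with hW
  -- eventual cardinality bound
  have hcard : (B.card : ℝ) < (q:ℝ) ^ n := by
    have c1 : (B.card : ℝ) ≤ (Nat.card H : ℝ) * W.card := by
      exact_mod_cast card_ball_subgrp G n r H
    have c2 : (W.card : ℝ) ≤ (∑ i ∈ Finset.range (r+1), (n.choose i : ℝ)) * (q:ℝ) ^ r := by
      have := card_wball_le G n r
      push_cast
      exact_mod_cast this
    have c3 : (∑ i ∈ Finset.range (r+1), (n.choose i : ℝ)) ≤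
        (2:ℝ) ^ ((n:ℝ) * Hent) := sum_choose_le_entropy n r hn hr
    have cH : (Nat.card H : ℝ) ≤ (q:ℝ) ^ k := by exact_mod_cast hHk
    have hWnn : (0:ℝ) ≤ W.card := by positivity
    calc (B.card : ℝ) ≤ (Nat.card H : ℝ) * W.card := c1
      _ ≤ (q:ℝ)^k * ((∑ i ∈ Finset.range (r+1), (n.choose i : ℝ)) * (q:ℝ) ^ r) := by
          apply mul_le_mul cH c2 hWnn (by positivity)
      _ ≤ (q:ℝ)^k * ((2:ℝ) ^ ((n:ℝ) * Hent) * (q:ℝ) ^ r) := by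
          apply mul_le_mul_of_nonneg_left _ (by positivity)
          apply mul_le_mul_of_nonneg_right c3 (by positivity)
      _ = (2:ℝ) ^ ((k:ℝ)*L + ((n:ℝ) * Hent + (r:ℝ)*L)) := by
          rw [pow_eq_two_rpow _ hq0 k, pow_eq_two_rpow _ hq0 r,
            Real.rpow_add (by norm_num), Real.rpow_add (by norm_num)]
      _ ≤ (2:ℝ) ^ ((n:ℝ)*L - (n:ℝ)*ε*L) := by
          apply Real.rpow_le_rpow_of_exponent_le (by norm_num)
          have hmul := mul_le_mul_of_nonneg_right hkr hL.le
          have hdiv : Hent / L * L = Hent := div_mul_cancel₀ _ hL.ne'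
          nlinarith [hmul, hdiv]
      _ < (2:ℝ) ^ ((n:ℝ)*L) := by
          apply Real.rpow_lt_rpow_of_exponent_lt (by norm_num)
          have hn1 : (1:ℝ) ≤ n := by exact_mod_cast hn
          have hpos : 0 < (n:ℝ) * ε * L :=
            mul_pos (mul_pos (by linarith) hε) hL
          linarith
      _ = (q:ℝ) ^ n := (pow_eq_two_rpow _ hq0 n).symm
  have hcardN : B.card < q ^ n := by exact_mod_cast hcard
  have hx : ∃ x : Fin n → G, x ∉ B := by
    by_contra hc
    push_neg at hc
    have : B = Finset.univ := Finset.eq_univ_iff_forall.mpr hc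
    rw [this, Finset.card_univ, Fintype.card_fun, Fintype.card_fin] at hcardN
    exact lt_irrefl _ hcardN
  obtain ⟨x, hx⟩ := hx
  refine ⟨x, fun h hh => ?_⟩
  by_contra hle
  push_neg at hle
  exact hx (Finset.mem_filter.mpr ⟨Finset.mem_univ _, ⟨h, hh, hle⟩⟩)
end

section
/- Let G be a finite abelian group with |G| ≥ 2 and let d > 0 be a real constant. Then for all sufficiently large n the following holds: if S is a nonempty finite multiset of elements of G^n that is symmetric (the multiset image of S under inversion equals S) and (1/n^d)-biased (for every nontrivial character χ of G^n, |∑_{s∈S} χ(s)| ≤ |S|/n^d, the sum counted with multiplicity), then for every subgroup H of G^n with |H| ≤ |G|^{2n/3}, the number of elements of S lying in H, counted with multiplicity, is at most |S|/n^{d/2}. -/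
section Aux

open Finset

lemma aux_neZero_exp (Q : Type) [CommGroup Q] [Fintype Q] :
    NeZero ((Monoid.exponent Q : ℂ)) :=
  ⟨Nat.cast_ne_zero.mpr Monoid.exponent_ne_zero_of_finite⟩

lemma aux_sum_char_eq_zero {Q : Type} [CommGroup Q] [Fintype Q] [Fintype (Q →* ℂˣ)]
    {q : Q} (hq : q ≠ 1) :
    ∑ φ : Q →* ℂˣ, ((φ q : ℂˣ) : ℂ) = 0 := by
  have hexp := aux_neZero_exp Q
  obtain ⟨ψ, hψ⟩ := CommGroup.exists_apply_ne_one_of_hasEnoughRootsOfUnity Q ℂ hq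
  have key : (ψ q : ℂ) * ∑ φ : Q →* ℂˣ, ((φ q : ℂˣ) : ℂ)
      = ∑ φ : Q →* ℂˣ, ((φ q : ℂˣ) : ℂ) := by
    rw [Finset.mul_sum]
    refine Fintype.sum_bijective (ψ * ·) (Group.mulLeft_bijective ψ) _ _ fun φ => ?_
    simp
  have h1 : ((ψ q : ℂ) - 1) * ∑ φ : Q →* ℂˣ, ((φ q : ℂˣ) : ℂ) = 0 := by
    rw [sub_mul, one_mul, key, sub_self]
  rcases mul_eq_zero.mp h1 with h | h
  · exact absurd (Units.val_eq_one.mp (sub_eq_zero.mp h)) hψ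
  · exact h

lemma aux_card_char (Q : Type) [CommGroup Q] [Fintype Q] [Fintype (Q →* ℂˣ)] :
    Fintype.card (Q →* ℂˣ) = Fintype.card Q := by
  have hexp := aux_neZero_exp Q
  obtain ⟨e⟩ := CommGroup.monoidHom_mulEquiv_of_hasEnoughRootsOfUnity Q ℂ
  exact Fintype.card_congr e.toEquiv

lemma aux_card_filter {α : Type*} (S : Multiset α) (p : α → Prop) [DecidablePred p] :
    ((S.filter p).card : ℂ) = (S.map (fun s => if p s then (1:ℂ) else 0)).sum := by
  induction S using Multiset.induction_on with
  | empty => simp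
  | cons a S ih => by_cases h : p a <;> simp [Multiset.filter_cons, h, ih, add_comm]

lemma aux_swap {α β : Type*} (S : Multiset α) (t : Finset β) (f : β → α → ℂ) :
    (S.map (fun s => ∑ b ∈ t, f b s)).sum = ∑ b ∈ t, (S.map (f b)).sum := by
  induction S using Multiset.induction_on with
  | empty => simp
  | cons a S ih => simp [ih, Finset.sum_add_distrib]

end Aux

open scoped Classical in
theorem biased_set_small_intersection_with_subgroups
    (G : Type) [CommGroup G] [Fintype G] [DecidableEq G]
    (hG : 2 ≤ Fintype.card G)
    (d : ℝ) (hd : 0 < d) :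
    ∃ N : ℕ, ∀ n : ℕ, N ≤ n →
      ∀ S : Multiset (Fin n → G), S ≠ 0 →
        S.map (fun s => s⁻¹) = S →
        (∀ χ : (Fin n → G) →* ℂ, (∀ x, ‖χ x‖ = 1) → χ ≠ 1 →
          ‖(S.map (fun s => χ s)).sum‖ ≤ (S.card : ℝ) / (n : ℝ) ^ d) →
        ∀ H : Subgroup (Fin n → G),
          (Nat.card H : ℝ) ≤ (Fintype.card G : ℝ) ^ ((2 * (n : ℝ)) / 3) →
          ((S.filter (fun s => s ∈ H)).card : ℝ) ≤ (S.card : ℝ) / (n : ℝ) ^ (d / 2) := by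
  have hc : 0 < Real.log 2 / 3 := div_pos (Real.log_pos one_lt_two) (by norm_num)
  have h1 := tendsto_rpow_mul_exp_neg_mul_atTop_nhds_zero (d/2) _ hc
  have h2 := tendsto_rpow_atTop (show (0:ℝ) < d/2 by linarith)
  have hev : ∀ᶠ x : ℝ in Filter.atTop,
      (x ^ (d/2) * Real.exp (-(Real.log 2 / 3) * x) ≤ 1/2 ∧ 2 ≤ x ^ (d/2)) ∧ 1 ≤ x := by
    filter_upwards [h1.eventually (eventually_le_nhds (by norm_num : (0:ℝ) < 1/2)),
      h2.eventually_ge_atTop 2, Filter.eventually_ge_atTop 1] with x hx1 hx2 hx3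
    exact ⟨⟨hx1, hx2⟩, hx3⟩
  obtain ⟨x₀, hx₀⟩ := Filter.eventually_atTop.mp hev
  refine ⟨⌈x₀⌉₊ + 1, fun n hn S hS hsym hbias H hHcard => ?_⟩
  have hxn : x₀ ≤ (n : ℝ) := Nat.ceil_le.mp (by omega)
  obtain ⟨⟨hA, hB⟩, hx1⟩ := hx₀ (n : ℝ) hxn
  set x : ℝ := (n : ℝ) with hxdef
  have hx0 : (0:ℝ) < x := lt_of_lt_of_le one_pos hx1
  -- set up characters of the quotient
  letI : Fintype ((Fin n → G) ⧸ H) := Fintype.ofFinite _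
  set Q := (Fin n → G) ⧸ H with hQdef
  letI : Fintype (Q →* ℂˣ) := by
    have hexp := aux_neZero_exp Q
    have : Finite (Q →* ℂˣ) := by
      obtain ⟨e⟩ := CommGroup.monoidHom_mulEquiv_of_hasEnoughRootsOfUnity Q ℂ
      exact Finite.of_equiv _ e.toEquiv.symm
    exact Fintype.ofFinite _
  set D : ℕ := Fintype.card (Q →* ℂˣ) with hDdef
  have hDQ : D = Fintype.card Q := aux_card_char Q
  have hDpos : 0 < D := Fintype.card_pos_iff.mpr ⟨1⟩
  -- orthogonality
  have horth : ∀ s : Fin n → G,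
      (if s ∈ H then (1:ℂ) else 0) * (D:ℂ)
        = ∑ φ : Q →* ℂˣ, ((φ (QuotientGroup.mk s) : ℂˣ) : ℂ) := by
    intro s
    by_cases hs : s ∈ H
    · rw [if_pos hs, one_mul]
      have h1 : (QuotientGroup.mk s : Q) = 1 := (QuotientGroup.eq_one_iff s).mpr hs
      rw [h1]
      simp [hDdef]
    · rw [if_neg hs, zero_mul]
      exact (aux_sum_char_eq_zero (fun h => hs ((QuotientGroup.eq_one_iff s).mp h))).symm
  -- main identity
  have hmain : ((S.filter (fun s => s ∈ H)).card : ℂ) * (D:ℂ)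
      = ∑ φ : Q →* ℂˣ, (S.map (fun s => ((φ (QuotientGroup.mk s) : ℂˣ) : ℂ))).sum := by
    rw [aux_card_filter S (fun s => s ∈ H), Multiset.sum_map_mul_right.symm]
    rw [show (fun s => (if s ∈ H then (1:ℂ) else 0) * (D:ℂ))
        = fun s => ∑ φ : Q →* ℂˣ, ((φ (QuotientGroup.mk s) : ℂˣ) : ℂ) from funext horth]
    exact aux_swap S Finset.univ _
  -- bias bound for each nontrivial character
  have hbound : ∀ φ : Q →* ℂˣ, φ ≠ 1 →
      ‖(S.map (fun s => ((φ (QuotientGroup.mk s) : ℂˣ) : ℂ))).sum‖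
        ≤ (S.card : ℝ) / x ^ d := by
    intro φ hφ
    set χ : (Fin n → G) →* ℂ := (Units.coeHom ℂ).comp (φ.comp (QuotientGroup.mk' H)) with hχ
    have habs1 : ∀ y, ‖χ y‖ = 1 := by
      intro y
      have hpow : (χ y) ^ Fintype.card Q = 1 := by
        show ((φ (QuotientGroup.mk y) : ℂˣ) : ℂ) ^ _ = 1
        rw [← Units.val_pow_eq_pow_val, ← map_pow, pow_card_eq_one, map_one, Units.val_one]
      exact Complex.norm_eq_one_of_pow_eq_one hpow Fintype.card_ne_zero
    have hne : χ ≠ 1 := by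
      intro hcon
      apply hφ
      apply MonoidHom.ext
      intro q
      obtain ⟨a, rfl⟩ := QuotientGroup.mk'_surjective H q
      have h1 : χ a = 1 := by rw [hcon]; rfl
      exact Units.val_eq_one.mp h1
    exact hbias χ habs1 hne
  -- absolute value estimate
  have habs : ((S.filter (fun s => s ∈ H)).card : ℝ) * (D:ℝ)
      ≤ (S.card : ℝ) + (D:ℝ) * ((S.card : ℝ) / x ^ d) := by
    have h0 : ((S.filter (fun s => s ∈ H)).card : ℝ) * (D:ℝ)
        = ‖((S.filter (fun s => s ∈ H)).card : ℂ) * (D:ℂ)‖ := by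
      rw [norm_mul, Complex.norm_natCast, Complex.norm_natCast]
    rw [h0, hmain]
    calc ‖∑ φ : Q →* ℂˣ, (S.map (fun s => ((φ (QuotientGroup.mk s) : ℂˣ) : ℂ))).sum‖
        ≤ ∑ φ : Q →* ℂˣ, ‖(S.map (fun s => ((φ (QuotientGroup.mk s) : ℂˣ) : ℂ))).sum‖ :=
          norm_sum_le _ _
      _ = ‖(S.map (fun s => (((1 : Q →* ℂˣ) (QuotientGroup.mk s) : ℂˣ) : ℂ))).sum‖
          + ∑ φ ∈ Finset.univ.erase (1 : Q →* ℂˣ),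
              ‖(S.map (fun s => ((φ (QuotientGroup.mk s) : ℂˣ) : ℂ))).sum‖ :=
          (Finset.add_sum_erase _ _ (Finset.mem_univ 1)).symm
      _ ≤ (S.card : ℝ) + (D:ℝ) * ((S.card : ℝ) / x ^ d) := by
          gcongr ?_ + ?_
          · simp
          · calc ∑ φ ∈ Finset.univ.erase (1 : Q →* ℂˣ),
                ‖(S.map (fun s => ((φ (QuotientGroup.mk s) : ℂˣ) : ℂ))).sum‖
                ≤ (Finset.univ.erase (1 : Q →* ℂˣ)).card • ((S.card : ℝ) / x ^ d) :=
                  Finset.sum_le_card_nsmul _ _ _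
                    (fun φ hφ => hbound φ (Finset.ne_of_mem_erase hφ))
              _ ≤ (D:ℝ) * ((S.card : ℝ) / x ^ d) := by
                  rw [nsmul_eq_mul]
                  have hcc : (((Finset.univ.erase (1 : Q →* ℂˣ)).card : ℕ) : ℝ) ≤ (D:ℝ) := by
                    exact_mod_cast (Finset.card_erase_le.trans (le_of_eq (Finset.card_univ)))
                  exact mul_le_mul_of_nonneg_right hcc (by positivity)
  -- divide by D
  have hDposR : (0:ℝ) < (D:ℝ) := by exact_mod_cast hDpos
  have hcount : ((S.filter (fun s => s ∈ H)).card : ℝ)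
      ≤ (S.card : ℝ) / (D:ℝ) + (S.card : ℝ) / x ^ d := by
    have h1 := (div_le_div_iff_of_pos_right hDposR).mpr habs
    rw [mul_div_assoc, div_self (ne_of_gt hDposR), mul_one] at h1
    refine h1.trans (le_of_eq ?_)
    field_simp
  -- lower bound on D
  have hG2 : (2:ℝ) ≤ (Fintype.card G : ℝ) := by exact_mod_cast hG
  have hG0 : (0:ℝ) < (Fintype.card G : ℝ) := lt_of_lt_of_le two_pos hG2
  have hHpos : (0:ℝ) < (Nat.card H : ℝ) := by
    have : 0 < Nat.card H := Nat.card_pos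
    exact_mod_cast this
  have hcardA : (Nat.card (Fin n → G) : ℝ) = (Fintype.card G : ℝ) ^ (x : ℝ) := by
    rw [Nat.card_eq_fintype_card, Fintype.card_fun, Fintype.card_fin, hxdef]
    push_cast
    exact (Real.rpow_natCast _ n).symm
  have hDeq : (D:ℝ) = (Nat.card (Fin n → G) : ℝ) / (Nat.card H : ℝ) := by
    have := Subgroup.card_eq_card_quotient_mul_card_subgroup H
    rw [eq_div_iff (ne_of_gt hHpos)]
    rw [hDQ]
    rw [show (Fintype.card Q : ℝ) * (Nat.card H : ℝ) = ((Nat.card ((Fin n → G) ⧸ H) * Nat.card H : ℕ) : ℝ) by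
      push_cast [Nat.card_eq_fintype_card]; rfl]
    rw [← this]
  have hDge : (2:ℝ) ^ (x/3) ≤ (D:ℝ) := by
    have hstep : (Fintype.card G : ℝ) ^ (x : ℝ) / (Fintype.card G : ℝ) ^ ((2*x)/3)
        ≤ (Nat.card (Fin n → G) : ℝ) / (Nat.card H : ℝ) := by
      rw [hcardA]
      gcongr
    rw [hDeq]
    refine le_trans ?_ hstep
    rw [← Real.rpow_sub hG0]
    calc (2:ℝ) ^ (x/3) ≤ (Fintype.card G : ℝ) ^ (x/3) :=
          Real.rpow_le_rpow (by norm_num) hG2 (by positivity)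
      _ = (Fintype.card G : ℝ) ^ (x - 2*x/3) := by ring_nf
  -- numeric endgame
  have hxd2 : (0:ℝ) < x ^ (d/2) := Real.rpow_pos_of_pos hx0 _
  have h2x3 : (0:ℝ) < (2:ℝ) ^ (x/3) := Real.rpow_pos_of_pos (by norm_num) _
  have hexp : Real.exp (-(Real.log 2 / 3) * x) = 1 / (2:ℝ) ^ (x/3) := by
    rw [Real.rpow_def_of_pos (by norm_num : (0:ℝ) < 2), one_div, ← Real.exp_neg]
    congr 1
    ring
  rw [hexp] at hA
  have h23 : 2 * x ^ (d/2) ≤ (2:ℝ) ^ (x/3) := by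
    rw [mul_one_div, div_le_div_iff₀ h2x3 (by norm_num)] at hA
    nlinarith
  have hD2 : 2 * x ^ (d/2) ≤ (D:ℝ) := h23.trans hDge
  have hScard : (0:ℝ) ≤ (S.card : ℝ) := by positivity
  calc ((S.filter (fun s => s ∈ H)).card : ℝ)
      ≤ (S.card : ℝ) / (D:ℝ) + (S.card : ℝ) / x ^ d := hcount
    _ ≤ (S.card : ℝ) / (2 * x ^ (d/2)) + (S.card : ℝ) / (2 * x ^ (d/2)) := by
        gcongr ?_ + ?_
        · exact div_le_div_of_nonneg_left hScard (by positivity) hD2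
        · refine div_le_div_of_nonneg_left hScard (by positivity) ?_
          have hxd : x ^ d = x ^ (d/2) * x ^ (d/2) := by
            rw [← Real.rpow_add hx0]
            norm_num
          rw [hxd]
          nlinarith
    _ = (S.card : ℝ) / x ^ (d/2) := by
        rw [← add_div, ← two_mul, mul_div_mul_left _ _ (by norm_num : (2:ℝ) ≠ 0)]
end

section
/- Let G be a finite group with |G| ≥ 2 and let c > 0 be a real constant. Then for all sufficiently large n the following holds: for every subgroup H of G^n with |H| ≤ |G|^{n/2}, there exist m ≤ n^{10c} subgroups H_1, H_2, …, H_m of G^n such that |H_i| ≤ |G|^{2n/3} for every i, and every x ∈ G^n with Δ(x,H) ≤ c·log₂ n lies in H_i for some i (i.e., the Hamming ball B(H, c·log₂ n) is contained in the union of the H_i). -/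
open Finset Filter Pointwise
open Finset Pointwise

/-- Subgroup of functions supported on `U`. -/
def suppSubgroup (G : Type) [Group G] {n : ℕ} [DecidableEq G] (U : Finset (Fin n)) :
    Subgroup (Fin n → G) where
  carrier := {x | ∀ i ∉ U, x i = 1}
  mul_mem' := by intro a b ha hb i hi; simp [Pi.mul_apply, ha i hi, hb i hi]
  one_mem' := by intro i _; rfl
  inv_mem' := by intro a ha i hi; simp [Pi.inv_apply, ha i hi]

instance suppSubgroup_normal (G : Type) [Group G] {n : ℕ} [DecidableEq G] (U : Finset (Fin n)) :
    (suppSubgroup G U).Normal := by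
  constructor
  intro x hx g i hi
  simp [Pi.mul_apply, Pi.inv_apply, hx i hi]

lemma card_suppSubgroup_le (G : Type) [Group G] [Fintype G] {n : ℕ} [DecidableEq G]
    (U : Finset (Fin n)) :
    Nat.card (suppSubgroup G U) ≤ Fintype.card G ^ U.card := by
  have hinj : Function.Injective (fun (x : suppSubgroup G U) (i : U) => (x : Fin n → G) i) := by
    intro x y hxy
    ext i
    by_cases hi : i ∈ U
    · exact congrFun hxy ⟨i, hi⟩
    · rw [x.2 i hi, y.2 i hi]
  calc Nat.card (suppSubgroup G U) ≤ Nat.card (↥U → G) :=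
        Nat.card_le_card_of_injective _ hinj
    _ = Fintype.card G ^ U.card := by
        rw [Nat.card_eq_fintype_card, Fintype.card_fun]
        simp

lemma card_sup_le (G : Type) [Group G] [Fintype G] (H N : Subgroup G) [N.Normal] :
    Nat.card (H ⊔ N : Subgroup G) ≤ Nat.card H * Nat.card N := by
  have : ((H ⊔ N : Subgroup G) : Set G) = (H : Set G) * (N : Set G) := Subgroup.mul_normal H N
  calc Nat.card (H ⊔ N : Subgroup G) = Nat.card ((H : Set G) * (N : Set G)) := by
        rw [← this]; rfl
    _ ≤ Nat.card (H : Set G) * Nat.card (N : Set G) := Set.natCard_mul_le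
    _ = Nat.card H * Nat.card N := rfl
open Finset Filter

lemma eventually_cond (c : ℝ) (hc : 0 < c) :
    ∃ N : ℕ, ∀ n : ℕ, N ≤ n →
      (2 ≤ n) ∧ c * Real.logb 2 n + 1 ≤ (n : ℝ) / 42 ∧
      7 / (3 * c) ≤ Real.logb 2 n ∧ 1 ≤ Real.logb 2 n := by
  have h1 : ∀ᶠ x : ℝ in atTop, c * Real.logb 2 x + 1 ≤ x / 42 := by
    have hlog := Real.isLittleO_log_id_atTop.def
      (c := Real.log 2 / (84 * c)) (by positivity)
    filter_upwards [hlog, eventually_ge_atTop (84 : ℝ)] with x hx h84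
    have hx1 : (1:ℝ) ≤ x := by linarith
    have hlx : 0 ≤ Real.log x := Real.log_nonneg hx1
    rw [Real.norm_eq_abs, Real.norm_eq_abs, abs_of_nonneg hlx] at hx
    rw [show id x = x from rfl, abs_of_nonneg (by linarith : (0:ℝ) ≤ x)] at hx
    have hlog2 : 0 < Real.log 2 := Real.log_pos one_lt_two
    have : c * Real.logb 2 x ≤ x / 84 := by
      have h5 : c * Real.log x ≤ Real.log 2 * x / 84 := by
        calc c * Real.log x ≤ c * (Real.log 2 / (84 * c) * x) := by
              exact mul_le_mul_of_nonneg_left hx hc.le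
          _ = Real.log 2 * x / 84 := by field_simp
      rw [Real.logb, mul_div_assoc', div_le_iff₀ hlog2]
      linarith
    linarith
  have h2 : ∀ᶠ x : ℝ in atTop, max (7 / (3 * c)) 1 ≤ Real.logb 2 x :=
    (Real.tendsto_logb_atTop one_lt_two).eventually_ge_atTop _
  have h3 : ∀ᶠ n : ℕ in atTop,
      c * Real.logb 2 n + 1 ≤ (n : ℝ) / 42 ∧ max (7 / (3 * c)) 1 ≤ Real.logb 2 n :=
    tendsto_natCast_atTop_atTop.eventually (h1.and h2)
  obtain ⟨N, hN⟩ := eventually_atTop.mp (h3.and (eventually_ge_atTop 2))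
  refine ⟨N, fun n hn => ?_⟩
  obtain ⟨⟨ha, hb⟩, h2n⟩ := hN n hn
  exact ⟨h2n, ha, le_trans (le_max_left _ _) hb, le_trans (le_max_right _ _) hb⟩

theorem cover_hamming_ball_by_subgroups
    (G : Type) [Group G] [Fintype G] [DecidableEq G]
    (hG : 2 ≤ Fintype.card G)
    (c : ℝ) (hc : 0 < c) :
    ∃ N : ℕ, ∀ n : ℕ, N ≤ n →
      ∀ H : Subgroup (Fin n → G),
        (Nat.card H : ℝ) ≤ (Fintype.card G : ℝ) ^ ((n : ℝ) / 2) →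
        ∃ (m : ℕ) (Hs : Fin m → Subgroup (Fin n → G)),
          (m : ℝ) ≤ (n : ℝ) ^ (10 * c) ∧
          (∀ i, (Nat.card (Hs i) : ℝ) ≤ (Fintype.card G : ℝ) ^ ((2 * (n : ℝ)) / 3)) ∧
          (∀ x : Fin n → G,
            (∃ h ∈ H, (hammingDist x h : ℝ) ≤ c * Real.logb 2 n) → ∃ i, x ∈ Hs i) := by
  obtain ⟨N, hN⟩ := eventually_cond c hc
  refine ⟨N, fun n hn H hH => ?_⟩
  obtain ⟨hn2, hcond, h73c, hlogn⟩ := hN n hn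
  have hn2R : (2:ℝ) ≤ n := by exact_mod_cast hn2
  have hn0 : (0:ℝ) < n := by linarith
  set A : ℝ := (Fintype.card G : ℝ) with hA
  have hA1 : (1:ℝ) ≤ A := by
    have : (2:ℝ) ≤ A := by rw [hA]; exact_mod_cast hG
    linarith
  have hA0 : (0:ℝ) < A := by linarith
  -- radius
  set r : ℕ := ⌈c * Real.logb 2 n⌉₊ with hrdef
  have hcl : 0 < c * Real.logb 2 n := by nlinarith
  have hr1 : 1 ≤ r := Nat.ceil_pos.mpr hcl
  have hrle : (r:ℝ) ≤ c * Real.logb 2 n + 1 := (Nat.ceil_lt_add_one hcl.le).le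
  have hrn42 : (r:ℝ) ≤ (n:ℝ) / 42 := le_trans hrle hcond
  set t : ℕ := 7 * r with htdef
  have ht : 0 < t := by omega
  -- blocks
  set β : Fin n → Fin t := fun i => ⟨(i:ℕ) % t, Nat.mod_lt _ ht⟩ with hβ
  set UU : Finset (Fin t) → Finset (Fin n) :=
    fun T => univ.filter (fun i => β i ∈ T) with hUU
  -- fiber bound
  have hfiber : ∀ j : Fin t, (univ.filter (fun i : Fin n => β i = j)).card ≤ n / t + 1 := by
    intro j
    have : (univ.filter (fun i : Fin n => β i = j)).card ≤ (Finset.range (n / t + 1)).card := by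
      refine Finset.card_le_card_of_injOn (fun i => (i:ℕ) / t) ?_ ?_
      · intro i hi
        simp only [Finset.mem_range]
        have : (i:ℕ) < n := i.2
        have h1 : (i:ℕ) / t ≤ n / t := Nat.div_le_div_right this.le
        rw [Finset.mem_coe, Finset.mem_range]
        omega
      · intro i₁ h₁ i₂ h₂ hdiv
        simp only [Finset.mem_coe, Finset.mem_filter] at h₁ h₂
        have e₁ : ((β i₁ : Fin t) : ℕ) = (i₁ : ℕ) % t := rfl
        have e₂ : ((β i₂ : Fin t) : ℕ) = (i₂ : ℕ) % t := rfl
        have hmod : (i₁:ℕ) % t = (i₂:ℕ) % t := by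
          rw [← e₁, ← e₂, h₁.2, h₂.2]
        have hdiv' : (i₁:ℕ) / t = (i₂:ℕ) / t := hdiv
        apply Fin.ext
        conv_lhs => rw [← Nat.div_add_mod (i₁:ℕ) t]
        conv_rhs => rw [← Nat.div_add_mod (i₂:ℕ) t]
        rw [hdiv', hmod]
    simpa using this
  have hUUcard : ∀ T : Finset (Fin t), T.card ≤ r → (UU T).card ≤ n / 7 + r := by
    intro T hT
    have hsplit : UU T = T.biUnion (fun j => univ.filter (fun i : Fin n => β i = j)) := by
      ext i
      simp [hUU, Finset.mem_biUnion]
    have h1 : (UU T).card ≤ T.card * (n / t + 1) := by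
      rw [hsplit]
      calc (T.biUnion (fun j => univ.filter (fun i : Fin n => β i = j))).card
          ≤ ∑ j ∈ T, (univ.filter (fun i : Fin n => β i = j)).card := Finset.card_biUnion_le
        _ ≤ ∑ _j ∈ T, (n / t + 1) := Finset.sum_le_sum (fun j _ => hfiber j)
        _ = T.card * (n / t + 1) := by rw [Finset.sum_const, smul_eq_mul]
    have h2 : T.card * (n / t + 1) ≤ r * (n / t) + r := by
      calc T.card * (n / t + 1) ≤ r * (n / t + 1) := Nat.mul_le_mul_right _ hT
        _ = r * (n / t) + r := by ring
    have h3 : r * (n / t) ≤ n / 7 := by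
      have : n / t = n / 7 / r := by
        rw [htdef, Nat.div_div_eq_div_mul]
      rw [this, mul_comm]
      exact Nat.div_mul_le_self _ _
    omega
  -- the equivalence
  have hcardfin : Fintype.card (Finset (Fin t)) = 2 ^ t := by
    simp [Fintype.card_finset]
  set e : Finset (Fin t) ≃ Fin (2 ^ t) := Fintype.equivFinOfCardEq hcardfin with he
  set Hs : Fin (2 ^ t) → Subgroup (Fin n → G) :=
    fun i => if (e.symm i).card ≤ r then H ⊔ suppSubgroup G (UU (e.symm i)) else ⊥ with hHs
  refine ⟨2 ^ t, Hs, ?_, ?_, ?_⟩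
  · -- counting bound
    have h2logb : (2:ℝ) ^ Real.logb 2 n = n := Real.rpow_logb (by norm_num) (by norm_num) hn0
    have e1 : ((2 ^ t : ℕ) : ℝ) = (2:ℝ) ^ ((t:ℕ):ℝ) := by
      push_cast
      rw [Real.rpow_natCast]
    rw [e1]
    have htle : ((t:ℕ):ℝ) ≤ 7 * (c * Real.logb 2 n) + 7 := by
      rw [htdef]
      push_cast
      linarith
    calc (2:ℝ) ^ ((t:ℕ):ℝ) ≤ (2:ℝ) ^ (7 * (c * Real.logb 2 n) + 7) :=
          Real.rpow_le_rpow_of_exponent_le one_le_two htle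
      _ = (n:ℝ) ^ (7 * c) * (2:ℝ) ^ (7:ℝ) := by
          rw [Real.rpow_add (by norm_num : (0:ℝ) < 2)]
          congr 1
          rw [show 7 * (c * Real.logb 2 n) = Real.logb 2 n * (7 * c) by ring,
            Real.rpow_mul (by norm_num : (0:ℝ) ≤ 2), h2logb]
      _ ≤ (n:ℝ) ^ (7 * c) * (n:ℝ) ^ (3 * c) := by
          apply mul_le_mul_of_nonneg_left _ (Real.rpow_nonneg hn0.le _)
          have : (n:ℝ) ^ (3 * c) = (2:ℝ) ^ (Real.logb 2 n * (3 * c)) := by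
            rw [Real.rpow_mul (by norm_num : (0:ℝ) ≤ 2), h2logb]
          rw [this]
          apply Real.rpow_le_rpow_of_exponent_le one_le_two
          have h3c : 0 < 3 * c := by linarith
          calc (7:ℝ) = 7 / (3 * c) * (3 * c) := by field_simp
            _ ≤ Real.logb 2 n * (3 * c) := by
                apply mul_le_mul_of_nonneg_right h73c h3c.le
      _ = (n:ℝ) ^ (10 * c) := by
          rw [← Real.rpow_add hn0]
          congr 1
          ring
  · -- cardinality bound
    intro i
    rw [hHs]
    by_cases hcase : (e.symm i).card ≤ r
    · simp only [hcase, if_true]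
      set T := e.symm i
      set U := UU T
      have hsup := card_sup_le (Fin n → G) H (suppSubgroup G U)
      have hK := card_suppSubgroup_le G U
      have hUcard := hUUcard T hcase
      have step1 : (Nat.card (H ⊔ suppSubgroup G U : Subgroup (Fin n → G)) : ℝ) ≤
          (Nat.card H : ℝ) * (A ^ (U.card : ℕ)) := by
        calc (Nat.card (H ⊔ suppSubgroup G U : Subgroup (Fin n → G)) : ℝ)
            ≤ (Nat.card H : ℝ) * (Nat.card (suppSubgroup G U) : ℝ) := by exact_mod_cast hsup
          _ ≤ (Nat.card H : ℝ) * (A ^ (U.card : ℕ)) := by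
              apply mul_le_mul_of_nonneg_left _ (Nat.cast_nonneg _)
              calc (Nat.card (suppSubgroup G U) : ℝ) ≤ ((Fintype.card G ^ U.card : ℕ) : ℝ) := by
                    exact_mod_cast hK
                _ = A ^ (U.card : ℕ) := by push_cast; rfl
      have hApow : A ^ (U.card : ℕ) = A ^ ((U.card : ℕ) : ℝ) := (Real.rpow_natCast A _).symm
      have hexp : ((U.card : ℕ) : ℝ) ≤ (n:ℝ) / 7 + (n:ℝ) / 42 := by
        calc ((U.card : ℕ) : ℝ) ≤ ((n / 7 + r : ℕ) : ℝ) := by exact_mod_cast hUcard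
          _ = ((n / 7 : ℕ) : ℝ) + (r : ℝ) := by push_cast; ring
          _ ≤ (n:ℝ) / 7 + (n:ℝ) / 42 := by
              have := Nat.cast_div_le (m := n) (n := 7) (α := ℝ)
              push_cast at this
              linarith
      calc (Nat.card (H ⊔ suppSubgroup G U : Subgroup (Fin n → G)) : ℝ)
          ≤ (Nat.card H : ℝ) * (A ^ (U.card : ℕ)) := step1
        _ ≤ A ^ ((n:ℝ) / 2) * A ^ (((U.card : ℕ)) : ℝ) := by
            rw [hApow] at *
            apply mul_le_mul hH le_rfl (Real.rpow_nonneg hA0.le _) (Real.rpow_nonneg hA0.le _)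
        _ = A ^ ((n:ℝ) / 2 + ((U.card : ℕ) : ℝ)) := (Real.rpow_add hA0 _ _).symm
        _ ≤ A ^ ((2 * (n:ℝ)) / 3) := by
            apply Real.rpow_le_rpow_of_exponent_le hA1
            linarith
    · simp only [hcase, if_false]
      have : Nat.card (⊥ : Subgroup (Fin n → G)) = 1 := by
        simp [Nat.card_eq_fintype_card]
      rw [this]
      have h0 : A ^ (0:ℝ) = 1 := Real.rpow_zero A
      rw [show ((1:ℕ):ℝ) = A ^ (0:ℝ) by rw [h0]; norm_num]
      apply Real.rpow_le_rpow_of_exponent_le hA1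
      positivity
  · -- covering
    intro x ⟨h, hhH, hdist⟩
    have hdr : hammingDist x h ≤ r := by
      have : (hammingDist x h : ℝ) ≤ (r : ℝ) :=
        le_trans hdist (Nat.le_ceil _)
      exact_mod_cast this
    set D : Finset (Fin n) := univ.filter (fun i => x i ≠ h i) with hD
    have hDcard : D.card = hammingDist x h := rfl
    set T : Finset (Fin t) := D.image β with hT
    have hTcard : T.card ≤ r := le_trans (Finset.card_image_le) (by omega)
    refine ⟨e T, ?_⟩
    rw [hHs]
    simp only [Equiv.symm_apply_apply, hTcard, if_true]
    have hd : h⁻¹ * x ∈ suppSubgroup G (UU T) := by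
      intro i hi
      simp only [hUU, Finset.mem_filter, Finset.mem_univ, true_and] at hi
      have hxh : x i = h i := by
        by_contra hne
        exact hi (Finset.mem_image_of_mem β (by simp [hD, hne]))
      simp [Pi.mul_apply, Pi.inv_apply, hxh]
    have : x = h * (h⁻¹ * x) := by group
    rw [this]
    exact Subgroup.mul_mem _ (Subgroup.mem_sup_left hhH) (Subgroup.mem_sup_right hd)
end

section
/- Let G be a finite abelian group with |G| ≥ 2 and let c > 0 be a real constant. Then for all sufficiently large n the following holds: let S be a nonempty finite multiset of elements of G^n that is symmetric and (1/n^{20c})-biased (for every nontrivial character χ of G^n, |∑_{s∈S} χ(s)| ≤ |S|/n^{20c}). Then for every m ≤ n^{10c} and every collection H_1, H_2, …, H_m of subgroups of G^n with |H_i| ≤ |G|^{2n/3} for each i, there exists an element s of S such that s ∉ H_i for every i. -/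
open Finset Filter

lemma multiset_sum_comm' {α β : Type*} [Fintype β] (S : Multiset α) (g : β → α → ℂ) :
    ∑ ψ : β, (S.map (g ψ)).sum = (S.map (fun s => ∑ ψ : β, g ψ s)).sum := by
  induction S using Multiset.induction_on with
  | empty => simp
  | cons a T ih => simp [Finset.sum_add_distrib, ih]

lemma multiset_sum_ite' {α : Type*} (S : Multiset α) (p : α → Prop) [DecidablePred p] (c : ℂ) :
    (S.map (fun s => if p s then c else 0)).sum = ((S.filter p).card : ℂ) * c := by
  induction S using Multiset.induction_on with
  | empty => simp
  | cons a T ih =>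
    by_cases h : p a <;> simp [Multiset.filter_cons, h, ih, add_mul] <;> ring

lemma card_le_sum_filter' {α : Type*} {m : ℕ} (S : Multiset α) (p : Fin m → α → Prop)
    [∀ i, DecidablePred (p i)] (h : ∀ s ∈ S, ∃ i, p i s) :
    S.card ≤ ∑ i, (S.filter (p i)).card := by
  classical
  have hle : S ≤ ∑ i, S.filter (p i) := by
    rw [Multiset.le_iff_count]
    intro a
    rw [Multiset.count_sum']
    by_cases ha : a ∈ S
    · obtain ⟨i, hi⟩ := h a ha
      calc S.count a = (S.filter (p i)).count a := by
            rw [Multiset.count_filter, if_pos hi]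
        _ ≤ ∑ j, (S.filter (p j)).count a :=
            Finset.single_le_sum (f := fun j => (S.filter (p j)).count a)
              (fun j _ => Nat.zero_le _) (Finset.mem_univ i)
    · simp [Multiset.count_eq_zero_of_notMem ha]
  calc S.card ≤ (∑ i, S.filter (p i)).card := Multiset.card_le_card hle
    _ = ∑ i, (S.filter (p i)).card := by
        induction (Finset.univ : Finset (Fin m)) using Finset.induction_on with
        | empty => simp
        | insert _ _ hx ih2 => simp [Finset.sum_insert hx, ih2]

open Finset Filter

lemma filter_card_bound' {A : Type} [CommGroup A] [Fintype A] [DecidableEq A]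
    (S : Multiset A) (H : Subgroup A) [DecidablePred (· ∈ H)] (B : ℝ) (hB : 0 ≤ B)
    (hbias : ∀ χ : A →* ℂ, (∀ x, ‖χ x‖ = 1) → χ ≠ 1 →
      ‖(S.map (fun s => χ s)).sum‖ ≤ B) :
    ((S.filter (· ∈ H)).card : ℝ) * Nat.card (A ⧸ H) ≤
      S.card + (Nat.card (A ⧸ H) : ℝ) * B := by
  classical
  letI : Fintype (A ⧸ H) := Fintype.ofFinite _
  set Q := A ⧸ H with hQ
  -- the characters
  set χmap : AddChar (Additive Q) ℂ → (A →* ℂ) := fun ψ =>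
    ψ.toMonoidHom.comp ((MulEquiv.multiplicativeAdditive Q).symm.toMonoidHom.comp
      (QuotientGroup.mk' H)) with hχmap
  have happ : ∀ ψ (s : A), χmap ψ s = ψ (Additive.ofMul ((s : Q))) := fun ψ s => rfl
  have hcard : Fintype.card (AddChar (Additive Q) ℂ) = Nat.card Q := by
    rw [AddChar.card_eq]
    rw [Nat.card_eq_fintype_card]
    exact Fintype.card_congr Additive.toMul
  have key : ∀ s : A, (∑ ψ : AddChar (Additive Q) ℂ, χmap ψ s)
      = if s ∈ H then (Nat.card Q : ℂ) else 0 := by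
    intro s
    simp only [happ]
    rw [AddChar.sum_apply_eq_ite]
    have hiff : (Additive.ofMul ((s : Q)) = 0) ↔ s ∈ H := by
      rw [show (0 : Additive Q) = Additive.ofMul (1 : Q) from rfl]
      rw [Additive.ofMul.apply_eq_iff_eq]
      exact QuotientGroup.eq_one_iff s
    by_cases hs : s ∈ H
    · rw [if_pos (hiff.mpr hs), if_pos hs]
      norm_cast
      rw [Nat.card_eq_fintype_card]
      exact Fintype.card_congr Additive.toMul
    · rw [if_neg (fun h => hs (hiff.mp h)), if_neg hs]
  have main : (((S.filter (· ∈ H)).card : ℂ)) * (Nat.card Q : ℂ)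
      = ∑ ψ : AddChar (Additive Q) ℂ, (S.map (fun s => χmap ψ s)).sum := by
    rw [multiset_sum_comm']
    rw [show (fun s => ∑ ψ : AddChar (Additive Q) ℂ, χmap ψ s)
        = fun s => if s ∈ H then (Nat.card Q : ℂ) else 0 from funext key]
    rw [multiset_sum_ite']
  -- nontriviality transfer
  have hnt : ∀ ψ : AddChar (Additive Q) ℂ, ψ ≠ 1 → χmap ψ ≠ 1 := by
    intro ψ hψ h1
    apply hψ
    apply DFunLike.ext
    intro a
    obtain ⟨s, hs⟩ := QuotientGroup.mk_surjective (Additive.toMul a)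
    have h2 : χmap ψ s = 1 := by rw [h1]; rfl
    rw [happ, hs] at h2
    simpa using h2
  have hnorm : ∀ (ψ : AddChar (Additive Q) ℂ) (x : A), ‖χmap ψ x‖ = 1 := by
    intro ψ x
    rw [happ, AddChar.norm_apply]
  -- take absolute values
  have habs : ((S.filter (· ∈ H)).card : ℝ) * (Nat.card Q : ℝ)
      = ‖∑ ψ : AddChar (Additive Q) ℂ, (S.map (fun s => χmap ψ s)).sum‖ := by
    rw [← main, norm_mul]
    simp [Complex.norm_natCast]
  rw [habs]
  calc ‖∑ ψ : AddChar (Additive Q) ℂ, (S.map (fun s => χmap ψ s)).sum‖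
      ≤ ∑ ψ : AddChar (Additive Q) ℂ, ‖(S.map (fun s => χmap ψ s)).sum‖ :=
        norm_sum_le _ _
    _ = ‖(S.map (fun s => χmap 1 s)).sum‖ +
        ∑ ψ ∈ Finset.univ.erase 1, ‖(S.map (fun s => χmap ψ s)).sum‖ :=
        (Finset.add_sum_erase _ _ (Finset.mem_univ 1)).symm
    _ ≤ (S.card : ℝ) + (Nat.card Q : ℝ) * B := by
        gcongr
        · have : ∀ s : A, χmap (1 : AddChar (Additive Q) ℂ) s = 1 := fun s => by
            rw [happ]; rfl
          rw [show (fun s => χmap (1 : AddChar (Additive Q) ℂ) s) = fun _ => (1:ℂ)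
            from funext this]
          simp [Multiset.map_const']
        · calc ∑ ψ ∈ Finset.univ.erase 1, ‖(S.map (fun s => χmap ψ s)).sum‖
              ≤ ∑ _ψ ∈ (Finset.univ : Finset (AddChar (Additive Q) ℂ)).erase 1, B := by
                apply Finset.sum_le_sum
                intro ψ hψ
                exact hbias _ (hnorm ψ) (hnt ψ (Finset.ne_of_mem_erase hψ))
            _ = ((Finset.univ.erase (1 : AddChar (Additive Q) ℂ)).card : ℝ) * B := by
                rw [Finset.sum_const, nsmul_eq_mul]
            _ ≤ (Nat.card Q : ℝ) * B := by
                apply mul_le_mul_of_nonneg_right _ hB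
                have := Finset.card_erase_le
                  (s := (Finset.univ : Finset (AddChar (Additive Q) ℂ))) (a := 1)
                rw [Finset.card_univ, hcard] at this
                exact_mod_cast this

theorem biased_set_escapes_union_of_subgroups
    (G : Type) [CommGroup G] [Fintype G] [DecidableEq G]
    (hG : 2 ≤ Fintype.card G)
    (c : ℝ) (hc : 0 < c) :
    ∃ N : ℕ, ∀ n : ℕ, N ≤ n →
      ∀ S : Multiset (Fin n → G), S ≠ 0 →
        S.map (fun s => s⁻¹) = S →
        (∀ χ : (Fin n → G) →* ℂ, (∀ x, ‖χ x‖ = 1) → χ ≠ 1 →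
          ‖(S.map (fun s => χ s)).sum‖ ≤ (S.card : ℝ) / (n : ℝ) ^ (20 * c)) →
        ∀ m : ℕ, (m : ℝ) ≤ (n : ℝ) ^ (10 * c) →
          ∀ Hs : Fin m → Subgroup (Fin n → G),
            (∀ i, (Nat.card (Hs i) : ℝ) ≤ (Fintype.card G : ℝ) ^ ((2 * (n : ℝ)) / 3)) →
            ∃ s ∈ S, ∀ i, s ∉ Hs i := by
  classical
  have hlog : 0 < Real.log 2 / 3 := div_pos (Real.log_pos one_lt_two) (by norm_num)
  have hev1 : ∀ᶠ x : ℝ in Filter.atTop, 4 ≤ x ^ (10 * c) :=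
    (tendsto_rpow_atTop (by positivity)).eventually_ge_atTop 4
  have hev2 : ∀ᶠ x : ℝ in Filter.atTop,
      ‖x ^ (10 * c)‖ ≤ 1/4 * ‖Real.exp (Real.log 2 / 3 * x)‖ :=
    (isLittleO_rpow_exp_pos_mul_atTop (10 * c) hlog).def (by norm_num)
  have hev3 : ∀ᶠ x : ℝ in Filter.atTop, 1 ≤ x := Filter.eventually_ge_atTop 1
  have hevn : ∀ᶠ n : ℕ in Filter.atTop,
      (4 ≤ (n:ℝ) ^ (10*c) ∧
        ‖(n:ℝ) ^ (10 * c)‖ ≤ 1/4 * ‖Real.exp (Real.log 2 / 3 * (n:ℝ))‖) ∧ 1 ≤ (n:ℝ) :=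
    tendsto_natCast_atTop_atTop.eventually ((hev1.and hev2).and hev3)
  obtain ⟨N, hN⟩ := Filter.eventually_atTop.mp hevn
  refine ⟨N, fun n hn S hS hsymm hbias m hm Hs hHs => ?_⟩
  obtain ⟨⟨hP4, hPq'⟩, hn1⟩ := hN n hn
  have hn0 : (0:ℝ) < (n:ℝ) := by linarith
  set P : ℝ := (n:ℝ) ^ (10 * c) with hPdef
  have hP0 : 0 < P := Real.rpow_pos_of_pos hn0 _
  set q : ℝ := (2:ℝ) ^ ((n:ℝ) / 3) with hqdef
  have hq0 : 0 < q := Real.rpow_pos_of_pos two_pos _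
  have hPq : P ≤ 1/4 * q := by
    have h1 : ‖P‖ = P := Real.norm_of_nonneg hP0.le
    have h2 : ‖Real.exp (Real.log 2 / 3 * (n:ℝ))‖ = q := by
      rw [Real.norm_of_nonneg (Real.exp_pos _).le, hqdef,
        Real.rpow_def_of_pos two_pos]
      ring_nf
    rw [h1, h2] at hPq'
    exact hPq'
  have h20 : (n:ℝ) ^ (20 * c) = P * P := by
    rw [hPdef, ← Real.rpow_add hn0]; ring_nf
  set Sc : ℝ := (S.card : ℝ) with hScdef
  have hSc0 : 0 < Sc := by
    have h : 0 < S.card := Multiset.card_pos.mpr hS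
    rw [hScdef]
    exact_mod_cast h
  set B : ℝ := Sc / ((n:ℝ) ^ (20 * c)) with hBdef
  have hB0 : 0 ≤ B := by positivity
  by_contra hcon
  push_neg at hcon
  -- each subgroup catches few elements
  have hQbig : ∀ i, q ≤ (Nat.card ((Fin n → G) ⧸ Hs i) : ℝ) := by
    intro i
    have hHpos : 0 < (Nat.card (Hs i) : ℝ) := by
      have : 0 < Nat.card (Hs i) := Nat.card_pos
      exact_mod_cast this
    have hcardA : (Nat.card (Fin n → G) : ℝ) = (Fintype.card G : ℝ) ^ ((n:ℝ)) := by
      rw [Nat.card_eq_fintype_card, Fintype.card_fun]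
      push_cast
      rw [Real.rpow_natCast, Fintype.card_fin]
    have hg2 : (2:ℝ) ≤ (Fintype.card G : ℝ) := by exact_mod_cast hG
    have hsplit : (Nat.card (Fin n → G) : ℝ)
        = (Nat.card ((Fin n → G) ⧸ Hs i) : ℝ) * (Nat.card (Hs i) : ℝ) := by
      have := Subgroup.card_eq_card_quotient_mul_card_subgroup (Hs i)
      exact_mod_cast this
    have hmul : q * (Nat.card (Hs i) : ℝ) ≤ (Nat.card (Fin n → G) : ℝ) := by
      have hq3 : q ≤ (Fintype.card G : ℝ) ^ ((n:ℝ)/3) :=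
        Real.rpow_le_rpow (by norm_num) hg2 (by positivity)
      have := mul_le_mul hq3 (hHs i) hHpos.le
        (Real.rpow_nonneg (by positivity) _)
      calc q * (Nat.card (Hs i) : ℝ)
          ≤ (Fintype.card G : ℝ) ^ ((n:ℝ)/3) * (Fintype.card G : ℝ) ^ ((2*(n:ℝ))/3) :=
            this
        _ = (Fintype.card G : ℝ) ^ ((n:ℝ)) := by
            rw [← Real.rpow_add (by linarith : (0:ℝ) < (Fintype.card G : ℝ))]
            ring_nf
        _ = (Nat.card (Fin n → G) : ℝ) := hcardA.symm
    rw [hsplit] at hmul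
    exact le_of_mul_le_mul_right hmul hHpos
  have hKi : ∀ i, ((S.filter (· ∈ Hs i)).card : ℝ) ≤ Sc / q + B := by
    intro i
    have hb := filter_card_bound' S (Hs i) B hB0 (fun χ h1 h2 => by
      rw [hBdef]; exact hbias χ h1 h2)
    set Qi : ℝ := (Nat.card ((Fin n → G) ⧸ Hs i) : ℝ) with hQidef
    have hQi0 : 0 < Qi := lt_of_lt_of_le hq0 (hQbig i)
    set K : ℝ := ((S.filter (· ∈ Hs i)).card : ℝ) with hKdef
    rcases le_or_gt K B with h | h
    · have : 0 ≤ Sc / q := by positivity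
      linarith
    · have h1 : (K - B) * Qi ≤ Sc := by nlinarith [hb]
      have h2 : (K - B) * q ≤ (K - B) * Qi :=
        mul_le_mul_of_nonneg_left (hQbig i) (by linarith)
      have h3 : K - B ≤ Sc / q := by
        rw [le_div_iff₀ hq0]; linarith
      linarith
  -- every element is somewhere
  have hcover : (S.card : ℝ) ≤ ∑ i, ((S.filter (· ∈ Hs i)).card : ℝ) := by
    have := card_le_sum_filter' S (fun i s => s ∈ Hs i) (fun s hs => hcon s hs)
    exact_mod_cast this
  have htot : Sc ≤ P * (Sc / q + B) := by
    have h1 : ∑ i, ((S.filter (· ∈ Hs i)).card : ℝ) ≤ ∑ _i : Fin m, (Sc / q + B) :=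
      Finset.sum_le_sum (fun i _ => hKi i)
    have h2 : ∑ _i : Fin m, (Sc / q + B) = (m : ℝ) * (Sc / q + B) := by
      rw [Finset.sum_const, Finset.card_univ, Fintype.card_fin, nsmul_eq_mul]
    have h3 : (m : ℝ) * (Sc / q + B) ≤ P * (Sc / q + B) := by
      apply mul_le_mul_of_nonneg_right hm
      positivity
    calc Sc ≤ ∑ i, ((S.filter (· ∈ Hs i)).card : ℝ) := hcover
      _ ≤ (m : ℝ) * (Sc / q + B) := by rw [← h2]; exact h1
      _ ≤ P * (Sc / q + B) := h3
  -- numeric contradiction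
  have e1 : P * (Sc / q + B) = Sc * (P / q) + Sc / P := by
    rw [hBdef, h20]
    field_simp
  have h1 : Sc * (P / q) ≤ Sc * (1/4) :=
    mul_le_mul_of_nonneg_left ((div_le_iff₀ hq0).mpr (by linarith)) hSc0.le
  have h2 : Sc / P ≤ Sc / 4 := by
    apply div_le_div_of_nonneg_left hSc0.le (by norm_num) hP4
  rw [e1] at htot
  linarith
end

section
/- For every fixed integer d ≥ 2 there is a constant C > 0 such that for every n ≥ 1 and every real ε with 0 < ε ≤ 1, there exists a nonempty finite multiset S of elements of (ZMod d)^n (the additive group of n-tuples of integers mod d) such that S is symmetric, S has cardinality (with multiplicity) at most C·(n/ε)², and S is ε-biased: for every nontrivial character χ of (ZMod d)^n, |∑_{s∈S} χ(s)| ≤ ε·|S|. -/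
open Finset


/-- An additive character maps sums to products. -/
lemma addChar_map_sum {ι A M : Type*} [AddCommMonoid A] [CommMonoid M]
    (χ : AddChar A M) (s : Finset ι) (f : ι → A) :
    χ (∑ i ∈ s, f i) = ∏ i ∈ s, χ (f i) := by
  classical
  induction s using Finset.cons_induction with
  | empty => simp
  | cons a s ha ih =>
    rw [Finset.sum_cons, Finset.prod_cons, AddChar.map_add_eq_mul, ih]

/-- Counting lemma: the number of functions `f : Fin k ⊕ Fin k → Fin m` all of whose
fibers have cardinality `≠ 1` is at most `k^(2k) * m^k`. -/
lemma card_good_le (k m : ℕ) (hk : 1 ≤ k) :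
    (((Finset.univ : Finset ((Fin k ⊕ Fin k) → Fin m)).filter
        (fun f => ∀ i, (Finset.univ.filter (fun j => f j = i)).card ≠ 1)).card : ℝ)
      ≤ (k : ℝ) ^ (2 * k) * (m : ℝ) ^ k := by
  classical
  set Good := (Finset.univ : Finset ((Fin k ⊕ Fin k) → Fin m)).filter
      (fun f => ∀ i, (Finset.univ.filter (fun j => f j = i)).card ≠ 1) with hGood
  have hsub : Good ⊆ Finset.univ.image
      (fun p : (((Fin k ⊕ Fin k) → Fin k) × (Fin k → Fin m)) => p.2 ∘ p.1) := by
    intro f hf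
    rw [hGood, Finset.mem_filter] at hf
    obtain ⟨-, hf⟩ := hf
    set s := Finset.univ.image f with hs
    have hcard : s.card ≤ k := by
      have h2 : ∀ i ∈ s, 2 ≤ (Finset.univ.filter (fun j => f j = i)).card := by
        intro i hi
        obtain ⟨j, -, hj⟩ := Finset.mem_image.mp hi
        have hpos : 0 < (Finset.univ.filter (fun j => f j = i)).card :=
          Finset.card_pos.mpr ⟨j, by simp [hj]⟩
        have := hf i
        omega
      have hsum : ∑ i ∈ s, (Finset.univ.filter (fun j => f j = i)).card
          = Fintype.card (Fin k ⊕ Fin k) := by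
        rw [← Finset.card_univ,
          Finset.card_eq_sum_card_fiberwise
            (fun j _ => Finset.mem_image_of_mem f (Finset.mem_univ j))]
      have h2k : 2 * s.card ≤ 2 * k := by
        calc 2 * s.card = ∑ _i ∈ s, 2 := by rw [Finset.sum_const, smul_eq_mul, mul_comm]
          _ ≤ ∑ i ∈ s, (Finset.univ.filter (fun j => f j = i)).card := Finset.sum_le_sum h2
          _ = Fintype.card (Fin k ⊕ Fin k) := hsum
          _ = 2 * k := by simp [two_mul]
      omega
    let u : {x // x ∈ s} → Fin k := fun y => Fin.castLE hcard (s.equivFin y)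
    have hu : Function.Injective u := fun y z h =>
      s.equivFin.injective (Fin.castLE_injective hcard h)
    let j₀ : Fin k ⊕ Fin k := Sum.inl ⟨0, hk⟩
    let ι : Fin k → Fin m := Function.extend u (fun y => (y : Fin m)) (fun _ => f j₀)
    refine Finset.mem_image.mpr
      ⟨(fun j => u ⟨f j, Finset.mem_image_of_mem f (Finset.mem_univ j)⟩, ι),
        Finset.mem_univ _, ?_⟩
    funext j
    simp only [Function.comp_apply]
    exact hu.extend_apply _ _ _
  calc (Good.card : ℝ)
      ≤ ((Finset.univ.image
          (fun p : (((Fin k ⊕ Fin k) → Fin k) × (Fin k → Fin m)) => p.2 ∘ p.1)).card : ℝ) := by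
        exact_mod_cast Finset.card_le_card hsub
    _ ≤ (Fintype.card ((((Fin k ⊕ Fin k) → Fin k) × (Fin k → Fin m))) : ℝ) := by
        exact_mod_cast (Finset.card_image_le).trans (le_of_eq (Finset.card_univ))
    _ = (k : ℝ) ^ (2 * k) * (m : ℝ) ^ k := by
        rw [Fintype.card_prod, Fintype.card_fun, Fintype.card_fun]
        push_cast
        simp [Fintype.card_sum, two_mul]

/-- Moment bound for sums of values of a balanced bounded function along a random tuple. -/
lemma moment_bound {A : Type*} [Fintype A] [DecidableEq A] (v : A → ℂ)
    (h1 : ∀ g, ‖v g‖ ≤ 1) (h0 : ∑ g, v g = 0) (k m : ℕ) (hk : 1 ≤ k) :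
    ∑ t : Fin m → A, (‖∑ i, v (t i)‖) ^ (2 * k)
      ≤ (k : ℝ) ^ (2 * k) * (m : ℝ) ^ k * (Fintype.card A : ℝ) ^ m := by
  classical
  set J := (Fin k ⊕ Fin k)
  set c : J → A → ℂ := Sum.elim (fun _ g => v g) (fun _ g => (starRingEnd ℂ) (v g)) with hc
  -- Step A: pointwise expansion
  have hA : ∀ t : Fin m → A,
      (((‖∑ i, v (t i)‖) ^ (2 * k) : ℝ) : ℂ)
        = ∑ f : J → Fin m, ∏ j, c j (t (f j)) := by
    intro t
    set Z := ∑ i, v (t i) with hZ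
    have e1 : ∑ f : J → Fin m, ∏ j, c j (t (f j))
        = ∑ p : (Fin k → Fin m) × (Fin k → Fin m),
            (∏ j, v (t (p.1 j))) * ∏ j, (starRingEnd ℂ) (v (t (p.2 j))) := by
      refine Fintype.sum_equiv (Equiv.sumArrowEquivProdArrow (Fin k) (Fin k) (Fin m)) _ _ ?_
      intro f
      rw [Fintype.prod_sum_type]
      rfl
    rw [e1, Fintype.sum_prod_type]
    dsimp only
    rw [← Finset.sum_mul_sum]
    rw [← Fintype.sum_pow (fun i : Fin m => v (t i)) k,
      ← Fintype.sum_pow (fun i : Fin m => (starRingEnd ℂ) (v (t i))) k,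
      ← map_sum, ← hZ, ← mul_pow, Complex.mul_conj, pow_mul, Complex.sq_norm]
    push_cast
    ring
  -- Step B: factorized inner sum
  have hB : ∀ f : J → Fin m,
      ∑ t : Fin m → A, ∏ j, c j (t (f j))
        = ∏ i : Fin m, ∑ g : A, ∏ j ∈ Finset.univ.filter (fun j => f j = i), c j g := by
    intro f
    have h1' : ∀ t : Fin m → A, ∏ j, c j (t (f j))
        = ∏ i : Fin m, ∏ j ∈ Finset.univ.filter (fun j => f j = i), c j (t i) := by
      intro t
      rw [← Finset.prod_fiberwise Finset.univ f (fun j => c j (t (f j)))]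
      exact Finset.prod_congr rfl fun i _ =>
        Finset.prod_congr rfl fun j hj => by rw [(Finset.mem_filter.1 hj).2]
    simp_rw [h1']
    exact (Fintype.prod_sum fun i g => ∏ j ∈ Finset.univ.filter (fun j => f j = i), c j g).symm
  -- Step C: bound each factorized term
  have hC : ∀ f : J → Fin m,
      ‖∏ i : Fin m, ∑ g : A, ∏ j ∈ Finset.univ.filter (fun j => f j = i), c j g‖
        ≤ if (∀ i, (Finset.univ.filter (fun j => f j = i)).card ≠ 1)
          then (Fintype.card A : ℝ) ^ m else 0 := by
    intro f
    split_ifs with hgood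
    · rw [norm_prod]
      calc ∏ i : Fin m, ‖∑ g : A, ∏ j ∈ Finset.univ.filter (fun j => f j = i), c j g‖
          ≤ ∏ _i : Fin m, (Fintype.card A : ℝ) := by
            refine Finset.prod_le_prod (fun _ _ => norm_nonneg _) (fun i _ => ?_)
            calc ‖∑ g : A, ∏ j ∈ Finset.univ.filter (fun j => f j = i), c j g‖
                ≤ ∑ g : A, ‖∏ j ∈ Finset.univ.filter (fun j => f j = i), c j g‖ :=
                  norm_sum_le _ _
              _ ≤ ∑ _g : A, 1 := by
                  refine Finset.sum_le_sum fun g _ => ?_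
                  rw [norm_prod]
                  refine Finset.prod_le_one (fun _ _ => norm_nonneg _)
                    (fun j _ => ?_)
                  rcases j with j | j
                  · simpa [hc] using h1 g
                  · simpa [hc] using h1 g
              _ = (Fintype.card A : ℝ) := by simp
        _ = (Fintype.card A : ℝ) ^ m := by simp
    · push_neg at hgood
      obtain ⟨i, hi⟩ := hgood
      obtain ⟨j₀, hj₀⟩ := Finset.card_eq_one.mp hi
      have hzero : ∑ g : A, ∏ j ∈ Finset.univ.filter (fun j => f j = i), c j g = 0 := by
        simp_rw [hj₀, Finset.prod_singleton]
        rcases j₀ with j | j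
        · simpa [hc] using h0
        · simp only [hc, Sum.elim_inr]
          rw [← map_sum, h0, map_zero]
      rw [Finset.prod_eq_zero (Finset.mem_univ i) hzero, norm_zero]
  -- Step D: combine
  have hnonneg : (0 : ℝ) ≤ ∑ t : Fin m → A, (‖∑ i, v (t i)‖) ^ (2 * k) :=
    Finset.sum_nonneg fun _ _ => by positivity
  calc ∑ t : Fin m → A, (‖∑ i, v (t i)‖) ^ (2 * k)
      = ‖(↑(∑ t : Fin m → A, (‖∑ i, v (t i)‖) ^ (2 * k)) : ℂ)‖ := by
        rw [Complex.norm_real, Real.norm_of_nonneg hnonneg]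
    _ = ‖∑ f : J → Fin m, ∑ t : Fin m → A, ∏ j, c j (t (f j))‖ := by
        rw [Complex.ofReal_sum]
        simp_rw [hA]
        rw [Finset.sum_comm]
    _ ≤ ∑ f : J → Fin m, ‖∑ t : Fin m → A, ∏ j, c j (t (f j))‖ :=
        norm_sum_le _ _
    _ ≤ ∑ f : J → Fin m, (if (∀ i, (Finset.univ.filter (fun j => f j = i)).card ≠ 1)
          then (Fintype.card A : ℝ) ^ m else 0) := by
        refine Finset.sum_le_sum fun f _ => ?_
        rw [hB f]
        exact hC f
    _ = (((Finset.univ : Finset (J → Fin m)).filter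
          (fun f => ∀ i, (Finset.univ.filter (fun j => f j = i)).card ≠ 1)).card : ℝ)
          * (Fintype.card A : ℝ) ^ m := by
        rw [Finset.sum_ite, Finset.sum_const_zero, add_zero, Finset.sum_const, nsmul_eq_mul]
    _ ≤ (k : ℝ) ^ (2 * k) * (m : ℝ) ^ k * (Fintype.card A : ℝ) ^ m := by
        refine mul_le_mul_of_nonneg_right (card_good_le k m hk) (by positivity)

/-- Union bound: a tuple simultaneously good for all the test functions exists. -/
lemma exists_seq {ι G : Type*} [Fintype ι] [Fintype G] [DecidableEq G]
    (v : ι → G → ℂ) (h1 : ∀ a g, ‖v a g‖ ≤ 1) (h0 : ∀ a, ∑ g, v a g = 0)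
    (k m : ℕ) (hk : 1 ≤ k) (ε : ℝ) (hεm : 0 < ε * m)
    (hlt : (Fintype.card ι : ℝ) * ((k : ℝ) ^ (2 * k) * (m : ℝ) ^ k * (Fintype.card G : ℝ) ^ m)
      < (ε * m) ^ (2 * k) * (Fintype.card G : ℝ) ^ m) :
    ∃ t : Fin m → G, ∀ a, ‖∑ i, v a (t i)‖ ≤ ε * m := by
  classical
  have hG : Nonempty G := by
    rcases isEmpty_or_nonempty G with hG | hG
    · exfalso
      have hm : m ≠ 0 := by
        rintro rfl
        simp at hεm
      have : (Fintype.card G : ℝ) ^ m = 0 := by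
        rw [Fintype.card_eq_zero, Nat.cast_zero, zero_pow hm]
      rw [this, mul_zero, mul_zero] at hlt
      have : (0:ℝ) ≤ (Fintype.card ι : ℝ) * 0 := by simp
      linarith
    · exact hG
  have key : ∑ t : Fin m → G, ∑ a, (‖∑ i, v a (t i)‖) ^ (2 * k)
      < ∑ _t : Fin m → G, (ε * m) ^ (2 * k) := by
    calc ∑ t : Fin m → G, ∑ a, (‖∑ i, v a (t i)‖) ^ (2 * k)
        = ∑ a, ∑ t : Fin m → G, (‖∑ i, v a (t i)‖) ^ (2 * k) := Finset.sum_comm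
      _ ≤ ∑ _a : ι, (k : ℝ) ^ (2 * k) * (m : ℝ) ^ k * (Fintype.card G : ℝ) ^ m :=
          Finset.sum_le_sum fun a _ => moment_bound (v a) (h1 a) (h0 a) k m hk
      _ = (Fintype.card ι : ℝ) * ((k : ℝ) ^ (2 * k) * (m : ℝ) ^ k * (Fintype.card G : ℝ) ^ m) := by
          simp [Finset.sum_const, nsmul_eq_mul, Finset.card_univ]
      _ < (ε * m) ^ (2 * k) * (Fintype.card G : ℝ) ^ m := hlt
      _ = ∑ _t : Fin m → G, (ε * m) ^ (2 * k) := by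
          rw [Finset.sum_const, nsmul_eq_mul, Finset.card_univ, Fintype.card_fun,
            Fintype.card_fin]
          push_cast
          ring
  obtain ⟨t, -, ht⟩ := Finset.exists_lt_of_sum_lt key
  refine ⟨t, fun a => ?_⟩
  have h2 : (‖∑ i, v a (t i)‖) ^ (2 * k) < (ε * m) ^ (2 * k) :=
    lt_of_le_of_lt
      (Finset.single_le_sum (f := fun a => (‖∑ i, v a (t i)‖) ^ (2 * k))
        (fun _ _ => by positivity) (Finset.mem_univ a)) ht
  exact (lt_of_pow_lt_pow_left₀ (2 * k) hεm.le h2).le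


lemma addChar_map_sum' {ι A M : Type*} [AddCommMonoid A] [CommMonoid M]
    (χ : AddChar A M) (s : Finset ι) (f : ι → A) :
    χ (∑ i ∈ s, f i) = ∏ i ∈ s, χ (f i) := by
  classical
  induction s using Finset.cons_induction with
  | empty => simp
  | cons a s ha ih => rw [Finset.sum_cons, Finset.prod_cons, AddChar.map_add_eq_mul, ih]

lemma zeta_pow_d (d : ℕ) [NeZero d] :
    (Complex.exp (2 * Real.pi * Complex.I / d)) ^ d = 1 :=
  (Complex.isPrimitiveRoot_exp d (NeZero.ne d)).pow_eq_one

lemma abs_zeta (d : ℕ) :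
    ‖Complex.exp (2 * Real.pi * Complex.I / d)‖ = 1 := by
  rw [show (2 * (Real.pi : ℂ) * Complex.I / (d : ℂ)) = ((2 * Real.pi / d : ℝ) : ℂ) * Complex.I
    by push_cast; ring]
  exact Complex.norm_exp_ofReal_mul_I _

noncomputable def innerHom (d n : ℕ) (a : Fin n → ZMod d) : (Fin n → ZMod d) →+ ZMod d :=
  AddMonoidHom.mk' (fun x => ∑ i, a i * x i)
    (by intro x y; simp [mul_add, Finset.sum_add_distrib])

noncomputable def phiChar (d n : ℕ) [NeZero d] (a : Fin n → ZMod d) :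
    AddChar (Fin n → ZMod d) ℂ :=
  (AddChar.zmodChar d (zeta_pow_d d)).compAddMonoidHom (innerHom d n a)

lemma phiChar_apply (d n : ℕ) [NeZero d] (a x : Fin n → ZMod d) :
    phiChar d n a x = (Complex.exp (2 * Real.pi * Complex.I / d)) ^ (∑ i, a i * x i).val :=
  rfl

lemma phiChar_abs (d n : ℕ) [NeZero d] (a x : Fin n → ZMod d) :
    ‖phiChar d n a x‖ = 1 := by
  rw [phiChar_apply, norm_pow, abs_zeta, one_pow]

lemma phiChar_sum_zero (d n : ℕ) [NeZero d] {a : Fin n → ZMod d} (ha : a ≠ 0) :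
    ∑ x, phiChar d n a x = 0 := by
  classical
  refine AddChar.sum_eq_zero_iff_ne_zero.mpr (AddChar.ne_zero_iff.mpr ?_)
  obtain ⟨i, hi⟩ := Function.ne_iff.mp ha
  refine ⟨Pi.single i 1, ?_⟩
  have hsum : ∑ j, a j * (Pi.single i 1 : Fin n → ZMod d) j = a i := by
    rw [Finset.sum_eq_single i
      (fun j _ hj => by rw [Pi.single_eq_of_ne hj, mul_zero])
      (fun h => absurd (Finset.mem_univ i) h)]
    rw [Pi.single_eq_same, mul_one]
  rw [phiChar_apply, hsum]
  have hζ := Complex.isPrimitiveRoot_exp d (NeZero.ne d)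
  refine hζ.pow_ne_one_of_pos_of_lt ?_ (ZMod.val_lt _)
  have : (a i).val ≠ 0 := fun h => hi ((ZMod.val_eq_zero _).mp h)
  omega

lemma char_eq_phi (d n : ℕ) [NeZero d] (χ : AddChar (Fin n → ZMod d) ℂ) :
    ∃ a : Fin n → ZMod d, ∀ x, χ x = phiChar d n a x := by
  classical
  have hζ := Complex.isPrimitiveRoot_exp d (NeZero.ne d)
  set ζ := Complex.exp (2 * Real.pi * Complex.I / d) with hζdef
  have H : ∀ i : Fin n, ∃ c, c < d ∧ ζ ^ c = χ (Pi.single i 1) := by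
    intro i
    have hx : (χ (Pi.single i 1)) ^ d = 1 := by
      rw [← AddChar.map_nsmul_eq_pow]
      have h0 : d • (Pi.single i 1 : Fin n → ZMod d) = 0 := by
        rw [← Pi.single_smul, nsmul_eq_mul, mul_one, ZMod.natCast_self, Pi.single_zero]
      rw [h0, AddChar.map_zero_eq_one]
    obtain ⟨c, hc, hcc⟩ := hζ.eq_pow_of_pow_eq_one hx
    exact ⟨c, hc, hcc⟩
  choose b hb1 hb2 using H
  have hmod : ∀ p q : ℕ, ((p : ZMod d) = (q : ZMod d)) → ζ ^ p = ζ ^ q := by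
    intro p q h
    have h' : p % d = q % d := (ZMod.natCast_eq_natCast_iff p q d).mp h
    rw [pow_eq_pow_mod p hζ.pow_eq_one, pow_eq_pow_mod q hζ.pow_eq_one, h']
  refine ⟨fun i => ((b i : ℕ) : ZMod d), fun x => ?_⟩
  have hsingle : ∀ i : Fin n, χ (Pi.single i (x i)) = ζ ^ (b i * (x i).val) := by
    intro i
    have h1 : (Pi.single i (x i) : Fin n → ZMod d) = (x i).val • (Pi.single i 1 : Fin n → ZMod d) := by
      rw [← Pi.single_smul, nsmul_eq_mul, mul_one, ZMod.natCast_rightInverse (x i)]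
    rw [h1, AddChar.map_nsmul_eq_pow, ← hb2 i, ← pow_mul]
  calc χ x = χ (∑ i, Pi.single i (x i)) := by rw [Finset.univ_sum_single]
    _ = ∏ i, χ (Pi.single i (x i)) := addChar_map_sum' χ _ _
    _ = ∏ i, ζ ^ (b i * (x i).val) := by simp_rw [hsingle]
    _ = ζ ^ (∑ i, b i * (x i).val) := by
        rw [Finset.prod_pow_eq_pow_sum]
    _ = ζ ^ (∑ i, ((b i : ℕ) : ZMod d) * x i).val := by
        refine hmod _ _ ?_
        push_cast
        rw [ZMod.natCast_rightInverse (∑ i, ((b i : ℕ) : ZMod d) * x i)]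
        refine Finset.sum_congr rfl fun i _ => ?_
        rw [ZMod.natCast_rightInverse (x i)]
    _ = phiChar d n (fun i => ((b i : ℕ) : ZMod d)) x := (phiChar_apply d n _ x).symm

theorem small_bias_space_zmod
    (d : ℕ) (hd : 2 ≤ d) :
    ∃ C : ℝ, 0 < C ∧
      ∀ n : ℕ, 1 ≤ n → ∀ ε : ℝ, 0 < ε → ε ≤ 1 →
        ∃ S : Multiset (Fin n → ZMod d),
          S ≠ 0 ∧
          S.map (fun s => -s) = S ∧
          (S.card : ℝ) ≤ C * ((n : ℝ) / ε) ^ 2 ∧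
          (∀ χ : AddChar (Fin n → ZMod d) ℂ,
            (∀ x, ‖χ x‖ = 1) → (∃ x, χ x ≠ 1) →
            ‖(S.map (fun s => χ s)).sum‖ ≤ ε * (S.card : ℝ)) := by
  classical
  haveI : NeZero d := ⟨by omega⟩
  refine ⟨4 * d + 2, by positivity, ?_⟩
  intro n hn ε hε hε1
  have hdR : (2 : ℝ) ≤ d := by exact_mod_cast hd
  have hnR : (1 : ℝ) ≤ n := by exact_mod_cast hn
  have hε2 : ε ^ 2 ≤ 1 := by nlinarith
  set x : ℝ := 2 * d * n ^ 2 / ε ^ 2 with hx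
  have hx4 : (4 : ℝ) ≤ x := by
    rw [hx, le_div_iff₀ (by positivity)]
    nlinarith
  set m : ℕ := ⌈x⌉₊ with hm
  have hm_ge : x ≤ m := Nat.le_ceil x
  have hm1 : 1 ≤ m := by
    have : (0:ℝ) < x := by linarith
    exact Nat.one_le_iff_ne_zero.mpr (by positivity)
  have hmR : (1 : ℝ) ≤ m := by exact_mod_cast hm1
  have hm_le : (m : ℝ) ≤ x + 1 := (Nat.ceil_lt_add_one (by linarith)).le
  have hεm : 0 < ε * m := by
    have : (0:ℝ) < m := by linarith
    positivity
  have hq1 : (1:ℝ) ≤ (n:ℝ) / ε := by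
    rw [le_div_iff₀ hε]
    nlinarith
  have hq2 : (1:ℝ) ≤ ((n:ℝ) / ε) ^ 2 := by nlinarith
  have hq3 : (2:ℝ) * m ≤ 2 * x + 2 := by linarith
  have hq4 : 2 * x = 4 * (d:ℝ) * (((n:ℝ) / ε) ^ 2) := by
    rw [div_pow, hx]
    ring
  have hcardbound : 2 * (m:ℝ) ≤ (4 * (d:ℝ) + 2) * (((n:ℝ) / ε) ^ 2) := by nlinarith
  -- the family of nontrivial characters
  let ι := {a : Fin n → ZMod d // a ≠ 0}
  let v : ι → (Fin n → ZMod d) → ℂ := fun a g => phiChar d n a.1 g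
  have h1 : ∀ a g, ‖v a g‖ ≤ 1 := fun a g => (phiChar_abs d n a.1 g).le
  have h0 : ∀ a, ∑ g, v a g = 0 := fun a => phiChar_sum_zero d n a.2
  -- the counting inequality
  have hcardG : (Fintype.card (Fin n → ZMod d) : ℝ) = (d : ℝ) ^ n := by
    rw [Fintype.card_fun, ZMod.card, Fintype.card_fin]
    push_cast
    ring
  have hι : (Fintype.card ι : ℝ) ≤ (d : ℝ) ^ n := by
    rw [← hcardG]
    exact_mod_cast Fintype.card_subtype_le _
  have h2dn : 2 * (d:ℝ) * (n:ℝ) ^ 2 ≤ ε ^ 2 * m := by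
    have hxx : ε ^ 2 * x = 2 * d * n ^ 2 := by
      rw [hx]; field_simp
    nlinarith [mul_le_mul_of_nonneg_left hm_ge (sq_nonneg ε)]
  have core : (d : ℝ) ^ n * ((n : ℝ) ^ (2 * n) * (m : ℝ) ^ n) < (ε * m) ^ (2 * n) := by
    have e1 : (ε * (m:ℝ)) ^ (2 * n) = (ε ^ 2 * m) ^ n * (m : ℝ) ^ n := by
      rw [pow_mul, ← mul_pow]
      congr 1
      ring
    have e2 : (2 * (d:ℝ) * (n:ℝ) ^ 2) ^ n ≤ (ε ^ 2 * m) ^ n :=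
      pow_le_pow_left₀ (by positivity) h2dn n
    have e3 : (2 * (d:ℝ) * (n:ℝ) ^ 2) ^ n = 2 ^ n * ((d:ℝ) ^ n * (n:ℝ) ^ (2 * n)) := by
      rw [mul_pow, mul_pow, ← pow_mul]
      ring
    have e4 : (2:ℝ) ≤ 2 ^ n := le_self_pow₀ one_le_two (by omega)
    have hP : (0:ℝ) < (d : ℝ) ^ n * (n : ℝ) ^ (2 * n) := by
      have : (0:ℝ) < (n:ℝ) := by linarith
      positivity
    have hM : (0:ℝ) < (m : ℝ) ^ n := by positivity
    rw [e1]
    have e5 : 2 * ((d : ℝ) ^ n * (n:ℝ) ^ (2*n)) ≤ (ε ^ 2 * m) ^ n := by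
      calc 2 * ((d : ℝ) ^ n * (n:ℝ) ^ (2*n)) ≤ 2 ^ n * ((d : ℝ) ^ n * (n:ℝ) ^ (2*n)) :=
            mul_le_mul_of_nonneg_right e4 hP.le
        _ = (2 * (d:ℝ) * (n:ℝ) ^ 2) ^ n := e3.symm
        _ ≤ (ε ^ 2 * m) ^ n := e2
    calc (d : ℝ) ^ n * ((n : ℝ) ^ (2 * n) * (m : ℝ) ^ n)
        = ((d : ℝ) ^ n * (n : ℝ) ^ (2 * n)) * (m : ℝ) ^ n := by ring
      _ < (2 * ((d : ℝ) ^ n * (n : ℝ) ^ (2 * n))) * (m : ℝ) ^ n := by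
          refine mul_lt_mul_of_pos_right ?_ hM
          linarith
      _ ≤ (ε ^ 2 * m) ^ n * (m : ℝ) ^ n := mul_le_mul_of_nonneg_right e5 hM.le
  have hlt : (Fintype.card ι : ℝ)
        * ((n : ℝ) ^ (2 * n) * (m : ℝ) ^ n * (Fintype.card (Fin n → ZMod d) : ℝ) ^ m)
      < (ε * m) ^ (2 * n) * (Fintype.card (Fin n → ZMod d) : ℝ) ^ m := by
    have hcpos : (0:ℝ) < (Fintype.card (Fin n → ZMod d) : ℝ) ^ m := by
      rw [hcardG]
      positivity
    have h6 : (Fintype.card ι : ℝ) * ((n : ℝ) ^ (2 * n) * (m : ℝ) ^ n)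
        ≤ (d : ℝ) ^ n * ((n : ℝ) ^ (2 * n) * (m : ℝ) ^ n) := by
      refine mul_le_mul_of_nonneg_right hι (by positivity)
    calc (Fintype.card ι : ℝ)
          * ((n : ℝ) ^ (2 * n) * (m : ℝ) ^ n * (Fintype.card (Fin n → ZMod d) : ℝ) ^ m)
        = (Fintype.card ι : ℝ) * ((n : ℝ) ^ (2 * n) * (m : ℝ) ^ n)
            * (Fintype.card (Fin n → ZMod d) : ℝ) ^ m := by ring
      _ ≤ (d : ℝ) ^ n * ((n : ℝ) ^ (2 * n) * (m : ℝ) ^ n)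
            * (Fintype.card (Fin n → ZMod d) : ℝ) ^ m :=
          mul_le_mul_of_nonneg_right h6 hcpos.le
      _ < (ε * m) ^ (2 * n) * (Fintype.card (Fin n → ZMod d) : ℝ) ^ m :=
          mul_lt_mul_of_pos_right core hcpos
  obtain ⟨t, ht⟩ := exists_seq v h1 h0 n m hn ε hεm hlt
  -- build the multiset
  set T : Multiset (Fin n → ZMod d) := ((List.ofFn t : List (Fin n → ZMod d)) : Multiset (Fin n → ZMod d)) with hT
  set S : Multiset (Fin n → ZMod d) := T + T.map (fun s => -s) with hS
  have hcardT : T.card = m := by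
    rw [hT, Multiset.coe_card, List.length_ofFn]
  have hcardS : S.card = 2 * m := by
    rw [hS, Multiset.card_add, Multiset.card_map, hcardT]
    ring
  have hTsum : ∀ (w : (Fin n → ZMod d) → ℂ), (T.map w).sum = ∑ i, w (t i) := by
    intro w
    rw [hT, Multiset.map_coe, Multiset.sum_coe, List.map_ofFn, List.sum_ofFn]
    rfl
  refine ⟨S, ?_, ?_, ?_, ?_⟩
  · intro h
    have := hcardS
    rw [h] at this
    simp at this
    omega
  · rw [hS, Multiset.map_add, Multiset.map_map]
    have : ((fun s : Fin n → ZMod d => -s) ∘ fun s => -s) = id := by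
      funext s; simp
    rw [this, Multiset.map_id, add_comm]
  · rw [hcardS]
    push_cast
    linarith [hcardbound]
  · intro χ habs hnt
    obtain ⟨a, ha⟩ := char_eq_phi d n χ
    have ha0 : a ≠ 0 := by
      rintro rfl
      obtain ⟨x0, hx0⟩ := hnt
      apply hx0
      rw [ha x0, phiChar_apply]
      simp
    have hZ : ‖∑ i, χ (t i)‖ ≤ ε * m := by
      have := ht ⟨a, ha0⟩
      simp only [v] at this
      simpa only [← ha] using this
    have hconj : ∀ y, χ (-y) = (starRingEnd ℂ) (χ y) := by
      intro y
      have h' : χ y * χ (-y) = 1 := by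
        rw [← AddChar.map_add_eq_mul, add_neg_cancel, AddChar.map_zero_eq_one]
      rw [eq_inv_of_mul_eq_one_right h', Complex.inv_eq_conj (habs y)]
    have hsum : (S.map (fun s => χ s)).sum
        = (∑ i, χ (t i)) + (starRingEnd ℂ) (∑ i, χ (t i)) := by
      rw [hS, Multiset.map_add, Multiset.sum_add, Multiset.map_map]
      rw [hTsum, hTsum]
      congr 1
      rw [map_sum]
      refine Finset.sum_congr rfl fun i _ => ?_
      simp only [Function.comp_apply]
      exact hconj (t i)
    rw [hsum]
    calc ‖(∑ i, χ (t i)) + (starRingEnd ℂ) (∑ i, χ (t i))‖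
        ≤ ‖∑ i, χ (t i)‖ + ‖(starRingEnd ℂ) (∑ i, χ (t i))‖ :=
          norm_add_le _ _
      _ = 2 * ‖∑ i, χ (t i)‖ := by
          rw [Complex.norm_conj]; ring
      _ ≤ 2 * (ε * m) := by linarith
      _ = ε * (S.card : ℝ) := by
          rw [hcardS]; push_cast; ring
end

section
/- For every finite abelian group G with |G| ≥ 2 there is a constant C > 0 (depending only on G) such that for every n ≥ 1 and every real ε with 0 < ε ≤ 1, there exists a nonempty finite multiset S of elements of G^n such that S is symmetric, |S| ≤ C·(n/ε)², and S is ε-biased: for every nontrivial character χ of G^n, |∑_{s∈S} χ(s)| ≤ ε·|S|. -/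
open Finset

section SmallBiasAux

variable {A : Type*} [CommGroup A] [Fintype A]




lemma aux_abs_val_one (χ : A →* ℂˣ) (g : A) : ‖(χ g : ℂ)‖ = 1 := by
  have h : ((χ g : ℂ)) ^ (Fintype.card A) = 1 := by
    rw [← Units.val_pow_eq_pow_val, ← map_pow, pow_card_eq_one, map_one, Units.val_one]
  have h2 : ‖(χ g : ℂ)‖ ^ (Fintype.card A) = 1 := by
    rw [← norm_pow, h, norm_one]
  have hc : Fintype.card A ≠ 0 := Fintype.card_ne_zero
  rcases lt_trichotomy (‖(χ g : ℂ)‖) 1 with hlt | heq | hgt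
  · exfalso
    have := pow_lt_one₀ (norm_nonneg _) hlt hc
    rw [h2] at this; exact lt_irrefl 1 this
  · exact heq
  · exfalso
    have := one_lt_pow₀ hgt hc
    rw [h2] at this; exact lt_irrefl 1 this

lemma aux_sum_hom_eq_zero (ψ : A →* ℂˣ) (h : ψ ≠ 1) : ∑ g : A, (ψ g : ℂ) = 0 := by
  obtain ⟨a, ha⟩ : ∃ a, ψ a ≠ 1 := by
    by_contra hc; push_neg at hc; exact h (MonoidHom.ext fun x => by simp [hc x])
  have htr : ∑ g : A, (ψ (a * g) : ℂ) = ∑ g : A, (ψ g : ℂ) :=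
    Fintype.sum_bijective (a * ·) (Group.mulLeft_bijective a) _ _ (fun x => rfl)
  have key : ((ψ a : ℂ)) * ∑ g : A, (ψ g : ℂ) = ∑ g : A, (ψ g : ℂ) := by
    rw [Finset.mul_sum]
    rw [← htr]
    exact Finset.sum_congr rfl (fun x _ => by rw [map_mul, Units.val_mul])
  have ha' : (ψ a : ℂ) ≠ 1 := fun hh => ha (Units.ext (by simpa using hh))
  have hz : ((ψ a : ℂ) - 1) * ∑ g : A, (ψ g : ℂ) = 0 := by linear_combination key
  rcases mul_eq_zero.mp hz with h1 | h2
  · exact absurd (sub_eq_zero.mp h1) ha'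
  · exact h2

lemma aux_prod_comp_univ {M : Type*} [CommMonoid M] {k m : ℕ} (F : Fin k → Fin m)
    (h : Fin m → M) :
    ∏ a : Fin k, h (F a) = ∏ i : Fin m, h i ^ (univ.filter fun a => F a = i).card := by
  classical
  rw [← Finset.prod_fiberwise_of_maps_to (g := F) (t := univ) (fun x _ => mem_univ _)]
  refine Finset.prod_congr rfl (fun i _ => ?_)
  rw [← Finset.prod_const]
  exact Finset.prod_congr rfl (fun a haa => by rw [(mem_filter.mp haa).2])



lemma aux_card_good_le {k m : ℕ} (hk : 1 ≤ k) :
    ((univ : Finset ((Fin k → Fin m) × (Fin k → Fin m))).filter fun p =>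
        ∀ i : Fin m, ((univ.filter fun a => p.1 a = i).card
          + (univ.filter fun a => p.2 a = i).card) ≠ 1).card
      ≤ k ^ (2 * k) * m ^ k := by
  classical
  set Φ : ((Fin k → Fin k) × (Fin k → Fin k) × (Fin k → Fin m))
      → ((Fin k → Fin m) × (Fin k → Fin m)) :=
    fun q => (q.2.2 ∘ q.1, q.2.2 ∘ q.2.1) with hΦ
  have hsub : ((univ : Finset ((Fin k → Fin m) × (Fin k → Fin m))).filter fun p =>
        ∀ i : Fin m, ((univ.filter fun a => p.1 a = i).card
          + (univ.filter fun a => p.2 a = i).card) ≠ 1)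
      ⊆ Finset.image Φ univ := by
    intro p hp
    rw [mem_filter] at hp
    obtain ⟨-, hp⟩ := hp
    -- combined image
    set s : Finset (Fin m) := (univ.image p.1) ∪ (univ.image p.2) with hs
    have hcnt1 : ∀ i ∉ univ.image p.1, (univ.filter fun a => p.1 a = i).card = 0 := by
      intro i hi
      rw [Finset.card_eq_zero, Finset.filter_eq_empty_iff]
      intro a _ hai
      exact hi (Finset.mem_image.mpr ⟨a, mem_univ a, hai⟩)
    have hcnt2 : ∀ i ∉ univ.image p.2, (univ.filter fun a => p.2 a = i).card = 0 := by
      intro i hi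
      rw [Finset.card_eq_zero, Finset.filter_eq_empty_iff]
      intro a _ hai
      exact hi (Finset.mem_image.mpr ⟨a, mem_univ a, hai⟩)
    have hsum : ∑ i ∈ s, (((univ.filter fun a => p.1 a = i).card : ℕ)
        + (univ.filter fun a => p.2 a = i).card) = 2 * k := by
      have h1 : ∑ i ∈ s, ((univ.filter fun a => p.1 a = i).card : ℕ)
          = ∑ i : Fin m, (univ.filter fun a => p.1 a = i).card := by
        refine Finset.sum_subset (Finset.subset_univ s) (fun i _ hi => ?_)
        exact hcnt1 i (fun hmem => hi (Finset.mem_union_left _ hmem))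
      have h2 : ∑ i ∈ s, ((univ.filter fun a => p.2 a = i).card : ℕ)
          = ∑ i : Fin m, (univ.filter fun a => p.2 a = i).card := by
        refine Finset.sum_subset (Finset.subset_univ s) (fun i _ hi => ?_)
        exact hcnt2 i (fun hmem => hi (Finset.mem_union_right _ hmem))
      have h3 : ∑ i : Fin m, (univ.filter fun a => p.1 a = i).card = k := by
        rw [← Finset.card_eq_sum_card_fiberwise (fun x _ => mem_univ (p.1 x))]
        simp
      have h4 : ∑ i : Fin m, (univ.filter fun a => p.2 a = i).card = k := by
        rw [← Finset.card_eq_sum_card_fiberwise (fun x _ => mem_univ (p.2 x))]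
        simp
      rw [Finset.sum_add_distrib, h1, h2, h3, h4]; ring
    have hscard : s.card ≤ k := by
      have hterm : ∀ i ∈ s, 2 ≤ ((univ.filter fun a => p.1 a = i).card
          + (univ.filter fun a => p.2 a = i).card) := by
        intro i hi
        have hpos : 1 ≤ ((univ.filter fun a => p.1 a = i).card
            + (univ.filter fun a => p.2 a = i).card) := by
          rcases Finset.mem_union.mp hi with hi1 | hi1
          · obtain ⟨a, -, ha⟩ := Finset.mem_image.mp hi1
            have : a ∈ univ.filter fun a => p.1 a = i := by
              simp [ha]
            have := Finset.card_pos.mpr ⟨a, this⟩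
            omega
          · obtain ⟨a, -, ha⟩ := Finset.mem_image.mp hi1
            have : a ∈ univ.filter fun a => p.2 a = i := by
              simp [ha]
            have := Finset.card_pos.mpr ⟨a, this⟩
            omega
        have := hp i
        omega
      have : 2 * s.card ≤ ∑ i ∈ s, (((univ.filter fun a => p.1 a = i).card : ℕ)
          + (univ.filter fun a => p.2 a = i).card) := by
        calc 2 * s.card = ∑ _i ∈ s, 2 := by rw [Finset.sum_const]; ring
        _ ≤ _ := Finset.sum_le_sum hterm
      omega
    -- nonempty s
    have hne : Nonempty {x // x ∈ s} := by
      refine ⟨⟨p.1 ⟨0, hk⟩, ?_⟩⟩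
      exact Finset.mem_union_left _ (Finset.mem_image_of_mem _ (mem_univ _))
    -- embedding
    obtain ⟨ι⟩ : Nonempty ({x // x ∈ s} ↪ Fin k) := by
      apply Function.Embedding.nonempty_of_card_le
      simpa using hscard
    set h : Fin k → Fin m := fun j => ((Function.invFun ι j : {x // x ∈ s}) : Fin m) with hh
    have hinv : ∀ x : {x // x ∈ s}, h (ι x) = x := by
      intro x
      show ((Function.invFun ι (ι x) : {x // x ∈ s}) : Fin m) = x
      rw [Function.leftInverse_invFun ι.injective x]
    refine Finset.mem_image.mpr ⟨⟨fun a => ι ⟨p.1 a,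
        Finset.mem_union_left _ (Finset.mem_image_of_mem _ (mem_univ a))⟩,
        fun a => ι ⟨p.2 a,
        Finset.mem_union_right _ (Finset.mem_image_of_mem _ (mem_univ a))⟩, h⟩,
        mem_univ _, ?_⟩
    rw [hΦ]
    ext a
    · simp only [Function.comp_apply]
      rw [hinv]
    · simp only [Function.comp_apply]
      rw [hinv]
  calc _ ≤ (Finset.image Φ univ).card := Finset.card_le_card hsub
  _ ≤ (univ : Finset ((Fin k → Fin k) × (Fin k → Fin k) × (Fin k → Fin m))).card :=
      Finset.card_image_le
  _ = k ^ (2 * k) * m ^ k := by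
      simp [Fintype.card_fun]
      ring

lemma aux_moment (χ : A →* ℂˣ) (hχ : χ ≠ 1) {m k : ℕ} (hk : 1 ≤ k) :
    ∑ f : Fin m → A, (‖∑ i, (χ (f i) : ℂ)‖) ^ (2 * k)
      ≤ (k : ℝ) ^ (2 * k) * (m : ℝ) ^ k * (Fintype.card A : ℝ) ^ m := by
  classical
  set z : (Fin m → A) → ℂ := fun f => ∑ i, (χ (f i) : ℂ) with hzdef
  set y : (Fin m → A) → ℂ := fun f => ∑ i, (χ (f i) : ℂ)⁻¹ with hydef
  -- pointwise identity
  have hpt : ∀ f, ((‖z f‖) ^ (2 * k) : ℂ) = z f ^ k * y f ^ k := by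
    intro f
    have hy : y f = starRingEnd ℂ (z f) := by
      rw [hydef, hzdef]
      simp only [map_sum]
      refine Finset.sum_congr rfl (fun i _ => ?_)
      rw [← Complex.inv_eq_conj (aux_abs_val_one χ (f i))]
    rw [hy, ← mul_pow, Complex.mul_conj, ← Complex.sq_norm]
    push_cast
    ring
  -- reduce to complex abs
  have hnn : 0 ≤ ∑ f : Fin m → A, (‖z f‖) ^ (2 * k) :=
    Finset.sum_nonneg fun f _ => pow_nonneg (norm_nonneg _) _
  have hcast : ((∑ f : Fin m → A, (‖z f‖) ^ (2 * k) : ℝ) : ℂ)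
      = ∑ f : Fin m → A, z f ^ k * y f ^ k := by
    push_cast
    exact Finset.sum_congr rfl (fun f _ => hpt f)
  have hstep : ∑ f : Fin m → A, (‖z f‖) ^ (2 * k)
      = ‖∑ f : Fin m → A, z f ^ k * y f ^ k‖ := by
    rw [← hcast, Complex.norm_real, Real.norm_of_nonneg hnn]
  rw [hstep]
  -- expand powers
  have hz : ∀ f, z f ^ k = ∑ F : Fin k → Fin m, ∏ a, (χ (f (F a)) : ℂ) := by
    intro f
    calc z f ^ k = ∏ _a : Fin k, z f := by
          rw [Finset.prod_const, Finset.card_univ, Fintype.card_fin]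
    _ = ∑ F ∈ Fintype.piFinset (fun _ : Fin k => (univ : Finset (Fin m))),
          ∏ a, (χ (f (F a)) : ℂ) := by
          rw [Finset.prod_univ_sum]
    _ = _ := by rw [Fintype.piFinset_univ]
  have hy : ∀ f, y f ^ k = ∑ K : Fin k → Fin m, ∏ b, (χ (f (K b)) : ℂ)⁻¹ := by
    intro f
    calc y f ^ k = ∏ _a : Fin k, y f := by
          rw [Finset.prod_const, Finset.card_univ, Fintype.card_fin]
    _ = ∑ K ∈ Fintype.piFinset (fun _ : Fin k => (univ : Finset (Fin m))),
          ∏ b, (χ (f (K b)) : ℂ)⁻¹ := by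
          rw [Finset.prod_univ_sum]
    _ = _ := by rw [Fintype.piFinset_univ]
  have hexp : ∑ f : Fin m → A, z f ^ k * y f ^ k
      = ∑ p : (Fin k → Fin m) × (Fin k → Fin m), ∑ f : Fin m → A,
          (∏ a, (χ (f (p.1 a)) : ℂ)) * (∏ b, (χ (f (p.2 b)) : ℂ)⁻¹) := by
    rw [Finset.sum_comm]
    refine Finset.sum_congr rfl (fun f _ => ?_)
    rw [hz f, hy f, Finset.sum_mul_sum, ← Finset.sum_product']
    rfl
  rw [hexp]
  -- inner term factorization
  set cnt : (Fin k → Fin m) → Fin m → ℕ :=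
    fun F i => (univ.filter fun a => F a = i).card with hcnt
  have hfact : ∀ p : (Fin k → Fin m) × (Fin k → Fin m),
      (∑ f : Fin m → A, (∏ a, (χ (f (p.1 a)) : ℂ)) * (∏ b, (χ (f (p.2 b)) : ℂ)⁻¹))
      = ∏ i : Fin m, ∑ g : A, (χ g : ℂ) ^ (cnt p.1 i) * ((χ g : ℂ)⁻¹) ^ (cnt p.2 i) := by
    intro p
    have h1 : ∀ f : Fin m → A,
        (∏ a, (χ (f (p.1 a)) : ℂ)) * (∏ b, (χ (f (p.2 b)) : ℂ)⁻¹)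
        = ∏ i : Fin m, (χ (f i) : ℂ) ^ (cnt p.1 i) * ((χ (f i) : ℂ)⁻¹) ^ (cnt p.2 i) := by
      intro f
      rw [aux_prod_comp_univ p.1 (fun i => (χ (f i) : ℂ)),
        aux_prod_comp_univ p.2 (fun i => (χ (f i) : ℂ)⁻¹), ← Finset.prod_mul_distrib]
    rw [Finset.sum_congr rfl (fun f _ => h1 f)]
    rw [Finset.prod_univ_sum]
    rw [Fintype.piFinset_univ]
  rw [Finset.sum_congr rfl (fun p _ => hfact p)]
  -- bound
  set good : Finset ((Fin k → Fin m) × (Fin k → Fin m)) :=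
    univ.filter (fun p => ∀ i : Fin m, cnt p.1 i + cnt p.2 i ≠ 1) with hgood
  have hzero : ∀ p ∉ good,
      (∏ i : Fin m, ∑ g : A, (χ g : ℂ) ^ (cnt p.1 i) * ((χ g : ℂ)⁻¹) ^ (cnt p.2 i)) = 0 := by
    intro p hp
    rw [hgood, Finset.mem_filter] at hp
    push_neg at hp
    obtain ⟨i, hi⟩ := hp (mem_univ p)
    refine Finset.prod_eq_zero (mem_univ i) ?_
    obtain ⟨h1, h2⟩ | ⟨h1, h2⟩ :
        cnt p.1 i = 1 ∧ cnt p.2 i = 0 ∨ cnt p.1 i = 0 ∧ cnt p.2 i = 1 := by omega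
    · rw [h1, h2]
      simp only [pow_one, pow_zero, mul_one]
      exact aux_sum_hom_eq_zero χ hχ
    · rw [h1, h2]
      simp only [pow_one, pow_zero, one_mul]
      have : ∑ g : A, (χ g : ℂ)⁻¹ = ∑ g : A, ((χ⁻¹ : A →* ℂˣ) g : ℂ) := by
        refine Finset.sum_congr rfl (fun g _ => ?_)
        rw [MonoidHom.inv_apply, ← Units.val_inv_eq_inv_val]
      rw [this]
      exact aux_sum_hom_eq_zero (χ⁻¹) (fun h => hχ ((_root_.inv_eq_one (a := χ)).mp h))
  -- abs bound per term
  have habsE : ∀ p : (Fin k → Fin m) × (Fin k → Fin m),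
      ‖∏ i : Fin m, ∑ g : A, (χ g : ℂ) ^ (cnt p.1 i) * ((χ g : ℂ)⁻¹) ^ (cnt p.2 i)‖
      ≤ (Fintype.card A : ℝ) ^ m := by
    intro p
    rw [norm_prod]
    calc ∏ i : Fin m, ‖∑ g : A, (χ g : ℂ) ^ (cnt p.1 i) * ((χ g : ℂ)⁻¹) ^ (cnt p.2 i)‖
        ≤ ∏ _i : Fin m, (Fintype.card A : ℝ) := by
          refine Finset.prod_le_prod (fun i _ => norm_nonneg _) (fun i _ => ?_)
          calc ‖∑ g : A, (χ g : ℂ) ^ (cnt p.1 i) * ((χ g : ℂ)⁻¹) ^ (cnt p.2 i)‖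
              ≤ ∑ g : A, ‖(χ g : ℂ) ^ (cnt p.1 i) * ((χ g : ℂ)⁻¹) ^ (cnt p.2 i)‖ :=
              norm_sum_le _ _
          _ = ∑ _g : A, (1 : ℝ) := by
              refine Finset.sum_congr rfl (fun g _ => ?_)
              rw [norm_mul, norm_pow, norm_pow, norm_inv, aux_abs_val_one]
              simp
          _ = (Fintype.card A : ℝ) := by simp
    _ = (Fintype.card A : ℝ) ^ m := by simp
  -- split sum over good
  have hsplit : (∑ p : (Fin k → Fin m) × (Fin k → Fin m),
      ∏ i : Fin m, ∑ g : A, (χ g : ℂ) ^ (cnt p.1 i) * ((χ g : ℂ)⁻¹) ^ (cnt p.2 i))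
      = ∑ p ∈ good, ∏ i : Fin m, ∑ g : A, (χ g : ℂ) ^ (cnt p.1 i) * ((χ g : ℂ)⁻¹) ^ (cnt p.2 i) := by
    symm
    refine Finset.sum_subset (Finset.subset_univ good) (fun p _ hp => hzero p hp)
  rw [hsplit]
  calc ‖∑ p ∈ good, ∏ i : Fin m, ∑ g : A,
          (χ g : ℂ) ^ (cnt p.1 i) * ((χ g : ℂ)⁻¹) ^ (cnt p.2 i)‖
      ≤ ∑ p ∈ good, ‖∏ i : Fin m, ∑ g : A,
          (χ g : ℂ) ^ (cnt p.1 i) * ((χ g : ℂ)⁻¹) ^ (cnt p.2 i)‖ :=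
        norm_sum_le _ _
  _ ≤ ∑ _p ∈ good, (Fintype.card A : ℝ) ^ m :=
        Finset.sum_le_sum (fun p _ => habsE p)
  _ = (good.card : ℝ) * (Fintype.card A : ℝ) ^ m := by
        rw [Finset.sum_const, nsmul_eq_mul]
  _ ≤ ((k : ℝ) ^ (2 * k) * (m : ℝ) ^ k) * (Fintype.card A : ℝ) ^ m := by
        have hcard : good.card ≤ k ^ (2 * k) * m ^ k := aux_card_good_le hk
        have : (good.card : ℝ) ≤ (k : ℝ) ^ (2 * k) * (m : ℝ) ^ k := by
          exact_mod_cast hcard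
        have hN : (0 : ℝ) ≤ (Fintype.card A : ℝ) ^ m := by positivity
        nlinarith
  _ = (k : ℝ) ^ (2 * k) * (m : ℝ) ^ k * (Fintype.card A : ℝ) ^ m := by ring

end SmallBiasAux

theorem small_bias_space_abelian_group
    (G : Type) [CommGroup G] [Fintype G] (hG : 2 ≤ Fintype.card G) :
    ∃ C : ℝ, 0 < C ∧
      ∀ n : ℕ, 1 ≤ n → ∀ ε : ℝ, 0 < ε → ε ≤ 1 →
        ∃ S : Multiset (Fin n → G),
          S ≠ 0 ∧
          S.map (fun s => s⁻¹) = S ∧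
          (S.card : ℝ) ≤ C * ((n : ℝ) / ε) ^ 2 ∧
          (∀ χ : (Fin n → G) →* ℂ,
            (∀ x, ‖χ x‖ = 1) → χ ≠ 1 →
            ‖(S.map (fun s => χ s)).sum‖ ≤ ε * (S.card : ℝ)) := by
  classical
  refine ⟨2 * ((Fintype.card G : ℝ) + 2), by positivity, ?_⟩
  intro n hn ε hε hε1
  set A := (Fin n → G) with hA
  -- duality
  haveI : NeZero ((Monoid.exponent A : ℂ)) := by
    refine ⟨?_⟩
    have h1 : Monoid.exponent A ≠ 0 := Monoid.exponent_ne_zero_of_finite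
    exact_mod_cast h1
  obtain ⟨e⟩ := CommGroup.monoidHom_mulEquiv_of_hasEnoughRootsOfUnity A ℂ
  haveI : Fintype (A →* ℂˣ) := Fintype.ofEquiv A e.symm.toEquiv
  have hcardhom : Fintype.card (A →* ℂˣ) = Fintype.card A := Fintype.card_congr e.toEquiv
  set N := Fintype.card A with hNdef
  have hNG : N = Fintype.card G ^ n := by
    show Fintype.card (Fin n → G) = _
    rw [Fintype.card_fun, Fintype.card_fin]
  set B : ℝ := (Fintype.card G : ℝ) + 1 with hB
  have hBpos : 0 < B := by positivity
  set m : ℕ := ⌈B * (n : ℝ) ^ 2 / ε ^ 2⌉₊ with hmdef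
  have hargpos : 0 < B * (n : ℝ) ^ 2 / ε ^ 2 := by
    have : (1 : ℝ) ≤ (n : ℝ) := by exact_mod_cast hn
    positivity
  have hm1 : 1 ≤ m := by
    rw [hmdef]
    exact Nat.one_le_iff_ne_zero.mpr (by positivity)
  have hmlb : B * (n : ℝ) ^ 2 / ε ^ 2 ≤ (m : ℝ) := Nat.le_ceil _
  have hmub : (m : ℝ) < B * (n : ℝ) ^ 2 / ε ^ 2 + 1 := Nat.ceil_lt_add_one hargpos.le
  have hmpos : (0 : ℝ) < m := by exact_mod_cast hm1
  -- the bad set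
  set bad : Finset (Fin m → A) := univ.filter (fun f => ∃ χ : A →* ℂˣ, χ ≠ 1 ∧
    ε * m < ‖∑ i, (χ (f i) : ℂ)‖) with hbad
  set X : Finset (A →* ℂˣ) := univ.filter (fun χ => χ ≠ 1) with hX
  have hXcard : X.card ≤ N := by
    calc X.card ≤ Fintype.card (A →* ℂˣ) := by
          rw [← Finset.card_univ]; exact Finset.card_filter_le _ _
    _ = N := hcardhom
  have hεm : (0 : ℝ) < ε * m := by positivity
  -- Markov for each χ
  have hMarkov : ∀ χ ∈ X,
      ((univ.filter fun f : Fin m → A => ε * m < ‖∑ i, (χ (f i) : ℂ)‖).card : ℝ)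
        * (ε * m) ^ (2 * n)
      ≤ (n : ℝ) ^ (2 * n) * (m : ℝ) ^ n * (N : ℝ) ^ m := by
    intro χ hχX
    have hχ : χ ≠ 1 := (Finset.mem_filter.mp hχX).2
    calc ((univ.filter fun f : Fin m → A =>
            ε * m < ‖∑ i, (χ (f i) : ℂ)‖).card : ℝ) * (ε * m) ^ (2 * n)
        = ∑ _f ∈ (univ.filter fun f : Fin m → A =>
            ε * m < ‖∑ i, (χ (f i) : ℂ)‖), (ε * m) ^ (2 * n) := by
          rw [Finset.sum_const, nsmul_eq_mul]
    _ ≤ ∑ f ∈ (univ.filter fun f : Fin m → A =>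
            ε * m < ‖∑ i, (χ (f i) : ℂ)‖),
            (‖∑ i, (χ (f i) : ℂ)‖) ^ (2 * n) := by
          refine Finset.sum_le_sum (fun f hf => ?_)
          have hlt := (Finset.mem_filter.mp hf).2
          exact pow_le_pow_left₀ hεm.le hlt.le _
    _ ≤ ∑ f : Fin m → A, (‖∑ i, (χ (f i) : ℂ)‖) ^ (2 * n) := by
          refine Finset.sum_le_sum_of_subset_of_nonneg (Finset.subset_univ _)
            (fun f _ _ => by positivity)
    _ ≤ (n : ℝ) ^ (2 * n) * (m : ℝ) ^ n * (N : ℝ) ^ m := aux_moment χ hχ hn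
  -- key numeric inequality
  have hkey : (N : ℝ) * ((n : ℝ) ^ (2 * n) * (m : ℝ) ^ n) < (ε * m) ^ (2 * n) := by
    have hε2m : B * (n : ℝ) ^ 2 ≤ ε ^ 2 * m := by
      rw [div_le_iff₀ (by positivity)] at hmlb
      linarith [hmlb]
    have hmm : (ε * m) ^ (2 * n) = (ε ^ 2 * m * m) ^ n := by
      rw [pow_mul]
      congr 1
      ring
    have hN' : (N : ℝ) = ((Fintype.card G : ℝ)) ^ n := by
      rw [hNG]; push_cast; ring
    have hchain : (N : ℝ) * ((n : ℝ) ^ (2 * n) * (m : ℝ) ^ n)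
        = ((Fintype.card G : ℝ) * (n : ℝ) ^ 2 * m) ^ n := by
      rw [hN', pow_mul, mul_pow, mul_pow]
      ring
    rw [hchain, hmm]
    have hstep1 : (Fintype.card G : ℝ) * (n : ℝ) ^ 2 * m < B * (n : ℝ) ^ 2 * m := by
      have h1 : (Fintype.card G : ℝ) < B := by rw [hB]; linarith
      have hn2 : (0 : ℝ) < (n : ℝ) ^ 2 := by
        have : (1 : ℝ) ≤ (n : ℝ) := by exact_mod_cast hn
        positivity
      exact mul_lt_mul_of_pos_right (mul_lt_mul_of_pos_right h1 hn2) hmpos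
    have hstep2 : B * (n : ℝ) ^ 2 * m ≤ ε ^ 2 * m * m := by
      exact mul_le_mul_of_nonneg_right hε2m (by positivity)
    have hpos : (0 : ℝ) ≤ (Fintype.card G : ℝ) * (n : ℝ) ^ 2 * m := by positivity
    exact pow_lt_pow_left₀ (lt_of_lt_of_le hstep1 hstep2) hpos (by omega)
  -- bad is small
  have hbadlt : bad.card < N ^ m := by
    have hsub : bad ⊆ X.biUnion (fun χ => univ.filter fun f : Fin m → A =>
        ε * m < ‖∑ i, (χ (f i) : ℂ)‖) := by
      intro f hf
      obtain ⟨χ, hχ, hlt⟩ := (Finset.mem_filter.mp hf).2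
      exact Finset.mem_biUnion.mpr ⟨χ, Finset.mem_filter.mpr ⟨mem_univ _, hχ⟩,
        Finset.mem_filter.mpr ⟨mem_univ _, hlt⟩⟩
    have h1 : (bad.card : ℝ) * (ε * m) ^ (2 * n)
        ≤ (N : ℝ) * ((n : ℝ) ^ (2 * n) * (m : ℝ) ^ n * (N : ℝ) ^ m) := by
      calc (bad.card : ℝ) * (ε * m) ^ (2 * n)
          ≤ ((X.biUnion (fun χ => univ.filter fun f : Fin m → A =>
              ε * m < ‖∑ i, (χ (f i) : ℂ)‖)).card : ℝ) * (ε * m) ^ (2 * n) := by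
            exact mul_le_mul_of_nonneg_right
              (Nat.cast_le.mpr (Finset.card_le_card hsub)) (by positivity)
      _ ≤ (∑ χ ∈ X, ((univ.filter fun f : Fin m → A =>
              ε * m < ‖∑ i, (χ (f i) : ℂ)‖).card : ℝ)) * (ε * m) ^ (2 * n) := by
            refine mul_le_mul_of_nonneg_right ?_ (by positivity)
            have := Finset.card_biUnion_le (s := X) (t := fun χ => univ.filter fun f : Fin m → A =>
              ε * m < ‖∑ i, (χ (f i) : ℂ)‖)
            exact_mod_cast this
      _ = ∑ χ ∈ X, ((univ.filter fun f : Fin m → A =>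
              ε * m < ‖∑ i, (χ (f i) : ℂ)‖).card : ℝ) * (ε * m) ^ (2 * n) := by
            rw [Finset.sum_mul]
      _ ≤ ∑ _χ ∈ X, (n : ℝ) ^ (2 * n) * (m : ℝ) ^ n * (N : ℝ) ^ m :=
            Finset.sum_le_sum hMarkov
      _ = (X.card : ℝ) * ((n : ℝ) ^ (2 * n) * (m : ℝ) ^ n * (N : ℝ) ^ m) := by
            rw [Finset.sum_const, nsmul_eq_mul]
      _ ≤ (N : ℝ) * ((n : ℝ) ^ (2 * n) * (m : ℝ) ^ n * (N : ℝ) ^ m) := by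
            exact mul_le_mul_of_nonneg_right (Nat.cast_le.mpr hXcard) (by positivity)
    have h2 : (bad.card : ℝ) * (ε * m) ^ (2 * n) < (ε * m) ^ (2 * n) * ((N:ℝ) ^ m) := by
      calc (bad.card : ℝ) * (ε * m) ^ (2 * n)
          ≤ (N : ℝ) * ((n : ℝ) ^ (2 * n) * (m : ℝ) ^ n * (N : ℝ) ^ m) := h1
      _ = ((N : ℝ) * ((n : ℝ) ^ (2 * n) * (m : ℝ) ^ n)) * (N : ℝ) ^ m := by ring
      _ < (ε * m) ^ (2 * n) * ((N:ℝ) ^ m) := by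
            have hNm : (0:ℝ) < (N : ℝ) ^ m := by
              have h0 : 0 < N := Fintype.card_pos
              positivity
            exact mul_lt_mul_of_pos_right hkey hNm
    have h3 : (bad.card : ℝ) < (N:ℝ) ^ m := by
      have hp : (0:ℝ) < (ε * m) ^ (2 * n) := by positivity
      rw [mul_comm ((ε * (m:ℝ)) ^ (2 * n))] at h2
      exact (mul_lt_mul_iff_of_pos_right hp).mp h2
    exact_mod_cast h3
  -- pick a good f
  have hcardfun : Fintype.card (Fin m → A) = N ^ m := by
    rw [Fintype.card_fun, Fintype.card_fin]
  have hbne : bad ≠ univ := by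
    intro h
    rw [h, Finset.card_univ, hcardfun] at hbadlt
    exact lt_irrefl _ hbadlt
  obtain ⟨f, -, hfgood⟩ := Finset.exists_of_ssubset
    (Finset.ssubset_univ_iff.mpr hbne)
  have hf : ∀ χ : A →* ℂˣ, χ ≠ 1 → ‖∑ i, (χ (f i) : ℂ)‖ ≤ ε * m := by
    intro χ hχ
    by_contra hcon
    push_neg at hcon
    exact hfgood (Finset.mem_filter.mpr ⟨mem_univ _, χ, hχ, hcon⟩)
  -- build the multiset
  set S0 : Multiset A := Multiset.map f Finset.univ.val with hS0
  set S : Multiset A := S0 + S0.map (fun s => s⁻¹) with hSdef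
  have hS0card : S0.card = m := by
    rw [hS0, Multiset.card_map]
    exact Finset.card_univ.trans (Fintype.card_fin m)
  have hScard : S.card = 2 * m := by
    have h1 : S.card = S0.card + (S0.map (fun s : A => s⁻¹)).card := by
      rw [hSdef, Multiset.card_add]
    have h2 : (S0.map (fun s : A => s⁻¹)).card = S0.card := Multiset.card_map _ _
    rw [h1, h2, hS0card]
    ring
  have hS0sum : ∀ φ : A → ℂ, (S0.map φ).sum = ∑ i : Fin m, φ (f i) := by
    intro φ
    rw [hS0, Multiset.map_map]
    rfl
  refine ⟨S, ?_, ?_, ?_, ?_⟩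
  · -- nonzero
    intro h
    have := hScard
    rw [h, Multiset.card_zero] at this
    omega
  · -- symmetric
    show (Multiset.map f Finset.univ.val
        + (Multiset.map f Finset.univ.val).map (fun s : A => s⁻¹)).map (fun s : A => s⁻¹)
      = Multiset.map f Finset.univ.val
        + (Multiset.map f Finset.univ.val).map (fun s : A => s⁻¹)
    rw [Multiset.map_add, add_comm]
    congr 1
    simp only [Multiset.map_map, Function.comp_def, _root_.inv_inv]
    exact congrArg (Multiset.map · univ.val) (funext fun x => _root_.inv_inv (f x))
  · -- cardinality
    rw [hScard]
    push_cast
    have h1 : (1 : ℝ) ≤ (n : ℝ) ^ 2 / ε ^ 2 := by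
      have hn1 : (1 : ℝ) ≤ (n : ℝ) := by exact_mod_cast hn
      rw [le_div_iff₀ (by positivity)]
      nlinarith
    have h2 : (m : ℝ) ≤ (B + 1) * ((n:ℝ)^2 / ε^2) := by
      calc (m : ℝ) ≤ B * ((n:ℝ)^2 / ε^2) + 1 := by
            rw [← mul_div_assoc]; exact hmub.le
      _ ≤ B * ((n:ℝ)^2/ε^2) + (n:ℝ)^2/ε^2 := by linarith
      _ = (B + 1) * ((n:ℝ)^2 / ε^2) := by ring
    have h3 : ((n:ℝ)/ε)^2 = (n:ℝ)^2/ε^2 := by rw [div_pow]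
    rw [h3]
    calc (2 : ℝ) * m ≤ 2 * ((B+1) * ((n:ℝ)^2/ε^2)) := by linarith
    _ = 2 * ((Fintype.card G : ℝ) + 2) * ((n:ℝ)^2/ε^2) := by rw [hB]; ring
  · -- bias
    intro χ habs hne
    set u : A →* ℂˣ := χ.toHomUnits with hu
    have hcoe : ∀ x : A, (u x : ℂ) = χ x := fun x => rfl
    have hune : u ≠ 1 := by
      intro h
      apply hne
      refine MonoidHom.ext fun x => ?_
      have hx : (u x : ℂ) = ((1 : A →* ℂˣ) x : ℂ) := by rw [h]
      rw [hcoe] at hx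
      simpa using hx
    have hzbound : ‖∑ i, χ (f i)‖ ≤ ε * m := by
      have := hf u hune
      simpa only [hcoe] using this
    have hinv : ∀ x : A, χ x⁻¹ = starRingEnd ℂ (χ x) := by
      intro x
      have h1 : χ x⁻¹ * χ x = 1 := by
        rw [← map_mul, inv_mul_cancel, map_one]
      have h2 : χ x⁻¹ = (χ x)⁻¹ := eq_inv_of_mul_eq_one_left h1
      rw [h2, Complex.inv_eq_conj (habs x)]
    have hsum : (S.map (fun s => χ s)).sum
        = (∑ i, χ (f i)) + starRingEnd ℂ (∑ i, χ (f i)) := by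
      have hmap : (S.map (fun s => χ s)).sum
          = (∑ i, χ (f i)) + (∑ i, χ ((f i)⁻¹)) := by
        show ((S0 + S0.map (fun s : A => s⁻¹)).map (fun s => χ s)).sum = _
        rw [Multiset.map_add, Multiset.sum_add]
        congr 1
        · exact hS0sum (fun s => χ s)
        · rw [Multiset.map_map]
          exact hS0sum ((fun s => χ s) ∘ fun s : A => s⁻¹)
      rw [hmap]
      congr 1
      rw [map_sum]
      refine Finset.sum_congr rfl (fun i _ => ?_)
      exact hinv (f i)
    rw [hsum, hScard]
    calc ‖(∑ i, χ (f i)) + starRingEnd ℂ (∑ i, χ (f i))‖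
        ≤ ‖∑ i, χ (f i)‖ + ‖starRingEnd ℂ (∑ i, χ (f i))‖ :=
          norm_add_le _ _
    _ = 2 * ‖∑ i, χ (f i)‖ := by rw [Complex.norm_conj]; ring
    _ ≤ 2 * (ε * m) := by linarith
    _ = ε * ((2 * m : ℕ) : ℝ) := by push_cast; ring
end

section
/- Let G be a finite abelian group with |G| ≥ 2 and let c > 0 be a real constant. Then for all sufficiently large n the following holds: if S is a nonempty finite multiset of elements of G^n that is symmetric and (1/(2n^{20c}))-biased (for every nontrivial character χ of G^n, |∑_{s∈S} χ(s)| ≤ |S|/(2n^{20c})), then for every subgroup H of G^n with |H| ≤ |G|^{n/2}, there exists an element s of S with Hamming distance Δ(s,h) > c·log₂ n for every h ∈ H. -/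
open Finset Pointwise



private lemma aux_sum_swap {I A : Type*} (X : Finset I) (S : Multiset A) (f : I → A → ℂ) :
    ∑ x ∈ X, (S.map (f x)).sum = (S.map (fun s => ∑ x ∈ X, f x s)).sum := by
  induction S using Multiset.induction_on with
  | empty => simp
  | cons a s ih => simp [Multiset.map_cons, Multiset.sum_cons, Finset.sum_add_distrib, ih]

private lemma aux_sum_ite {A : Type*} (S : Multiset A) (P : A → Prop) [DecidablePred P] (z : ℂ) :
    (S.map (fun s => if P s then z else 0)).sum = (S.countP P : ℂ) * z := by
  induction S using Multiset.induction_on with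
  | empty => simp
  | cons a s ih =>
    by_cases h : P a <;>
      simp [h, ih, Multiset.countP_cons, add_mul, add_comm]

private lemma aux_countP_mono {A : Type*} (S : Multiset A) (p q : A → Prop) [DecidablePred p]
    [DecidablePred q] (h : ∀ a ∈ S, p a → q a) : S.countP p ≤ S.countP q := by
  induction S using Multiset.induction_on with
  | empty => simp
  | cons a s ih =>
    have h' : ∀ b ∈ s, p b → q b := fun b hb => h b (Multiset.mem_cons_of_mem hb)
    simp only [Multiset.countP_cons]
    have : (if p a then 1 else 0) ≤ (if q a then 1 else 0) := by
      by_cases hp : p a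
      · simp [hp, h a (Multiset.mem_cons_self a s) hp]
      · simp [hp]
    exact Nat.add_le_add (ih h') this




-- sum of all characters evaluated at a point: dichotomy
private lemma aux_char_sum {Q : Type*} [CommGroup Q] [Fintype (Q →* ℂˣ)] (u : Q) :
    (∑ χ : Q →* ℂˣ, ((χ u : ℂˣ) : ℂ)) =
      if ∀ χ : Q →* ℂˣ, χ u = 1 then (Fintype.card (Q →* ℂˣ) : ℂ) else 0 := by
  split_ifs with h
  · rw [Finset.sum_congr rfl (fun χ _ => by rw [h χ, Units.val_one])]
    simp
  · push_neg at h
    obtain ⟨χ₀, hχ₀⟩ := h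
    have key : (∑ χ : Q →* ℂˣ, ((χ u : ℂˣ) : ℂ))
        = ((χ₀ u : ℂˣ) : ℂ) * ∑ χ : Q →* ℂˣ, ((χ u : ℂˣ) : ℂ) := by
      rw [Finset.mul_sum]
      exact (Fintype.sum_equiv (Equiv.mulLeft χ₀)
        (fun χ => ((χ₀ u : ℂˣ) : ℂ) * ((χ u : ℂˣ) : ℂ))
        (fun χ => ((χ u : ℂˣ) : ℂ)) (fun χ => by simp [Units.val_mul])).symm
    have hne : ((χ₀ u : ℂˣ) : ℂ) ≠ 1 := by
      intro hh
      exact hχ₀ (Units.ext (by simpa using hh))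
    have hz : (((χ₀ u : ℂˣ) : ℂ) - 1) * (∑ χ : Q →* ℂˣ, ((χ u : ℂˣ) : ℂ)) = 0 := by
      rw [sub_mul, one_mul, ← key, sub_self]
    rcases mul_eq_zero.mp hz with h1 | h2
    · exact absurd (by linear_combination h1 : ((χ₀ u : ℂˣ) : ℂ) = 1) hne
    · exact h2

-- modulus of a character value is 1
private lemma aux_abs_one {Q : Type*} [CommGroup Q] [Finite Q] (χ : Q →* ℂˣ) (u : Q) :
    ‖((χ u : ℂˣ) : ℂ)‖ = 1 := by
  have hcard : 0 < Nat.card Q := Nat.card_pos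
  have h1 : ((χ u : ℂˣ) : ℂ) ^ (Nat.card Q) = 1 := by
    have : (χ u) ^ (Nat.card Q) = 1 := by
      rw [← map_pow, pow_card_eq_one', map_one]
    rw [← Units.val_pow_eq_pow_val, this, Units.val_one]
  have h2 : (‖((χ u : ℂˣ) : ℂ)‖) ^ (Nat.card Q) = 1 := by
    rw [← norm_pow, h1, norm_one]
  set a := ‖((χ u : ℂˣ) : ℂ)‖ with ha
  have ha0 : 0 ≤ a := norm_nonneg _
  rcases lt_trichotomy a 1 with hlt | heq | hgt
  · exfalso
    have : a ^ (Nat.card Q) < 1 := pow_lt_one₀ ha0 hlt hcard.ne'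
    rw [h2] at this; exact lt_irrefl 1 this
  · exact heq
  · exfalso
    have : 1 < a ^ (Nat.card Q) := one_lt_pow₀ hgt hcard.ne'
    rw [h2] at this; exact lt_irrefl 1 this


private lemma aux_choose_step (k m : ℕ) (hmk : m ≤ k) (hcond : m ≤ 3 * (k + 1 - m)) :
    (k + 1).choose m ≤ 4 * k.choose m := by
  cases m with
  | zero => simp
  | succ mm =>
    rw [Nat.choose_succ_succ']
    have h1 : k.choose mm * (k - mm) = k.choose (mm + 1) * (mm + 1) :=
      (Nat.choose_succ_right_eq k mm).symm
    have hpos : 0 < k - mm := by omega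
    have h2 : k.choose mm * (k - mm) ≤ (3 * k.choose (mm + 1)) * (k - mm) := by
      rw [h1]
      have : mm + 1 ≤ 3 * (k - mm) := by omega
      calc k.choose (mm + 1) * (mm + 1) ≤ k.choose (mm + 1) * (3 * (k - mm)) :=
            Nat.mul_le_mul_left _ this
        _ = (3 * k.choose (mm + 1)) * (k - mm) := by ring
    have h3 : k.choose mm ≤ 3 * k.choose (mm + 1) := Nat.le_of_mul_le_mul_right h2 hpos
    omega

private lemma aux_choose_bound (m : ℕ) : ∀ (D n : ℕ), m + D ≤ n → m ≤ 3 * (n - D - m) →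
    n.choose m ≤ 4 ^ D * (n - D).choose m := by
  intro D
  induction D with
  | zero => intro n _ _; simp
  | succ D ih =>
    intro n h1 h2
    have hn1 : 1 ≤ n := by omega
    have step : n.choose m ≤ 4 * (n - 1).choose m := by
      have : n - 1 + 1 = n := by omega
      rw [← this]
      exact aux_choose_step (n - 1) m (by omega) (by omega)
    have ihh : (n - 1).choose m ≤ 4 ^ D * (n - 1 - D).choose m :=
      ih (n - 1) (by omega) (by omega)
    have : n - 1 - D = n - (D + 1) := by omega
    rw [this] at ihh
    calc n.choose m ≤ 4 * (n - 1).choose m := step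
      _ ≤ 4 * (4 ^ D * (n - (D + 1)).choose m) := Nat.mul_le_mul_left _ ihh
      _ = 4 ^ (D + 1) * (n - (D + 1)).choose m := by ring


private lemma aux_card_pi {n : ℕ} {G : Type*} [CommGroup G] [Fintype G] [DecidableEq G]
    (T : Finset (Fin n)) :
    Nat.card (Subgroup.pi (T : Set (Fin n)) (fun _ => (⊥ : Subgroup G))) =
      Fintype.card G ^ (Tᶜ.card) := by
  classical
  set K := Subgroup.pi (T : Set (Fin n)) (fun _ => (⊥ : Subgroup G)) with hK
  have e : K ≃ ({i // i ∈ Tᶜ} → G) := by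
    refine ⟨fun x i => x.1 i.1, fun f => ⟨fun i => if h : i ∈ Tᶜ then f ⟨i, h⟩ else 1, ?_⟩, ?_, ?_⟩
    · refine (Subgroup.mem_pi _).mpr ?_
      intro i hi
      have hiT : i ∈ T := hi
      have : i ∉ Tᶜ := by simp [hiT]
      simp [this, Subgroup.mem_bot]
    · intro x
      ext i
      by_cases h : i ∈ Tᶜ
      · simp [h]
      · have hiT : i ∈ T := by simpa using h
        have hx : x.1 i = 1 := by
          have := (Subgroup.mem_pi _).mp x.2 i hiT
          simpa [Subgroup.mem_bot] using this
        simp [h, hx]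
    · intro f
      funext i
      simp [i.2]
  rw [Nat.card_congr e]
  rw [Nat.card_eq_fintype_card, Fintype.card_fun]
  congr 1
  exact Fintype.card_coe _


private lemma aux_exists_N (c : ℝ) (hc : 0 < c) :
    ∃ N : ℕ, ∀ n : ℕ, N ≤ n → 2 ≤ n ∧ 11 * (c * Real.logb 2 n) + 12 ≤ n := by
  have hlog2 : 0 < Real.log 2 := Real.log_pos (by norm_num)
  set K := 22 * c / Real.log 2 with hKdef
  have hK : 0 < K := by positivity
  refine ⟨max 4 ⌈(K + 13) ^ 2⌉₊, fun n hn => ?_⟩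
  have hn4 : 4 ≤ n := le_trans (le_max_left _ _) hn
  have hnR : (4 : ℝ) ≤ n := by exact_mod_cast hn4
  have hn0 : (0 : ℝ) < n := by linarith
  have hnceil : ⌈(K + 13) ^ 2⌉₊ ≤ n := le_trans (le_max_right _ _) hn
  have hsq : (K + 13) ^ 2 ≤ (n : ℝ) := le_trans (Nat.le_ceil _) (by exact_mod_cast hnceil)
  have hsqrt : K + 13 ≤ Real.sqrt n := (Real.le_sqrt (by positivity) (le_of_lt hn0)).mpr hsq
  have hsqrt1 : 1 ≤ Real.sqrt n := by
    rw [show (1:ℝ) = Real.sqrt 1 by simp]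
    exact Real.sqrt_le_sqrt (by linarith)
  have hsqrt0 : 0 < Real.sqrt n := by linarith
  refine ⟨by omega, ?_⟩
  -- log n ≤ 2 * sqrt n
  have hlogn : Real.log n ≤ 2 * Real.sqrt n := by
    have h1 : Real.log (Real.sqrt n) = Real.log n / 2 := Real.log_sqrt (le_of_lt hn0)
    have h2 : Real.log (Real.sqrt n) ≤ Real.sqrt n - 1 := Real.log_le_sub_one_of_pos hsqrt0
    nlinarith
  have hlogb : Real.logb 2 n = Real.log n / Real.log 2 := rfl
  have hmain : 11 * (c * Real.logb 2 n) ≤ K * Real.sqrt n := by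
    rw [hlogb, hKdef]
    have e1 : 11 * (c * (Real.log n / Real.log 2)) = (11 * c * Real.log n) / Real.log 2 := by
      ring
    have e2 : 22 * c / Real.log 2 * Real.sqrt n = (22 * c * Real.sqrt n) / Real.log 2 := by
      ring
    rw [e1, e2, div_le_div_iff_of_pos_right hlog2]
    nlinarith [hlogn, hc.le]
  have hfin : K * Real.sqrt n + 13 ≤ n := by
    have : (n : ℝ) = Real.sqrt n * Real.sqrt n := (Real.mul_self_sqrt (le_of_lt hn0)).symm
    nlinarith [hsqrt, hsqrt1, hK.le, hsqrt0.le]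
  linarith

private lemma aux_perT {A : Type*} [CommGroup A] [Fintype A] (S : Multiset A) (M : Subgroup A)
    (εb : ℝ) (hεb : 0 ≤ εb)
    (hbias : ∀ χ : A →* ℂ, (∀ x, ‖χ x‖ = 1) → χ ≠ 1 →
      ‖(S.map (fun s => χ s)).sum‖ ≤ εb)
    (p : A → Prop) [DecidablePred p] (hp : ∀ s ∈ S, p s → s ∈ M) :
    (S.countP p : ℝ) * (Nat.card (A ⧸ M) : ℝ) ≤
      (Multiset.card S : ℝ) + (Nat.card (A ⧸ M) : ℝ) * εb := by
  classical
  haveI : Finite (A ⧸ M) := Quotient.finite _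
  haveI : NeZero ((Monoid.exponent (A ⧸ M) : ℂ)) :=
    ⟨Nat.cast_ne_zero.mpr Monoid.exponent_ne_zero_of_finite⟩
  obtain ⟨e⟩ := CommGroup.monoidHom_mulEquiv_of_hasEnoughRootsOfUnity (A ⧸ M) ℂ
  haveI : Finite ((A ⧸ M) →* ℂˣ) := Finite.of_equiv _ e.toEquiv.symm
  haveI : Fintype ((A ⧸ M) →* ℂˣ) := Fintype.ofFinite _
  have hcard : Fintype.card ((A ⧸ M) →* ℂˣ) = Nat.card (A ⧸ M) := by
    rw [← Nat.card_eq_fintype_card]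
    exact Nat.card_congr e.toEquiv
  set π : A →* (A ⧸ M) := QuotientGroup.mk' M with hπ
  set ψ : ((A ⧸ M) →* ℂˣ) → (A →* ℂ) := fun χ => (Units.coeHom ℂ).comp (χ.comp π) with hψ
  have hψapp : ∀ χ x, ψ χ x = ((χ (π x) : ℂˣ) : ℂ) := fun χ x => rfl
  set P' : A → Prop := fun s => ∀ χ : (A ⧸ M) →* ℂˣ, χ (π s) = 1 with hP'
  have hfun : ∀ s : A, (∑ χ : (A ⧸ M) →* ℂˣ, ψ χ s)
      = if P' s then ((Fintype.card ((A ⧸ M) →* ℂˣ) : ℕ) : ℂ) else 0 := by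
    intro s
    have := aux_char_sum (Q := A ⧸ M) (π s)
    simpa [hψapp, hP'] using this
  have hZeq : (∑ χ : (A ⧸ M) →* ℂˣ, (S.map (fun s => ψ χ s)).sum)
      = (S.countP P' : ℂ) * (Fintype.card ((A ⧸ M) →* ℂˣ) : ℂ) := by
    rw [aux_sum_swap, Multiset.map_congr rfl (fun s _ => hfun s), aux_sum_ite]
  have hupper : ‖∑ χ : (A ⧸ M) →* ℂˣ, (S.map (fun s => ψ χ s)).sum‖
      ≤ (Multiset.card S : ℝ) + (Fintype.card ((A ⧸ M) →* ℂˣ) : ℝ) * εb := by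
    calc ‖∑ χ : (A ⧸ M) →* ℂˣ, (S.map (fun s => ψ χ s)).sum‖
        ≤ ∑ χ : (A ⧸ M) →* ℂˣ, ‖(S.map (fun s => ψ χ s)).sum‖ :=
          norm_sum_le _ _
      _ = ‖(S.map (fun s => ψ 1 s)).sum‖
          + ∑ χ ∈ Finset.univ.erase 1, ‖(S.map (fun s => ψ χ s)).sum‖ :=
          (Finset.add_sum_erase _ _ (Finset.mem_univ 1)).symm
      _ ≤ (Multiset.card S : ℝ) + (Fintype.card ((A ⧸ M) →* ℂˣ) : ℝ) * εb := by
          refine add_le_add ?_ ?_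
          · have h1 : (S.map (fun s => ψ (1 : (A ⧸ M) →* ℂˣ) s)) = S.map (fun _ => (1 : ℂ)) :=
              Multiset.map_congr rfl (fun s _ => by simp [hψapp])
            rw [h1, Multiset.map_const', Multiset.sum_replicate, nsmul_eq_mul, mul_one,
              Complex.norm_natCast]
          · calc ∑ χ ∈ Finset.univ.erase 1, ‖(S.map (fun s => ψ χ s)).sum‖
                ≤ (Finset.univ.erase (1 : (A ⧸ M) →* ℂˣ)).card • εb := by
                  refine Finset.sum_le_card_nsmul _ _ _ (fun χ hχ => ?_)
                  have hχ1 : χ ≠ 1 := (Finset.mem_erase.mp hχ).1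
                  refine hbias (ψ χ) (fun x => by rw [hψapp]; exact aux_abs_one _ _) ?_
                  intro hcontra
                  apply hχ1
                  refine DFunLike.ext _ _ (fun u => ?_)
                  obtain ⟨a, ha⟩ := QuotientGroup.mk'_surjective M u
                  have h2 : ((χ (π a) : ℂˣ) : ℂ) = 1 := by
                    rw [← hψapp, hcontra]; rfl
                  have h3 : χ (π a) = 1 := Units.ext (by simpa using h2)
                  rw [hπ] at h3
                  rw [MonoidHom.one_apply, ← ha]
                  exact h3
              _ ≤ (Fintype.card ((A ⧸ M) →* ℂˣ) : ℝ) * εb := by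
                  rw [nsmul_eq_mul]
                  refine mul_le_mul_of_nonneg_right ?_ hεb
                  exact_mod_cast Finset.card_le_card (Finset.erase_subset _ _) |>.trans
                    (le_of_eq (Finset.card_univ))
  have hmono : S.countP p ≤ S.countP P' := by
    refine aux_countP_mono S p P' (fun s hs hps χ => ?_)
    have hs1 : π s = 1 := by
      rw [hπ, QuotientGroup.mk'_apply, QuotientGroup.eq_one_iff]
      exact hp s hs hps
    rw [hs1, map_one]
  calc (S.countP p : ℝ) * (Nat.card (A ⧸ M) : ℝ)
      ≤ (S.countP P' : ℝ) * (Nat.card (A ⧸ M) : ℝ) :=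
        mul_le_mul_of_nonneg_right (Nat.cast_le.mpr hmono) (Nat.cast_nonneg _)
    _ = ‖∑ χ : (A ⧸ M) →* ℂˣ, (S.map (fun s => ψ χ s)).sum‖ := by
        rw [hZeq, norm_mul, Complex.norm_natCast, Complex.norm_natCast, hcard]
    _ ≤ (Multiset.card S : ℝ) + (Fintype.card ((A ⧸ M) →* ℂˣ) : ℝ) * εb := hupper
    _ = (Multiset.card S : ℝ) + (Nat.card (A ⧸ M) : ℝ) * εb := by rw [hcard]




set_option maxHeartbeats 1000000 in
theorem biased_set_contains_remote_point
    (G : Type) [CommGroup G] [Fintype G] [DecidableEq G]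
    (hG : 2 ≤ Fintype.card G)
    (c : ℝ) (hc : 0 < c) :
    ∃ N : ℕ, ∀ n : ℕ, N ≤ n →
      ∀ S : Multiset (Fin n → G), S ≠ 0 →
        S.map (fun s => s⁻¹) = S →
        (∀ χ : (Fin n → G) →* ℂ, (∀ x, ‖χ x‖ = 1) → χ ≠ 1 →
          ‖(S.map (fun s => χ s)).sum‖ ≤ (S.card : ℝ) / (2 * (n : ℝ) ^ (20 * c))) →
        ∀ H : Subgroup (Fin n → G),
          (Nat.card H : ℝ) ≤ (Fintype.card G : ℝ) ^ ((n : ℝ) / 2) →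
          ∃ s ∈ S, ∀ h ∈ H, c * Real.logb 2 n < (hammingDist s h : ℝ) := by
  classical
  obtain ⟨N₀, hN₀⟩ := aux_exists_N c hc
  refine ⟨N₀, fun n hn S hS hSsym hbias H hH => ?_⟩
  obtain ⟨hn2, hgrowth⟩ := hN₀ n hn
  by_contra hcon
  push_neg at hcon
  -- hcon : ∀ s ∈ S, ∃ h ∈ H, (hammingDist s h : ℝ) ≤ c * Real.logb 2 n
  set q : ℕ := Fintype.card G with hq
  have hn0 : (0:ℝ) < n := by exact_mod_cast Nat.lt_of_lt_of_le (by norm_num) hn2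
  have hn1 : (1:ℝ) ≤ n := by exact_mod_cast Nat.le_of_lt (Nat.lt_of_lt_of_le (by norm_num) hn2)
  have hlogb0 : 0 ≤ Real.logb 2 n := Real.logb_nonneg (by norm_num) hn1
  set D : ℕ := ⌊c * Real.logb 2 n⌋₊ with hD
  have hDle : (D : ℝ) ≤ c * Real.logb 2 n := Nat.floor_le (by positivity)
  have h11 : 11 * D + 12 ≤ n := by
    have h1 : (11 * D + 12 : ℝ) ≤ (n:ℝ) := by
      have : (D:ℝ) ≤ c * Real.logb 2 n := hDle
      push_cast
      linarith [hgrowth]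
    exact_mod_cast h1
  set t : ℕ := 2 * D + 2 with ht
  set m : ℕ := (n + 1) / 2 + t with hm
  have hmn : m + D ≤ n := by omega
  have hcond3 : m ≤ 3 * (n - D - m) := by omega
  have hmlen : m ≤ n - D := by omega
  -- choice of close codeword
  set F : (Fin n → G) → (Fin n → G) := fun s =>
    if hx : ∃ h, h ∈ H ∧ (hammingDist s h : ℝ) ≤ c * Real.logb 2 n then hx.choose else 1
    with hF
  have hFs : ∀ s ∈ S, F s ∈ H ∧ hammingDist s (F s) ≤ D := by
    intro s hs
    have hx : ∃ h, h ∈ H ∧ (hammingDist s h : ℝ) ≤ c * Real.logb 2 n := by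
      obtain ⟨h, hh1, hh2⟩ := hcon s hs
      exact ⟨h, hh1, hh2⟩
    rw [hF]
    simp only [dif_pos hx]
    exact ⟨hx.choose_spec.1, Nat.le_floor hx.choose_spec.2⟩
  have hScard : 0 < Multiset.card S := Multiset.card_pos.mpr hS
  set εr : ℝ := 1 / (2 * (n:ℝ) ^ (20 * c)) with hεr
  have hεr0 : 0 ≤ εr := by positivity
  set 𝒯 : Finset (Finset (Fin n)) := Finset.powersetCard m (Finset.univ : Finset (Fin n))
    with h𝒯
  set pT : Finset (Fin n) → (Fin n → G) → Prop := fun T s => ∀ i ∈ T, s i = F s i with hpT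
  -- PER-T BOUND
  have keyT : ∀ T ∈ 𝒯, (S.countP (pT T) : ℝ) ≤
      (Multiset.card S : ℝ) * (1 / 2 ^ t + εr) := by
    intro T hT
    have hTcard : T.card = m := (Finset.mem_powersetCard.mp hT).2
    set K : Subgroup (Fin n → G) := Subgroup.pi (T : Set (Fin n)) (fun _ => ⊥) with hKdef
    set M : Subgroup (Fin n → G) := H ⊔ K with hMdef
    haveI : Finite ((Fin n → G) ⧸ M) := Quotient.finite _
    -- membership implication
    have hmem : ∀ s ∈ S, pT T s → s ∈ M := by
      intro s hs hp
      have h1 : s * (F s)⁻¹ ∈ K := by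
        refine (Subgroup.mem_pi _).mpr (fun i hi => ?_)
        have hieq : s i = F s i := hp i hi
        simp [Subgroup.mem_bot, Pi.mul_apply, Pi.inv_apply, hieq]
      have h2 : F s ∈ H := (hFs s hs).1
      have hYou : s = (s * (F s)⁻¹) * (F s) := by group
      rw [hYou]
      exact Subgroup.mul_mem _ (Subgroup.mem_sup_right h1) (Subgroup.mem_sup_left h2)
    -- apply the character-sum lemma
    have hPT := aux_perT S M ((Multiset.card S : ℝ) * εr) (by positivity)
        (fun χ hχabs hχ1 => by
          calc ‖(S.map (fun s => χ s)).sum‖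
              ≤ (S.card : ℝ) / (2 * (n:ℝ) ^ (20 * c)) := hbias χ hχabs hχ1
            _ = (Multiset.card S : ℝ) * εr := by rw [hεr]; ring)
        (pT T) hmem
    -- lower bound on the cardinality of the quotient
    have hQlbN : 2 ^ t ≤ Nat.card ((Fin n → G) ⧸ M) := by
      have hLag : Nat.card (Fin n → G)
          = Nat.card ((Fin n → G) ⧸ M) * Nat.card M :=
        Subgroup.card_eq_card_quotient_mul_card_subgroup M
      have hA : Nat.card (Fin n → G) = q ^ n := by
        rw [Nat.card_fun, Nat.card_eq_fintype_card, Nat.card_eq_fintype_card, Fintype.card_fin]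
      have hKcard : Nat.card K = q ^ (n - m) := by
        rw [hKdef, aux_card_pi T, Finset.card_compl, hTcard, Fintype.card_fin]
      -- card H ≤ q ^ ((n+1)/2)
      have hHnat : Nat.card H ≤ q ^ ((n + 1) / 2) := by
        have hq1R : (1:ℝ) ≤ (q:ℝ) := by
          have : (2:ℕ) ≤ q := hG
          exact_mod_cast le_trans (by norm_num) this
        have hexp : (n:ℝ) / 2 ≤ (((n + 1) / 2 : ℕ) : ℝ) := by
          have h2 : n ≤ 2 * ((n + 1) / 2) := by omega
          have h2R : (n:ℝ) ≤ 2 * (((n + 1) / 2 : ℕ) : ℝ) := by exact_mod_cast h2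
          linarith
        have hstep : ((Nat.card H : ℝ)) ≤ (q:ℝ) ^ (((n + 1) / 2 : ℕ) : ℝ) :=
          le_trans hH (Real.rpow_le_rpow_of_exponent_le hq1R hexp)
        rw [Real.rpow_natCast] at hstep
        exact_mod_cast hstep
      have hMnat : Nat.card M ≤ q ^ (n - t) := by
        have h1 : (M : Set (Fin n → G)) = (H : Set (Fin n → G)) * (K : Set (Fin n → G)) := by
          rw [hMdef]
          exact Subgroup.mul_normal H K
        have h2 : Nat.card M ≤ Nat.card H * Nat.card K := by
          calc Nat.card M = Nat.card ((M : Set (Fin n → G))) := rfl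
            _ = Nat.card ((H : Set (Fin n → G)) * (K : Set (Fin n → G))) := by rw [h1]
            _ ≤ Nat.card ((H : Set (Fin n → G))) * Nat.card ((K : Set (Fin n → G))) :=
                Set.natCard_mul_le
            _ = Nat.card H * Nat.card K := rfl
        calc Nat.card M ≤ Nat.card H * Nat.card K := h2
          _ ≤ q ^ ((n + 1) / 2) * q ^ (n - m) := Nat.mul_le_mul hHnat (le_of_eq hKcard)
          _ = q ^ ((n + 1) / 2 + (n - m)) := (pow_add q _ _).symm
          _ = q ^ (n - t) := by congr 1; omega
      have hMpos : 0 < Nat.card M := Nat.card_pos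
      have hqt : q ^ t * Nat.card M ≤ Nat.card ((Fin n → G) ⧸ M) * Nat.card M := by
        calc q ^ t * Nat.card M ≤ q ^ t * q ^ (n - t) := Nat.mul_le_mul_left _ hMnat
          _ = q ^ n := by rw [← pow_add]; congr 1; omega
          _ = Nat.card ((Fin n → G) ⧸ M) * Nat.card M := by rw [← hA, hLag]
      have hqt2 : q ^ t ≤ Nat.card ((Fin n → G) ⧸ M) :=
        Nat.le_of_mul_le_mul_right hqt hMpos
      calc 2 ^ t ≤ q ^ t := Nat.pow_le_pow_left hG t
        _ ≤ _ := hqt2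
    have hQlb : (2:ℝ) ^ t ≤ (Nat.card ((Fin n → G) ⧸ M) : ℝ) := by
      have := hQlbN
      exact_mod_cast this
    have hcQ0 : (0:ℝ) < (Nat.card ((Fin n → G) ⧸ M) : ℝ) := by
      have : (0:ℝ) < (2:ℝ)^t := by positivity
      linarith
    -- divide through
    have step1 : (S.countP (pT T) : ℝ) ≤
        ((Multiset.card S : ℝ) + (Nat.card ((Fin n → G) ⧸ M) : ℝ)
          * ((Multiset.card S : ℝ) * εr)) / (Nat.card ((Fin n → G) ⧸ M) : ℝ) :=
      (le_div_iff₀ hcQ0).mpr hPT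
    have step2 : ((Multiset.card S : ℝ) + (Nat.card ((Fin n → G) ⧸ M) : ℝ)
          * ((Multiset.card S : ℝ) * εr)) / (Nat.card ((Fin n → G) ⧸ M) : ℝ)
        = (Multiset.card S : ℝ) / (Nat.card ((Fin n → G) ⧸ M) : ℝ)
          + (Multiset.card S : ℝ) * εr := by
      field_simp
    have step3 : (Multiset.card S : ℝ) / (Nat.card ((Fin n → G) ⧸ M) : ℝ)
        ≤ (Multiset.card S : ℝ) / 2 ^ t := by
      apply div_le_div_of_nonneg_left (Nat.cast_nonneg _) (by positivity) hQlb
    calc (S.countP (pT T) : ℝ)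
        ≤ (Multiset.card S : ℝ) / (Nat.card ((Fin n → G) ⧸ M) : ℝ)
          + (Multiset.card S : ℝ) * εr := by rw [← step2]; exact step1
      _ ≤ (Multiset.card S : ℝ) / 2 ^ t + (Multiset.card S : ℝ) * εr := by linarith
      _ = (Multiset.card S : ℝ) * (1 / 2 ^ t + εr) := by ring
  -- AVERAGING: lower bound on the sum of counts
  have swap : ∀ S' : Multiset (Fin n → G), ∑ T ∈ 𝒯, S'.countP (pT T)
      = (S'.map (fun s => (𝒯.filter (fun T => pT T s)).card)).sum := by
    intro S'
    induction S' using Multiset.induction_on with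
    | empty => simp
    | cons a s ih =>
      simp only [Multiset.countP_cons, Finset.sum_add_distrib, ih, Multiset.map_cons,
        Multiset.sum_cons]
      rw [← Finset.card_filter]
      omega
  have percount : ∀ s ∈ S, (n - D).choose m ≤ (𝒯.filter (fun T => pT T s)).card := by
    intro s hs
    have hda : hammingDist s (F s) ≤ D := (hFs s hs).2
    set Agr : Finset (Fin n) := Finset.filter (fun i => s i = F s i) Finset.univ with hAgr
    have hfilter : 𝒯.filter (fun T => pT T s) = Finset.powersetCard m Agr := by
      ext U
      simp only [h𝒯, Finset.mem_filter, Finset.mem_powersetCard, hpT, hAgr]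
      constructor
      · rintro ⟨⟨hU1, hU2⟩, hU3⟩
        exact ⟨fun i hi => Finset.mem_filter.mpr ⟨Finset.mem_univ i, hU3 i hi⟩, hU2⟩
      · rintro ⟨hU1, hU2⟩
        exact ⟨⟨Finset.subset_univ U, hU2⟩, fun i hi => (Finset.mem_filter.mp (hU1 hi)).2⟩
    rw [hfilter, Finset.card_powersetCard]
    apply Nat.choose_le_choose
    have hsplit : Agr.card
        + (Finset.filter (fun i => ¬ (s i = F s i)) Finset.univ).card = n := by
      rw [hAgr, Finset.card_filter_add_card_filter_not, Finset.card_univ,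
        Fintype.card_fin]
    have hdcard : (Finset.filter (fun i => ¬ (s i = F s i)) Finset.univ).card
        = hammingDist s (F s) := by
      unfold hammingDist
      congr 1
    omega
  have lower : (n - D).choose m * Multiset.card S ≤ ∑ T ∈ 𝒯, S.countP (pT T) := by
    rw [swap S]
    calc (n - D).choose m * Multiset.card S
        = (S.map (fun _ => (n - D).choose m)).sum := by
          rw [Multiset.map_const', Multiset.sum_replicate, smul_eq_mul]; ring
      _ ≤ (S.map (fun s => (𝒯.filter (fun T => pT T s)).card)).sum :=
          Multiset.sum_map_le_sum_map _ _ percount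
  -- upper bound
  have upper : ((∑ T ∈ 𝒯, S.countP (pT T) : ℕ) : ℝ) ≤
      (n.choose m : ℝ) * ((Multiset.card S : ℝ) * (1 / 2 ^ t + εr)) := by
    calc ((∑ T ∈ 𝒯, S.countP (pT T) : ℕ) : ℝ)
        = ∑ T ∈ 𝒯, (S.countP (pT T) : ℝ) := by push_cast; rfl
      _ ≤ 𝒯.card • ((Multiset.card S : ℝ) * (1 / 2 ^ t + εr)) :=
          Finset.sum_le_card_nsmul _ _ _ keyT
      _ = (n.choose m : ℝ) * ((Multiset.card S : ℝ) * (1 / 2 ^ t + εr)) := by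
          rw [nsmul_eq_mul, h𝒯, Finset.card_powersetCard, Finset.card_univ, Fintype.card_fin]
  -- combine
  have main2 : ((n - D).choose m : ℝ) ≤ (n.choose m : ℝ) * (1 / 2 ^ t + εr) := by
    have h1 : ((n - D).choose m : ℝ) * (Multiset.card S : ℝ) ≤
        (n.choose m : ℝ) * ((Multiset.card S : ℝ) * (1 / 2 ^ t + εr)) := by
      calc ((n - D).choose m : ℝ) * (Multiset.card S : ℝ)
          = (((n - D).choose m * Multiset.card S : ℕ) : ℝ) := by push_cast; ring
        _ ≤ ((∑ T ∈ 𝒯, S.countP (pT T) : ℕ) : ℝ) := by exact_mod_cast lower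
        _ ≤ (n.choose m : ℝ) * ((Multiset.card S : ℝ) * (1 / 2 ^ t + εr)) := upper
    have hSR : (0:ℝ) < (Multiset.card S : ℝ) := by exact_mod_cast hScard
    nlinarith [h1, hSR]
  -- final numeric contradiction
  have hch : (n.choose m : ℝ) ≤ (4:ℝ)^D * ((n - D).choose m : ℝ) := by
    exact_mod_cast aux_choose_bound m D n hmn hcond3
  have hpos : (0:ℝ) < ((n - D).choose m : ℝ) := by
    exact_mod_cast Nat.choose_pos hmlen
  have hq1 : (4:ℝ)^D * (1/2^t : ℝ) = 1/4 := by
    have h2t : (2:ℝ)^t = 4^D * 4 := by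
      rw [ht, pow_add, pow_mul]
      norm_num
    rw [h2t]
    have h4D0 : (0:ℝ) < 4^D := by positivity
    field_simp
  have h4D : (4:ℝ)^D ≤ (n:ℝ)^(2*c) := by
    have h1 : ((4:ℝ))^D = (2:ℝ)^((2*D : ℕ):ℝ) := by
      rw [Real.rpow_natCast, pow_mul]
      norm_num
    rw [h1]
    have h2 : ((2*D:ℕ):ℝ) ≤ 2*c*Real.logb 2 n := by push_cast; linarith [hDle]
    calc (2:ℝ)^((2*D:ℕ):ℝ) ≤ (2:ℝ)^(2*c*Real.logb 2 n) :=
          Real.rpow_le_rpow_of_exponent_le (by norm_num) h2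
      _ = (n:ℝ)^(2*c) := by
          rw [mul_comm (2*c) (Real.logb 2 (n:ℝ)), Real.rpow_mul (by norm_num : (0:ℝ) ≤ 2),
            Real.rpow_logb (by norm_num) (by norm_num) hn0]
  have hεrb : (4:ℝ)^D * εr ≤ 1/2 := by
    rw [hεr]
    have hn20 : (n:ℝ)^(2*c) ≤ (n:ℝ)^(20*c) :=
      Real.rpow_le_rpow_of_exponent_le hn1 (by linarith)
    have hpow : (0:ℝ) < (n:ℝ)^(20*c) := by positivity
    calc (4:ℝ)^D * (1/(2*(n:ℝ)^(20*c)))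
        ≤ (n:ℝ)^(2*c) * (1/(2*(n:ℝ)^(20*c))) :=
          mul_le_mul_of_nonneg_right h4D (by positivity)
      _ ≤ (n:ℝ)^(20*c) * (1/(2*(n:ℝ)^(20*c))) :=
          mul_le_mul_of_nonneg_right hn20 (by positivity)
      _ = 1/2 := by field_simp
  have final : ((n-D).choose m : ℝ) ≤ ((n-D).choose m : ℝ) * (3/4) := by
    calc ((n-D).choose m : ℝ) ≤ (n.choose m : ℝ) * (1/2^t + εr) := main2
      _ ≤ ((4:ℝ)^D * ((n-D).choose m : ℝ)) * (1/2^t + εr) := by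
          apply mul_le_mul_of_nonneg_right hch (by positivity)
      _ = ((n-D).choose m : ℝ) * ((4:ℝ)^D * (1/2^t) + (4:ℝ)^D * εr) := by ring
      _ ≤ ((n-D).choose m : ℝ) * (1/4 + 1/2) := by
          refine mul_le_mul_of_nonneg_left ?_ hpos.le
          rw [hq1]
          linarith [hεrb]
      _ = ((n-D).choose m : ℝ) * (3/4) := by norm_num
  nlinarith [final, hpos]
end

section
/- Let G be a finite group with |G| ≥ 2 and let c > 0 be a real constant. Then for all sufficiently large n the following holds: for every subgroup H of G^n with |H| ≤ |G|^{n/2}, there exists x ∈ G^n such that the Hamming distance Δ(x,h) > c·log₂ n for every h ∈ H. -/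
open Real Filter Finset

private lemma foldl_update_apply_of_not_mem {ι α : Type*} [DecidableEq ι]
    (l : List (ι × α)) (b : ι → α) (i : ι) (hi : i ∉ l.map Prod.fst) :
    (l.foldl (fun a p => Function.update a p.1 p.2) b) i = b i := by
  induction l generalizing b with
  | nil => rfl
  | cons p l ih =>
    simp only [List.map_cons, List.mem_cons] at hi
    push_neg at hi
    simp only [List.foldl_cons]
    rw [ih _ hi.2, Function.update_of_ne hi.1]

private lemma foldl_update_eq {ι α : Type*} [DecidableEq ι]
    (x : ι → α) (l : List (ι × α)) (b : ι → α)
    (hl : ∀ p ∈ l, p.2 = x p.1) (hb : ∀ i, i ∉ l.map Prod.fst → b i = x i) :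
    l.foldl (fun a p => Function.update a p.1 p.2) b = x := by
  induction l generalizing b with
  | nil => funext i; exact hb i (by simp)
  | cons p l ih =>
    simp only [List.foldl_cons]
    refine ih _ (fun r hr => hl r (List.mem_cons_of_mem _ hr)) ?_
    intro i hi
    rcases eq_or_ne i p.1 with h | h
    · subst h; rw [Function.update_self]; exact hl p List.mem_cons_self
    · rw [Function.update_of_ne h]
      refine hb i ?_
      simp only [List.map_cons, List.mem_cons]
      push_neg
      exact ⟨h, hi⟩

private lemma covered_card_le {G : Type} [Group G] [Fintype G] [DecidableEq G]
    {n : ℕ} (hn : 1 ≤ n) (H : Subgroup (Fin n → G)) (s : ℕ) :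
    Nat.card {x : Fin n → G // ∃ h ∈ H, hammingDist x h ≤ s} ≤
      Nat.card H * (n * Fintype.card G) ^ s := by
  classical
  set P : (Fin n → G) → Prop := fun x => ∃ h ∈ H, hammingDist x h ≤ s with hP
  let f : H × (Fin s → Fin n × G) → {x : Fin n → G // P x} := fun p =>
    ⟨(List.ofFn p.2).foldl (fun a q => Function.update a q.1 q.2) (p.1 : Fin n → G), by
      refine ⟨p.1, p.1.2, ?_⟩
      have hsub : ({i | (List.ofFn p.2).foldl (fun a q => Function.update a q.1 q.2)
          (p.1 : Fin n → G) i ≠ (p.1 : Fin n → G) i} : Finset (Fin n)) ⊆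
          ((List.ofFn p.2).map Prod.fst).toFinset := by
        intro i hi
        simp only [Finset.mem_filter] at hi
        by_contra hmem
        exact hi.2 (foldl_update_apply_of_not_mem _ _ _ (by simpa using hmem))
      calc hammingDist _ _ ≤ ((List.ofFn p.2).map Prod.fst).toFinset.card :=
            Finset.card_le_card hsub
        _ ≤ ((List.ofFn p.2).map Prod.fst).length := (List.toFinset_card_le _)
        _ = s := by simp⟩
  have hsurj : Function.Surjective f := by
    rintro ⟨x, h, hH, hdist⟩
    set S : Finset (Fin n) := {i | x i ≠ h i} with hS
    have hlen : S.toList.length ≤ s := by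
      rw [Finset.length_toList]
      exact hdist
    let i0 : Fin n := ⟨0, hn⟩
    let u : Fin s → Fin n × G := fun j =>
      if hj : (j : ℕ) < S.toList.length then
        (S.toList.get ⟨j, hj⟩, x (S.toList.get ⟨j, hj⟩))
      else (i0, x i0)
    refine ⟨⟨⟨h, hH⟩, u⟩, ?_⟩
    refine Subtype.ext ?_
    refine foldl_update_eq x _ _ ?_ ?_
    · intro p hp
      rw [List.mem_ofFn] at hp
      obtain ⟨j, rfl⟩ := hp
      show (u j).2 = x (u j).1
      simp only [u]
      split <;> rfl
    · intro i hi
      by_contra hne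
      have hiS : i ∈ S.toList := by
        rw [Finset.mem_toList, hS]
        simp [Ne.symm hne]
      obtain ⟨j, hget⟩ := List.mem_iff_get.mp hiS
      have hjs : (j : ℕ) < s := lt_of_lt_of_le j.2 hlen
      refine hi ?_
      rw [List.mem_map]
      refine ⟨u ⟨j, hjs⟩, ?_, ?_⟩
      · rw [List.mem_ofFn]; exact ⟨⟨j, hjs⟩, rfl⟩
      · have hlt : ((⟨j, hjs⟩ : Fin s) : ℕ) < S.toList.length := j.2
        show (u ⟨j, hjs⟩).1 = i
        simp only [u, dif_pos hlt]
        simp only [List.get_eq_getElem] at hget ⊢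
        exact hget
  calc Nat.card {x : Fin n → G // P x} ≤ Nat.card (H × (Fin s → Fin n × G)) :=
        Nat.card_le_card_of_surjective f hsurj
    _ = Nat.card H * (n * Fintype.card G) ^ s := by
        simp [Nat.card_eq_fintype_card, Fintype.card_fun, Fintype.card_prod, mul_comm]

theorem remote_point_exists_general_group
    (G : Type) [Group G] [Fintype G] [DecidableEq G]
    (hG : 2 ≤ Fintype.card G)
    (c : ℝ) (hc : 0 < c) :
    ∃ N : ℕ, ∀ n : ℕ, N ≤ n →
      ∀ H : Subgroup (Fin n → G),
        (Nat.card H : ℝ) ≤ (Fintype.card G : ℝ) ^ ((n : ℝ) / 2) →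
        ∃ x : Fin n → G, ∀ h ∈ H, c * Real.logb 2 n < (hammingDist x h : ℝ) := by
  classical
  set q : ℕ := Fintype.card G with hq
  have hq2 : (2 : ℝ) ≤ (q : ℝ) := by exact_mod_cast hG
  have hlogq : 0 < Real.log q := Real.log_pos (by linarith)
  -- analytic eventual bound (over reals)
  have h1 : Tendsto (fun x : ℝ => Real.log x ^ 2 / x) atTop (nhds 0) := by
    simpa using Real.tendsto_pow_log_div_mul_add_atTop 1 0 2 one_ne_zero
  have h2 : Tendsto (fun x : ℝ => Real.log x / x) atTop (nhds 0) := by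
    simpa using Real.tendsto_pow_log_div_mul_add_atTop 1 0 1 one_ne_zero
  set A : ℝ := c / Real.log 2 with hA
  set B : ℝ := c * Real.log q / Real.log 2 with hB
  have h3 : Tendsto (fun x : ℝ => A * (Real.log x ^ 2 / x) + B * (Real.log x / x))
      atTop (nhds 0) := by
    simpa using (h1.const_mul A).add (h2.const_mul B)
  have h4 : ∀ᶠ x : ℝ in atTop,
      A * (Real.log x ^ 2 / x) + B * (Real.log x / x) < Real.log q / 2 :=
    h3.eventually_lt_const (by positivity)
  have hev : ∀ᶠ x : ℝ in atTop,
      Real.log (x * q) * (c * Real.logb 2 x) < Real.log q * (x / 2) := by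
    filter_upwards [h4, eventually_ge_atTop (1 : ℝ)] with x hx hx1
    have hxpos : (0 : ℝ) < x := by linarith
    have hlq : (0 : ℝ) < (q : ℝ) := by linarith
    have hlog2 : (0 : ℝ) < Real.log 2 := Real.log_pos one_lt_two
    rw [Real.log_mul (ne_of_gt hxpos) (ne_of_gt hlq)]
    have hlogb : Real.logb 2 x = Real.log x / Real.log 2 := rfl
    rw [hlogb]
    have e1 : (Real.log x + Real.log q) * (c * (Real.log x / Real.log 2))
        = A * Real.log x ^ 2 + B * Real.log x := by
      rw [hA, hB]; field_simp
    have e2 : (A * (Real.log x ^ 2 / x) + B * (Real.log x / x)) * x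
        = A * Real.log x ^ 2 + B * Real.log x := by
      field_simp
    have hx' := mul_lt_mul_of_pos_right hx hxpos
    rw [e2] at hx'
    rw [e1]
    linarith
  have hevn : ∀ᶠ n : ℕ in atTop,
      Real.log ((n : ℝ) * q) * (c * Real.logb 2 (n : ℝ)) < Real.log q * ((n : ℝ) / 2) :=
    tendsto_natCast_atTop_atTop.eventually hev
  obtain ⟨N, hN⟩ := (hevn.and (eventually_ge_atTop 1)).exists_forall_of_atTop
  refine ⟨N, fun n hn H hH => ?_⟩
  obtain ⟨hineq, hn1⟩ := hN n hn
  set s : ℕ := ⌊c * Real.logb 2 (n : ℝ)⌋₊ with hs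
  have hn1R : (1 : ℝ) ≤ (n : ℝ) := by exact_mod_cast hn1
  have hlogbnn : 0 ≤ c * Real.logb 2 (n : ℝ) :=
    mul_nonneg hc.le (Real.logb_nonneg one_lt_two hn1R)
  have hsle : (s : ℝ) ≤ c * Real.logb 2 (n : ℝ) := Nat.floor_le hlogbnn
  have hnq1 : (1 : ℝ) ≤ (n : ℝ) * q := by nlinarith
  have hlognq : 0 ≤ Real.log ((n : ℝ) * q) := Real.log_nonneg hnq1
  -- key real inequality : (n*q)^s < q^(n/2)
  have hpow : ((n * q : ℕ) : ℝ) ^ s < (q : ℝ) ^ ((n : ℝ) / 2) := by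
    have hnq0 : (0 : ℝ) < (n : ℝ) * q := by linarith
    have e1 : ((n * q : ℕ) : ℝ) ^ s = Real.exp (Real.log ((n : ℝ) * q) * s) := by
      rw [← Real.rpow_natCast (((n * q : ℕ) : ℝ)) s]
      push_cast
      rw [Real.rpow_def_of_pos hnq0]
    have e2 : (q : ℝ) ^ ((n : ℝ) / 2) = Real.exp (Real.log q * ((n : ℝ) / 2)) := by
      rw [Real.rpow_def_of_pos (by linarith)]
    rw [e1, e2]
    apply Real.exp_lt_exp.mpr
    calc Real.log ((n : ℝ) * q) * s ≤ Real.log ((n : ℝ) * q) * (c * Real.logb 2 (n : ℝ)) :=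
          mul_le_mul_of_nonneg_left hsle hlognq
      _ < Real.log q * ((n : ℝ) / 2) := hineq
  -- counting
  have hcard : Nat.card {x : Fin n → G // ∃ h ∈ H, hammingDist x h ≤ s} <
      Nat.card (Fin n → G) := by
    have hle := covered_card_le hn1 H s
    have hfull : (Nat.card (Fin n → G) : ℝ) = (q : ℝ) ^ ((n : ℝ)) := by
      rw [Nat.card_eq_fintype_card, Fintype.card_fun, Fintype.card_fin, ← hq]
      push_cast
      rw [← Real.rpow_natCast]
    have hR : (Nat.card {x : Fin n → G // ∃ h ∈ H, hammingDist x h ≤ s} : ℝ) <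
        (Nat.card (Fin n → G) : ℝ) := by
      calc (Nat.card {x : Fin n → G // ∃ h ∈ H, hammingDist x h ≤ s} : ℝ)
          ≤ (Nat.card H : ℝ) * ((n * q : ℕ) : ℝ) ^ s := by exact_mod_cast hle
        _ ≤ (q : ℝ) ^ ((n : ℝ) / 2) * ((n * q : ℕ) : ℝ) ^ s := by
            have : (0:ℝ) ≤ ((n * q : ℕ) : ℝ) ^ s := by positivity
            exact mul_le_mul_of_nonneg_right hH this
        _ < (q : ℝ) ^ ((n : ℝ) / 2) * (q : ℝ) ^ ((n : ℝ) / 2) :=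
            mul_lt_mul_of_pos_left hpow (Real.rpow_pos_of_pos (by linarith) _)
        _ = (q : ℝ) ^ ((n : ℝ)) := by
            rw [← Real.rpow_add (by linarith : (0:ℝ) < (q:ℝ))]; ring_nf
        _ = (Nat.card (Fin n → G) : ℝ) := hfull.symm
    exact_mod_cast hR
  have hex : ∃ x : Fin n → G, ¬ ∃ h ∈ H, hammingDist x h ≤ s := by
    by_contra hall
    push_neg at hall
    have : Nat.card (Fin n → G) ≤
        Nat.card {x : Fin n → G // ∃ h ∈ H, hammingDist x h ≤ s} := by
      apply Nat.card_le_card_of_injective (fun x => ⟨x, hall x⟩)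
      intro a b hab
      simpa using congrArg Subtype.val hab
    omega
  obtain ⟨x, hx⟩ := hex
  push_neg at hx
  refine ⟨x, fun h hh => ?_⟩
  have hgt : s < hammingDist x h := hx h hh
  have : (s : ℝ) + 1 ≤ (hammingDist x h : ℝ) := by exact_mod_cast hgt
  have hlt : c * Real.logb 2 (n : ℝ) < (s : ℝ) + 1 := by
    have := Nat.lt_floor_add_one (c * Real.logb 2 (n : ℝ))
    exact_mod_cast this
  linarith
end

section
/- For every real constant c > 0 and all sufficiently large n, there exists a nonempty finite symmetric multiset S of elements of 𝔽₂^n and a linear subspace L of 𝔽₂^n of dimension ⌊n/2⌋ such that: (a) S is (1/n^c)-biased, i.e., for every nonzero a ∈ 𝔽₂^n, |∑_{s∈S} (-1)^{⟨a,s⟩}| ≤ |S|/n^c (the sum counted with multiplicity, where ⟨a,s⟩ = ∑_i a_i·s_i over 𝔽₂); and (b) every element s of S satisfies Δ(s,L) ≤ 20c·log₂ n, i.e., there exists u ∈ L with Hamming distance Δ(s,u) ≤ 20c·log₂ n. -/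
open Finset

namespace ECTS

abbrev Good (n : ℕ) (v : Fin n → ZMod 2) : Prop :=
  n ≤ 32 * hammingNorm v ∧ n ≤ 32 * (n - hammingNorm v)

lemma card_norm_eq (n j : ℕ) :
    (univ.filter fun v : Fin n → ZMod 2 => hammingNorm v = j).card = n.choose j := by
  classical
  rw [show n.choose j = (Finset.powersetCard j (univ : Finset (Fin n))).card by
    rw [Finset.card_powersetCard, card_univ, Fintype.card_fin]]
  apply Finset.card_bij (fun v _ => univ.filter fun i => v i ≠ 0)
  · intro v hv
    simp only [mem_filter, mem_univ, true_and] at hv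
    simp [Finset.mem_powersetCard, ← hv, hammingNorm]
  · intro v hv w hw h
    funext i
    have hv2 : ∀ z : ZMod 2, z ≠ 0 → z = 1 := by decide
    have := Finset.ext_iff.1 h i
    simp only [mem_filter, mem_univ, true_and] at this
    by_cases h1 : v i = 0 <;> by_cases h2 : w i = 0 <;>
      simp_all [hv2 (v i), hv2 (w i)]
  · intro s hs
    refine ⟨fun i => if i ∈ s then 1 else 0, ?_, ?_⟩
    · simp only [Finset.mem_powersetCard] at hs
      simp only [mem_filter, mem_univ, true_and, hammingNorm, ← hs.2]
      congr 1
      ext i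
      by_cases h : i ∈ s <;> simp [h]
    · ext i
      by_cases h : i ∈ s <;> simp [h]

lemma bad_card_le (n : ℕ) :
    (univ.filter fun v : Fin n → ZMod 2 => ¬ Good n v).card
      ≤ 2 * ∑ j ∈ range (n / 32 + 1), n.choose j := by
  classical
  set t := n / 32 + 1 with ht
  have hsub : (univ.filter fun v : Fin n → ZMod 2 => ¬ Good n v) ⊆
      ((range t).biUnion fun j => univ.filter fun v : Fin n → ZMod 2 => hammingNorm v = j) ∪
      ((range t).biUnion fun j =>
        univ.filter fun v : Fin n → ZMod 2 => hammingNorm v = n - j) := by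
    intro v hv
    simp only [mem_filter, mem_univ, true_and, Good, not_and_or, not_le] at hv
    have hle : hammingNorm v ≤ n := by
      simpa using hammingNorm_le_card_fintype (x := v)
    rcases hv with hv | hv
    · apply Finset.mem_union_left
      refine Finset.mem_biUnion.2 ⟨hammingNorm v, ?_, by simp⟩
      rw [Finset.mem_range]; omega
    · apply Finset.mem_union_right
      refine Finset.mem_biUnion.2 ⟨n - hammingNorm v, ?_, ?_⟩
      · rw [Finset.mem_range]; omega
      · simp only [mem_filter, mem_univ, true_and]; omega
  calc (univ.filter fun v : Fin n → ZMod 2 => ¬ Good n v).card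
      ≤ _ := Finset.card_le_card hsub
    _ ≤ ((range t).biUnion fun j =>
          univ.filter fun v : Fin n → ZMod 2 => hammingNorm v = j).card +
        ((range t).biUnion fun j =>
          univ.filter fun v : Fin n → ZMod 2 => hammingNorm v = n - j).card :=
        Finset.card_union_le _ _
    _ ≤ (∑ j ∈ range t, n.choose j) + (∑ j ∈ range t, n.choose (n - j)) := by
        gcongr
        · calc _ ≤ _ := Finset.card_biUnion_le
            _ = _ := by simp [card_norm_eq]
        · calc _ ≤ _ := Finset.card_biUnion_le
            _ = _ := by simp [card_norm_eq]
    _ ≤ (∑ j ∈ range t, n.choose j) + (∑ j ∈ range t, n.choose j) := by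
        gcongr with j hj
        have hjn : j ≤ n := by
          rw [Finset.mem_range] at hj
          have := Nat.div_le_self n 32
          omega
        rw [Nat.choose_symm hjn]
    _ = 2 * ∑ j ∈ range t, n.choose j := by ring

lemma chernoff (n t : ℕ) (ht : t ≤ n) :
    63 ^ (n - t) * ∑ j ∈ range t, n.choose j ≤ 64 ^ n := by
  calc 63 ^ (n - t) * ∑ j ∈ range t, n.choose j
      = ∑ j ∈ range t, 63 ^ (n - t) * n.choose j := by rw [Finset.mul_sum]
    _ ≤ ∑ j ∈ range t, 63 ^ (n - j) * n.choose j := by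
        apply Finset.sum_le_sum
        intro j hj
        have : n - t ≤ n - j := by
          rw [Finset.mem_range] at hj; omega
        exact Nat.mul_le_mul_right _ (Nat.pow_le_pow_right (by norm_num) this)
    _ ≤ ∑ j ∈ range (n + 1), 63 ^ (n - j) * n.choose j := by
        apply Finset.sum_le_sum_of_subset
        apply Finset.range_subset_range.2; omega
    _ = 64 ^ n := by
        have := add_pow (1 : ℕ) 63 n
        simp only [one_pow, one_mul] at this
        rw [show (64 : ℕ) = 1 + 63 by norm_num, this]
        apply Finset.sum_congr rfl
        intro j hj
        push_cast
        ring

lemma key_numeric (n : ℕ) (hn : 1000 ≤ n) :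
    2 ^ ((n + 1) / 2 + 2) * 64 ^ n ≤ 63 ^ (n - (n / 32 + 1)) * 2 ^ n := by
  set m := n - (n / 32 + 1) with hm
  have h63 : (2 : ℕ) ^ 59 ≤ 63 ^ 10 := by norm_num
  have h1 : (2 : ℕ) ^ (59 * (m / 10)) ≤ 63 ^ m := by
    calc (2 : ℕ) ^ (59 * (m / 10)) = (2 ^ 59) ^ (m / 10) := by rw [pow_mul]
      _ ≤ (63 ^ 10) ^ (m / 10) := Nat.pow_le_pow_left h63 _
      _ = 63 ^ (10 * (m / 10)) := by rw [pow_mul]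
      _ ≤ 63 ^ m := Nat.pow_le_pow_right (by norm_num) (Nat.mul_div_le m 10)
  have h2 : (n + 1) / 2 + 2 + 6 * n ≤ 59 * (m / 10) + n := by omega
  calc 2 ^ ((n + 1) / 2 + 2) * 64 ^ n = 2 ^ ((n + 1) / 2 + 2 + 6 * n) := by
        rw [show (64 : ℕ) = 2 ^ 6 by norm_num, ← pow_mul, ← pow_add]
    _ ≤ 2 ^ (59 * (m / 10) + n) := Nat.pow_le_pow_right (by norm_num) h2
    _ = 2 ^ (59 * (m / 10)) * 2 ^ n := by rw [pow_add]
    _ ≤ 63 ^ m * 2 ^ n := Nat.mul_le_mul_right _ h1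

lemma code_exists (n : ℕ) (hn : 1000 ≤ n) :
    ∃ g : Fin ((n + 1) / 2) → Fin n → ZMod 2,
      ∀ x : Fin ((n + 1) / 2) → ZMod 2, x ≠ 0 → Good n (∑ j, x j • g j) := by
  classical
  set k := (n + 1) / 2 with hk
  by_contra hcon
  push_neg at hcon
  set Bad : Finset (Fin n → ZMod 2) := univ.filter (fun v => ¬ Good n v) with hBad
  -- every G is bad
  have hsub : (univ : Finset (Fin k → Fin n → ZMod 2)) ⊆
      ((univ : Finset (Fin k → ZMod 2)).erase 0).biUnion
        (fun x => univ.filter fun G => (∑ j, x j • G j) ∈ Bad) := by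
    intro G _
    obtain ⟨x, hx0, hxg⟩ := hcon G
    refine Finset.mem_biUnion.2 ⟨x, Finset.mem_erase.2 ⟨hx0, mem_univ _⟩, ?_⟩
    simp only [hBad, mem_filter, mem_univ, true_and]
    exact hxg
  -- fiber counting
  have hfiber : ∀ x : Fin k → ZMod 2, x ≠ 0 →
      (univ.filter fun G : Fin k → Fin n → ZMod 2 => (∑ j, x j • G j) ∈ Bad).card
        = Bad.card * (2 ^ n) ^ (k - 1) := by
    intro x hx
    obtain ⟨j0, hj0⟩ : ∃ j0, x j0 = 1 := by
      by_contra h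
      push_neg at h
      apply hx
      funext j
      have h2 : ∀ z : ZMod 2, z ≠ 1 → z = 0 := by decide
      exact h2 _ (h j)
    have htwo : ∀ v : Fin n → ZMod 2, v + v = 0 := by
      intro v; funext i
      exact (by decide : ∀ z : ZMod 2, z + z = 0) _
    set e : (Fin k → Fin n → ZMod 2) → (Fin k → Fin n → ZMod 2) :=
      fun G => Function.update G j0 (∑ j, x j • G j) with he
    have hesum : ∀ G, (∑ j, x j • e G j) = G j0 := by
      intro G
      have hsplit : ∀ H : Fin k → Fin n → ZMod 2,
          (∑ j, x j • H j) = x j0 • H j0 + ∑ j ∈ univ.erase j0, x j • H j :=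
        fun H => (Finset.add_sum_erase _ _ (mem_univ j0)).symm
      rw [hsplit]
      have h1 : ∀ j ∈ univ.erase j0, x j • e G j = x j • G j := by
        intro j hj
        rw [he]
        simp [Function.update_of_ne (Finset.mem_erase.1 hj).1]
      rw [Finset.sum_congr rfl h1]
      have h2 : e G j0 = ∑ j, x j • G j := by simp [he]
      rw [h2, hj0, one_smul]
      have h3 := hsplit G
      rw [hj0, one_smul] at h3
      have h4 : (∑ j ∈ univ.erase j0, x j • G j) = (∑ j, x j • G j) + G j0 := by
        rw [h3, add_comm (G j0), add_assoc, htwo, add_zero]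
      rw [h4, ← add_assoc, htwo, zero_add]
    have hee : ∀ G, e (e G) = G := by
      intro G
      funext j
      rcases eq_or_ne j j0 with rfl | hne
      · rw [he]
        simp only [Function.update_self]
        exact hesum G
      · simp [he, Function.update_of_ne hne]
    have hcard : (univ.filter fun G : Fin k → Fin n → ZMod 2 =>
        (∑ j, x j • G j) ∈ Bad).card
          = (univ.filter fun G : Fin k → Fin n → ZMod 2 => G j0 ∈ Bad).card := by
      apply Finset.card_bij' (fun G _ => e G) (fun G _ => e G)
      · intro G hG
        simp only [mem_filter, mem_univ, true_and] at hG ⊢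
        rw [he]
        simpa using hG
      · intro G hG
        simp only [mem_filter, mem_univ, true_and] at hG ⊢
        rw [hesum G]
        exact hG
      · intro G _; exact hee G
      · intro G _; exact hee G
    rw [hcard]
    have hpi : (univ.filter fun G : Fin k → Fin n → ZMod 2 => G j0 ∈ Bad)
        = Fintype.piFinset (fun j => if j = j0 then Bad else univ) := by
      ext G
      simp only [mem_filter, mem_univ, true_and, Fintype.mem_piFinset]
      constructor
      · intro h j
        rcases eq_or_ne j j0 with rfl | hne
        · simpa using h
        · simp [hne]
      · intro h
        have := h j0
        simpa using this
    rw [hpi, Fintype.card_piFinset]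
    rw [← Finset.mul_prod_erase univ _ (mem_univ j0)]
    simp only [if_pos rfl]
    congr 1
    have : ∀ j ∈ univ.erase j0, ((if j = j0 then Bad else univ) : Finset _).card = 2 ^ n := by
      intro j hj
      rw [if_neg (Finset.mem_erase.1 hj).1, card_univ]
      rw [Fintype.card_fun, ZMod.card, Fintype.card_fin]
    rw [Finset.prod_congr rfl this, Finset.prod_const, Finset.card_erase_of_mem (mem_univ j0),
      card_univ, Fintype.card_fin]
  -- put together
  have htotal : ((2 ^ n) ^ k : ℕ) ≤ (2 ^ k - 1) * (Bad.card * (2 ^ n) ^ (k - 1)) := by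
    calc ((2 ^ n) ^ k : ℕ) = (univ : Finset (Fin k → Fin n → ZMod 2)).card := by
          rw [card_univ, Fintype.card_fun, Fintype.card_fun, ZMod.card, Fintype.card_fin,
            Fintype.card_fin]
      _ ≤ _ := Finset.card_le_card hsub
      _ ≤ ∑ x ∈ (univ : Finset (Fin k → ZMod 2)).erase 0,
            (univ.filter fun G : Fin k → Fin n → ZMod 2 => (∑ j, x j • G j) ∈ Bad).card :=
          Finset.card_biUnion_le
      _ = ∑ x ∈ (univ : Finset (Fin k → ZMod 2)).erase 0, Bad.card * (2 ^ n) ^ (k - 1) := by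
          apply Finset.sum_congr rfl
          intro x hx
          exact hfiber x (Finset.mem_erase.1 hx).1
      _ = (2 ^ k - 1) * (Bad.card * (2 ^ n) ^ (k - 1)) := by
          rw [Finset.sum_const, Finset.card_erase_of_mem (mem_univ 0), card_univ,
            Fintype.card_fun, ZMod.card, Fintype.card_fin, smul_eq_mul]
  -- numeric contradiction
  have hkn : k ≥ 1 := by omega
  have hP : (0 : ℕ) < (2 ^ n) ^ (k - 1) := by positivity
  have h2n : (2 : ℕ) ^ n ≤ (2 ^ k - 1) * Bad.card := by
    have : (2 ^ n) ^ k = 2 ^ n * (2 ^ n) ^ (k - 1) := by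
      rw [← pow_succ']
      congr 1
      omega
    rw [this] at htotal
    have := Nat.le_of_mul_le_mul_right (by
      calc 2 ^ n * (2 ^ n) ^ (k - 1) ≤ _ := htotal
        _ = ((2 ^ k - 1) * Bad.card) * (2 ^ n) ^ (k - 1) := by ring) hP
    exact this
  set t := n / 32 + 1 with htdef
  have htn : t ≤ n := by omega
  have hBc : Bad.card * 63 ^ (n - t) ≤ 2 * 64 ^ n := by
    calc Bad.card * 63 ^ (n - t) ≤ (2 * ∑ j ∈ range t, n.choose j) * 63 ^ (n - t) :=
          Nat.mul_le_mul_right _ (bad_card_le n)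
      _ = 2 * (63 ^ (n - t) * ∑ j ∈ range t, n.choose j) := by ring
      _ ≤ 2 * 64 ^ n := Nat.mul_le_mul_left _ (chernoff n t htn)
  have hkey := key_numeric n hn
  -- chain: 2^(k+2) * 64^n ≤ 63^(n-t) * 2^n ≤ 63^(n-t) * (2^k-1) * Bad.card
  --        ≤ 2^k * (Bad.card * 63^(n-t)) ≤ 2^k * 2 * 64 ^n = 2^(k+1) * 64^n
  have hchain : 2 ^ (k + 2) * 64 ^ n ≤ 2 ^ (k + 1) * 64 ^ n := by
    calc 2 ^ (k + 2) * 64 ^ n ≤ 63 ^ (n - t) * 2 ^ n := hkey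
      _ ≤ 63 ^ (n - t) * ((2 ^ k - 1) * Bad.card) := Nat.mul_le_mul_left _ h2n
      _ ≤ 63 ^ (n - t) * (2 ^ k * Bad.card) := by
          exact Nat.mul_le_mul_left _ (Nat.mul_le_mul_right _ (Nat.sub_le _ _))
      _ = 2 ^ k * (Bad.card * 63 ^ (n - t)) := by ring
      _ ≤ 2 ^ k * (2 * 64 ^ n) := Nat.mul_le_mul_left _ hBc
      _ = 2 ^ (k + 1) * 64 ^ n := by ring
  have : (2 : ℕ) ^ (k + 2) ≤ 2 ^ (k + 1) :=
    Nat.le_of_mul_le_mul_right hchain (by positivity)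
  have hlt : (2 : ℕ) ^ (k + 1) < 2 ^ (k + 2) :=
    Nat.pow_lt_pow_right one_lt_two (by omega)
  omega


lemma zmod2_cases : ∀ z : ZMod 2, z = 0 ∨ z = 1 := by decide

lemma chi_add (x y : ZMod 2) :
    ((-1 : ℝ)) ^ (x + y).val = (-1 : ℝ) ^ x.val * (-1 : ℝ) ^ y.val := by
  rcases zmod2_cases x with rfl | rfl <;> rcases zmod2_cases y with rfl | rfl <;>
    norm_num [show ((1 : ZMod 2) + 1).val = 0 by decide, show ((0 : ZMod 2) + 1).val = 1 by decide,
      show ((1 : ZMod 2) + 0).val = 1 by decide, show ((0 : ZMod 2) + 0).val = 0 by decide,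
      show ((0 : ZMod 2)).val = 0 by decide, show ((2 : ZMod 2)).val = 0 by decide, show ((1 : ZMod 2)).val = 1 by decide]

lemma hammingNorm_add_le {n : ℕ} (x y : Fin n → ZMod 2) :
    hammingNorm (x + y) ≤ hammingNorm x + hammingNorm y := by
  have h := hammingDist_triangle (x + y) y 0
  rw [hammingDist_zero_right, hammingDist_zero_right] at h
  rwa [hammingDist_eq_hammingNorm, show -(x + y) + y = x by
    funext i; exact (by decide : ∀ a b : ZMod 2, -(a + b) + b = a) (x i) (y i)] at h

lemma hammingNorm_single_le {n : ℕ} (i : Fin n) :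
    hammingNorm (Pi.single (M := fun _ : Fin n => ZMod 2) i 1) ≤ 1 := by
  classical
  have h : (Finset.univ.filter fun j =>
      Pi.single (M := fun _ : Fin n => ZMod 2) i 1 j ≠ 0) ⊆ {i} := by
    intro j hj
    simp only [mem_filter, mem_univ, true_and, ne_eq] at hj
    simp only [Finset.mem_singleton]
    by_contra hne
    exact hj (by rw [Pi.single_apply, if_neg hne])
  calc hammingNorm (Pi.single (M := fun _ : Fin n => ZMod 2) i 1)
      = (Finset.univ.filter fun j =>
          Pi.single (M := fun _ : Fin n => ZMod 2) i 1 j ≠ 0).card := rfl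
    _ ≤ ({i} : Finset (Fin n)).card := Finset.card_le_card h
    _ = 1 := Finset.card_singleton _

lemma pow_bias_le (c : ℝ) (hc : 0 < c) (n : ℕ) (hn : 1 ≤ n)
    (hlog : 1 ≤ c * Real.log n) :
    ((15 : ℝ) / 16) ^ (⌊20 * c * Real.logb 2 n⌋₊) * (n : ℝ) ^ (c : ℝ) ≤ 1 := by
  set w := ⌊20 * c * Real.logb 2 n⌋₊ with hw
  have hn0 : (0 : ℝ) < n := by positivity
  have hX : 0 < c * Real.log n := lt_of_lt_of_le one_pos hlog
  have hl2 : Real.log 2 < 0.6931471808 := Real.log_two_lt_d9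
  have hl2pos : 0 < Real.log 2 := Real.log_pos one_lt_two
  have hwlb : 20 * c * Real.logb 2 n - 1 < (w : ℝ) := Nat.sub_one_lt_floor _
  have h2 : 28 * (c * Real.log n) ≤ 20 * c * Real.logb 2 n := by
    rw [Real.logb, div_eq_mul_inv]
    have h3 : 28 * (c * Real.log n) * Real.log 2 ≤ 20 * (c * Real.log n) := by
      nlinarith [mul_le_mul_of_nonneg_left hl2.le hX.le]
    calc 28 * (c * Real.log n) = 28 * (c * Real.log n) * Real.log 2 * (Real.log 2)⁻¹ := by
          field_simp
      _ ≤ 20 * (c * Real.log n) * (Real.log 2)⁻¹ := by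
          apply mul_le_mul_of_nonneg_right h3 (by positivity)
      _ = 20 * c * (Real.log n * (Real.log 2)⁻¹) := by ring
  have hwge : 27 * (c * Real.log n) ≤ (w : ℝ) := by linarith
  have hlg : (1 : ℝ) / 16 ≤ Real.log (16 / 15) := by
    have h4 := Real.log_le_sub_one_of_pos (show (0 : ℝ) < 15 / 16 by norm_num)
    have hinv : Real.log (16 / 15) = -Real.log (15 / 16) := by
      rw [← Real.log_inv]
      norm_num
    linarith
  have hkey : c * Real.log n ≤ (w : ℝ) * Real.log (16 / 15) := by
    calc c * Real.log n ≤ 27 * (c * Real.log n) * (1 / 16) := by linarith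
      _ ≤ (w : ℝ) * Real.log (16 / 15) := by
          apply mul_le_mul hwge hlg (by norm_num) (Nat.cast_nonneg _)
  have hrpow : (n : ℝ) ^ (c : ℝ) ≤ ((16 : ℝ) / 15) ^ w := by
    rw [Real.rpow_def_of_pos hn0, ← Real.rpow_natCast ((16 : ℝ) / 15) w,
      Real.rpow_def_of_pos (by norm_num)]
    apply Real.exp_le_exp.2
    linarith [hkey]
  calc ((15 : ℝ) / 16) ^ w * (n : ℝ) ^ (c : ℝ)
      ≤ ((15 : ℝ) / 16) ^ w * ((16 : ℝ) / 15) ^ w := by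
        apply mul_le_mul_of_nonneg_left hrpow (by positivity)
    _ = 1 := by rw [← mul_pow]; norm_num

end ECTS

open ECTS in
set_option maxHeartbeats 3200000 in
theorem expander_close_to_subspace
    (c : ℝ) (hc : 0 < c) :
    ∃ N : ℕ, ∀ n : ℕ, N ≤ n →
      ∃ (S : Multiset (Fin n → ZMod 2)) (L : Submodule (ZMod 2) (Fin n → ZMod 2)),
        S ≠ 0 ∧
        S.map (fun s => -s) = S ∧
        Module.finrank (ZMod 2) L = n / 2 ∧
        (∀ a : Fin n → ZMod 2, a ≠ 0 →
          |(S.map (fun s => (-1 : ℝ) ^ (∑ i, a i * s i).val)).sum|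
            ≤ (S.card : ℝ) / (n : ℝ) ^ c) ∧
        (∀ s ∈ S, ∃ u ∈ L, (hammingDist s u : ℝ) ≤ 20 * c * Real.logb 2 n) := by
  classical
  refine ⟨1000 + ⌈Real.exp (1 / c)⌉₊, fun n hn => ?_⟩
  have hn1000 : 1000 ≤ n := by omega
  have hnR : Real.exp (1 / c) ≤ (n : ℝ) := by
    calc Real.exp (1 / c) ≤ (⌈Real.exp (1 / c)⌉₊ : ℝ) := Nat.le_ceil _
      _ ≤ (n : ℝ) := by exact_mod_cast by omega
  have hlog : 1 ≤ c * Real.log n := by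
    have hlogn : 1 / c ≤ Real.log n :=
      (Real.le_log_iff_exp_le (by positivity)).2 hnR
    calc (1 : ℝ) = c * (1 / c) := by field_simp
      _ ≤ c * Real.log n := mul_le_mul_of_nonneg_left hlogn hc.le
  obtain ⟨g, hg⟩ := code_exists n hn1000
  -- the bilinear form
  set Bf : LinearMap.BilinForm (ZMod 2) (Fin n → ZMod 2) := Matrix.toBilin' 1 with hBf
  have hBfap : ∀ x y : Fin n → ZMod 2, Bf x y = ∑ i, x i * y i := by
    intro x y
    rw [hBf, Matrix.toBilin'_apply']
    simp [dotProduct, Matrix.one_mulVec]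
  have hsymm : ∀ x y, Bf x y = Bf y x := by
    intro x y
    rw [hBfap, hBfap]
    exact Finset.sum_congr rfl fun i _ => mul_comm _ _
  have hrefl : Bf.IsRefl := by
    intro x y h
    rw [hsymm y x]
    exact h
  have hnd : Bf.Nondegenerate := by
    have hsl : LinearMap.SeparatingLeft Bf := by
      intro x hx
      funext i
      have h := hx (Pi.single i 1)
      rw [hBfap] at h
      simpa [Pi.single_apply, mul_ite] using h
    exact ⟨hsl, fun y hy => hsl y fun x => (hsymm y x).trans (hy x)⟩
  have hnz : ∀ x : Fin ((n + 1) / 2) → ZMod 2, x ≠ 0 → (∑ j, x j • g j) ≠ 0 := by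
    intro x hx h0
    have h1 := (hg x hx).1
    rw [h0, hammingNorm_zero] at h1
    omega
  have hli : LinearIndependent (ZMod 2) g := by
    rw [Fintype.linearIndependent_iff]
    intro x hx
    by_contra hne
    push_neg at hne
    obtain ⟨j, hj⟩ := hne
    exact hnz x (fun h => hj (congrFun h j)) hx
  set C := Submodule.span (ZMod 2) (Set.range g) with hC
  set L := Bf.orthogonal C with hL
  have hfrV : Module.finrank (ZMod 2) (Fin n → ZMod 2) = n := by
    simp [Module.finrank_pi]
  have hCrank : Module.finrank (ZMod 2) C = (n + 1) / 2 := by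
    rw [hC, finrank_span_eq_card hli, Fintype.card_fin]
  have hLrank : Module.finrank (ZMod 2) L = n / 2 := by
    rw [hL, LinearMap.BilinForm.finrank_orthogonal hnd, hfrV, hCrank]
    omega
  -- dichotomy
  have hdich : ∀ a : Fin n → ZMod 2, a ≠ 0 →
      (∃ u ∈ L, (∑ i, a i * u i) = 1) ∨ Good n a := by
    intro a ha
    by_cases hmem : ∀ u ∈ L, Bf u a = 0
    · right
      have haC : a ∈ C := by
        have h1 : a ∈ Bf.orthogonal L :=
          (LinearMap.BilinForm.mem_orthogonal_iff).2 fun u hu => hmem u hu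
        rw [hL, LinearMap.BilinForm.orthogonal_orthogonal hnd hrefl] at h1
        exact h1
      obtain ⟨x, hxa⟩ := (Submodule.mem_span_range_iff_exists_fun (ZMod 2)).1 (hC ▸ haC)
      have hx0 : x ≠ 0 := by
        intro h
        apply ha
        rw [← hxa, h]
        simp
      have h2 := hg x hx0
      rwa [hxa] at h2
    · left
      push_neg at hmem
      obtain ⟨u, hu, hune⟩ := hmem
      refine ⟨u, hu, ?_⟩
      have h1 : ∀ z : ZMod 2, z ≠ 0 → z = 1 := by decide
      have h2 := h1 _ hune
      rw [hBfap] at h2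
      rw [← h2]
      exact Finset.sum_congr rfl fun i _ => mul_comm _ _
  -- the multiset
  haveI : NeZero n := ⟨by omega⟩
  haveI : Fintype L := Fintype.ofFinite _
  set w := ⌊20 * c * Real.logb 2 n⌋₊ with hwdef
  set φ : L × (Fin w → Fin n) → (Fin n → ZMod 2) :=
    fun p => (p.1 : Fin n → ZMod 2) + ∑ j, Pi.single (p.2 j) 1 with hφ
  refine ⟨(univ : Finset (L × (Fin w → Fin n))).val.map φ, L, ?_, ?_, hLrank, ?_, ?_⟩
  · intro h0
    rw [Multiset.map_eq_zero, Finset.val_eq_zero] at h0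
    exact Finset.univ_nonempty.ne_empty h0
  · have hneg : (fun s : Fin n → ZMod 2 => -s) = id := by
      funext s
      funext i
      exact (by decide : ∀ z : ZMod 2, -z = z) (s i)
    rw [hneg, Multiset.map_id]
  · -- bias
    intro a ha
    have hinner_add : ∀ s t : Fin n → ZMod 2,
        (∑ i, a i * (s + t) i) = (∑ i, a i * s i) + ∑ i, a i * t i := by
      intro s t
      simp [mul_add, Finset.sum_add_distrib]
    have hchi_add : ∀ s t : Fin n → ZMod 2,
        ((-1 : ℝ)) ^ (∑ i, a i * (s + t) i).val
          = (-1 : ℝ) ^ (∑ i, a i * s i).val * (-1 : ℝ) ^ (∑ i, a i * t i).val := by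
      intro s t
      rw [hinner_add]
      exact chi_add _ _
    have hchi_single : ∀ i0 : Fin n,
        (∑ i, a i * Pi.single (M := fun _ : Fin n => ZMod 2) i0 1 i) = a i0 := by
      intro i0
      simp [Pi.single_apply, mul_ite, Finset.sum_ite_eq']
    have hchi_sum : ∀ (Q : Finset (Fin w)) (v : Fin w → Fin n → ZMod 2),
        ((-1 : ℝ)) ^ (∑ i, a i * (∑ j ∈ Q, v j) i).val
          = ∏ j ∈ Q, (-1 : ℝ) ^ (∑ i, a i * v j i).val := by
      intro Q v
      induction Q using Finset.cons_induction with
      | empty => simp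
      | cons jj Q hjj ih =>
        rw [Finset.sum_cons, Finset.prod_cons, hchi_add, ih]
    set P : ℝ := ∑ i, (-1 : ℝ) ^ (a i).val with hP
    set A : ℝ := ∑ u : L, (-1 : ℝ) ^ (∑ i, a i * (u : Fin n → ZMod 2) i).val with hA
    have hterm : ∀ (u : L) (f : Fin w → Fin n),
        ((-1 : ℝ) ^ (∑ i, a i * (φ (u, f)) i).val)
          = ((-1 : ℝ) ^ (∑ i, a i * (u : Fin n → ZMod 2) i).val)
            * ∏ j, (-1 : ℝ) ^ (a (f j)).val := by
      intro u f
      rw [hφ]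
      dsimp only
      rw [hchi_add, hchi_sum]
      congr 1
      exact Finset.prod_congr rfl fun j _ => by rw [hchi_single]
    have hsum : (((univ : Finset (L × (Fin w → Fin n))).val.map φ).map
        (fun s => (-1 : ℝ) ^ (∑ i, a i * s i).val)).sum = A * P ^ w := by
      rw [Multiset.map_map]
      have hrw : (((univ : Finset (L × (Fin w → Fin n))).val).map
          ((fun s => (-1 : ℝ) ^ (∑ i, a i * s i).val) ∘ φ)).sum
          = ∑ p : L × (Fin w → Fin n), (-1 : ℝ) ^ (∑ i, a i * (φ p) i).val := rfl
      rw [hrw, Fintype.sum_prod_type]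
      calc ∑ u : L, ∑ f : Fin w → Fin n, ((-1 : ℝ) ^ (∑ i, a i * (φ (u, f)) i).val)
          = ∑ u : L, ∑ f : Fin w → Fin n,
              ((-1 : ℝ) ^ (∑ i, a i * (u : Fin n → ZMod 2) i).val)
                * ∏ j, (-1 : ℝ) ^ (a (f j)).val :=
            Finset.sum_congr rfl fun u _ => Finset.sum_congr rfl fun f _ => hterm u f
        _ = A * ∑ f : Fin w → Fin n, ∏ j, (-1 : ℝ) ^ (a (f j)).val := by
            rw [hA, Finset.sum_mul]
            exact Finset.sum_congr rfl fun u _ => (Finset.mul_sum _ _ _).symm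
        _ = A * P ^ w := by
            congr 1
            rw [hP, Fintype.sum_pow]
    rw [hsum]
    have hcardS : Multiset.card ((univ : Finset (L × (Fin w → Fin n))).val.map φ)
        = Fintype.card L * n ^ w := by
      rw [Multiset.card_map, ← Finset.card_def, Finset.card_univ, Fintype.card_prod,
        Fintype.card_fun, Fintype.card_fin, Fintype.card_fin]
    rw [hcardS]
    have hnc : (0 : ℝ) < (n : ℝ) ^ (c : ℝ) := Real.rpow_pos_of_pos (by positivity) _
    rcases hdich a ha with ⟨u0, hu0L, hu0⟩ | hgood
    · -- character sum over L vanishes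
      have hstep : ∀ u : L,
          (-1 : ℝ) ^ (∑ i, a i * (((u + ⟨u0, hu0L⟩ : L) : Fin n → ZMod 2)) i).val
            = -((-1 : ℝ) ^ (∑ i, a i * (u : Fin n → ZMod 2) i).val) := by
        intro u
        have hcoe : (((u + ⟨u0, hu0L⟩ : L) : Fin n → ZMod 2))
            = (u : Fin n → ZMod 2) + u0 := rfl
        rw [hcoe, hchi_add, hu0]
        norm_num [show ((1 : ZMod 2)).val = 1 by decide]
      have h1 : (∑ u : L, (-1 : ℝ) ^
          (∑ i, a i * (((u + ⟨u0, hu0L⟩ : L) : Fin n → ZMod 2)) i).val) = A := by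
        rw [hA]
        exact Equiv.sum_comp (Equiv.addRight (⟨u0, hu0L⟩ : L))
          (fun v : L => (-1 : ℝ) ^ (∑ i, a i * (v : Fin n → ZMod 2) i).val)
      have h2 : (∑ u : L, (-1 : ℝ) ^
          (∑ i, a i * (((u + ⟨u0, hu0L⟩ : L) : Fin n → ZMod 2)) i).val) = -A := by
        rw [hA, ← Finset.sum_neg_distrib]
        exact Finset.sum_congr rfl fun u _ => hstep u
      have hA0 : A = 0 := by
        rw [h1] at h2
        linarith
      rw [hA0, zero_mul, abs_zero]
      positivity
    · -- main estimate
      have hm : hammingNorm a ≤ n := by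
        simpa using hammingNorm_le_card_fintype (x := a)
      have hPle : |P| ≤ 15 / 16 * (n : ℝ) := by
        have hPeq : P = ((univ.filter fun i => a i = 0).card : ℝ)
            - ((univ.filter fun i => ¬(a i = 0)).card : ℝ) := by
          rw [hP]
          have hite : ∀ i : Fin n, (-1 : ℝ) ^ (a i).val = if a i = 0 then 1 else -1 := by
            intro i
            rcases zmod2_cases (a i) with h | h <;> rw [h] <;>
              norm_num [show ((0 : ZMod 2)).val = 0 by decide,
                show ((1 : ZMod 2)).val = 1 by decide]
          rw [Finset.sum_congr rfl fun i _ => hite i, Finset.sum_ite, Finset.sum_const,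
            Finset.sum_const]
          push_cast
          ring
        have hcount : (univ.filter fun i => ¬(a i = 0)).card = hammingNorm a := rfl
        have hsplit : (univ.filter fun i => a i = 0).card
            + (univ.filter fun i => ¬(a i = 0)).card = n := by
          rw [Finset.card_filter_add_card_filter_not, card_univ, Fintype.card_fin]
        have hg1 : (n : ℝ) ≤ 32 * (hammingNorm a : ℝ) := by exact_mod_cast hgood.1
        have hg2 : (n : ℝ) ≤ 32 * ((n : ℝ) - (hammingNorm a : ℝ)) := by
          have := hgood.2
          have hcast : ((n - hammingNorm a : ℕ) : ℝ) = (n : ℝ) - (hammingNorm a : ℝ) :=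
            Nat.cast_sub hm
          calc (n : ℝ) ≤ (32 * (n - hammingNorm a : ℕ) : ℕ) := by exact_mod_cast this
            _ = 32 * ((n : ℝ) - (hammingNorm a : ℝ)) := by
                push_cast [hcast]
                ring
        have hc0 : ((univ.filter fun i => a i = 0).card : ℝ)
            = (n : ℝ) - (hammingNorm a : ℝ) := by
          rw [← hcount]
          have : ((univ.filter fun i => a i = 0).card : ℝ)
              + ((univ.filter fun i => ¬(a i = 0)).card : ℝ) = (n : ℝ) := by
            exact_mod_cast hsplit
          linarith
        rw [hPeq, hcount, hc0]
        rw [abs_le]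
        constructor <;> linarith
      have hAle : |A| ≤ (Fintype.card L : ℝ) := by
        rw [hA]
        calc |∑ u : L, (-1 : ℝ) ^ (∑ i, a i * (u : Fin n → ZMod 2) i).val|
            ≤ ∑ u : L, |(-1 : ℝ) ^ (∑ i, a i * (u : Fin n → ZMod 2) i).val| :=
              Finset.abs_sum_le_sum_abs _ _
          _ = ∑ _u : L, (1 : ℝ) := by
              refine Finset.sum_congr rfl fun u _ => ?_
              rw [abs_pow, abs_neg, abs_one, one_pow]
          _ = (Fintype.card L : ℝ) := by
              rw [Finset.sum_const, Finset.card_univ, nsmul_eq_mul, mul_one]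
      have hD := pow_bias_le c hc n (by omega) hlog
      have hcard0 : (0 : ℝ) ≤ (Fintype.card L : ℝ) := Nat.cast_nonneg _
      have hPw : |P| ^ w ≤ (15 / 16 * (n : ℝ)) ^ w := pow_le_pow_left₀ (abs_nonneg _) hPle w
      rw [abs_mul, abs_pow, le_div_iff₀ hnc]
      calc |A| * |P| ^ w * (n : ℝ) ^ (c : ℝ)
          ≤ (Fintype.card L : ℝ) * (15 / 16 * (n : ℝ)) ^ w * (n : ℝ) ^ (c : ℝ) := by
            apply mul_le_mul_of_nonneg_right _ hnc.le
            exact mul_le_mul hAle hPw (by positivity) hcard0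
        _ = (Fintype.card L : ℝ) * (n : ℝ) ^ w * ((15 / 16 : ℝ) ^ w * (n : ℝ) ^ (c : ℝ)) := by
            rw [mul_pow]; ring
        _ ≤ (Fintype.card L : ℝ) * (n : ℝ) ^ w * 1 := by
            apply mul_le_mul_of_nonneg_left hD (by positivity)
        _ = ((Fintype.card L * n ^ w : ℕ) : ℝ) := by
            rw [mul_one]; push_cast; ring
  · -- distance
    intro s hs
    obtain ⟨p, hp, rfl⟩ := Multiset.mem_map.1 hs
    refine ⟨(p.1 : Fin n → ZMod 2), p.1.2, ?_⟩
    have hdist : hammingDist (φ p) (p.1 : Fin n → ZMod 2)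
        = hammingNorm (∑ j, Pi.single (M := fun _ : Fin n => ZMod 2) (p.2 j) 1) := by
      rw [hammingDist_eq_hammingNorm, hφ]
      dsimp only
      congr 1; funext i; exact (by decide : ∀ a b : ZMod 2, -(a + b) + a = b) _ _
    have hnormle : ∀ Q : Finset (Fin w),
        hammingNorm (∑ j ∈ Q, Pi.single (M := fun _ : Fin n => ZMod 2) (p.2 j) 1)
          ≤ Q.card := by
      intro Q
      induction Q using Finset.cons_induction with
      | empty => simp
      | cons jj Q hjj ih =>
        rw [Finset.sum_cons, Finset.card_cons]
        calc hammingNorm (Pi.single (M := fun _ : Fin n => ZMod 2) (p.2 jj) 1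
              + ∑ j ∈ Q, Pi.single (M := fun _ : Fin n => ZMod 2) (p.2 j) 1)
            ≤ hammingNorm (Pi.single (M := fun _ : Fin n => ZMod 2) (p.2 jj) 1)
              + hammingNorm (∑ j ∈ Q, Pi.single (M := fun _ : Fin n => ZMod 2) (p.2 j) 1) :=
              hammingNorm_add_le _ _
          _ ≤ 1 + Q.card := add_le_add (hammingNorm_single_le _) ih
          _ = Q.card + 1 := by ring
    have hwnn : 0 ≤ 20 * c * Real.logb 2 n := by
      have : (0 : ℝ) ≤ Real.logb 2 n :=
        Real.logb_nonneg (by norm_num) (by exact_mod_cast Nat.one_le_iff_ne_zero.2 (by omega))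
      positivity
    have hle : hammingDist (φ p) (p.1 : Fin n → ZMod 2) ≤ w := by
      rw [hdist]
      simpa using hnormle univ
    calc (hammingDist (φ p) (p.1 : Fin n → ZMod 2) : ℝ) ≤ (w : ℝ) := by exact_mod_cast hle
      _ ≤ 20 * c * Real.logb 2 n := Nat.floor_le hwnn
end
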